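/- arXiv:1109.2359 — 7 statements merged into one kernel-verified Lean document; each statement's English description precedes it below -/
import Mathlib

section
/- Let χ be a weight vector with l = lcm(χ_0, …, χ_n), and let X = {(y, x) ∈ S^{2n+1} × P(χ) : [y]_1 = e(1/χ)(x) in ℂP^n}, the pullback of the quotient map S^{2n+1} → ℂP^n along e(1/χ), with the subspace topology from the product S^{2n+1} × P(χ). Then the map h : L(l;χ) → X given by h([w]) = (v/‖v‖, [w]_χ), where v = (w_0^{l/χ_0}, …, w_n^{l/χ_n}), is well defined and a homeomorphism. (Thus the total space of the circle bundle classified by e(1/χ) is the weighted lens space L(l;χ).) -/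
noncomputable section

/-- The unit sphere in `ℂ^m` (the sphere `S^{2m-1}`). -/
abbrev Sph (m : ℕ) : Type := {z : Fin m → ℂ // ∑ i, ‖z i‖ ^ 2 = 1}

/-- The relation on the sphere whose quotient is the weighted projective space `P(χ)`:
`z ∼ w` iff `w = t ·_χ z` for some unimodular `t`. -/
def wRel (m : ℕ) (χ : Fin m → ℕ) (z w : Sph m) : Prop :=
  ∃ t : ℂ, ‖t‖ = 1 ∧ ∀ i, (w : Fin m → ℂ) i = t ^ χ i * (z : Fin m → ℂ) i

/-- The weighted projective space `P(χ)`, with the quotient topology. -/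
abbrev WP (m : ℕ) (χ : Fin m → ℕ) : Type := Quot (wRel m χ)

/-- The class `[z]_χ` of a point of the sphere in `P(χ)`. -/
def wpMk (m : ℕ) (χ : Fin m → ℕ) (z : Sph m) : WP m χ := Quot.mk _ z

/-- `s(χ,ω)`: the least positive integer `s` with `ω i ∣ s * χ i` for all `i`. -/
def sVal (m : ℕ) (χ ω : Fin m → ℕ) : ℕ := sInf {s : ℕ | 0 < s ∧ ∀ i, ω i ∣ s * χ i}

/-- The exponents `d i = s(χ,ω)·χ i/ω i` of the map `e(χ/ω)`. -/
def dExp (m : ℕ) (χ ω : Fin m → ℕ) (i : Fin m) : ℕ := sVal m χ ω * χ i / ω i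

/-- `IsNorm m χ v w` says that `w` is the normalisation `N_χ(v)`, i.e. `w` lies on the
sphere and has the form `(λ^{χ_0} v_0, …)` for some real `λ > 0`. -/
def IsNorm (m : ℕ) (χ : Fin m → ℕ) (v : Fin m → ℂ) (w : Sph m) : Prop :=
  ∃ l : ℝ, 0 < l ∧ ∀ i, (w : Fin m → ℂ) i = (l : ℂ) ^ χ i * v i

/-- Coordinatewise powers of a point of the sphere. -/
def powVec (m : ℕ) (d : Fin m → ℕ) (z : Sph m) : Fin m → ℂ :=
  fun i => (z : Fin m → ℂ) i ^ d i

/-- `IsEMap m χ ω e` says that `e` is the canonical map `e(χ/ω) : P(ω) → P(χ)`: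
it is continuous and sends `[z]_ω` to `[N_χ(z_0^{d_0}, …, z_n^{d_n})]_χ`. -/
def IsEMap (m : ℕ) (χ ω : Fin m → ℕ) (e : WP m ω → WP m χ) : Prop :=
  Continuous e ∧ ∀ z w : Sph m,
    IsNorm m χ (powVec m (dExp m χ ω) z) w → e (wpMk m ω z) = wpMk m χ w

/-- The relation on the sphere whose quotient is the weighted lens space `L(k;χ)`:
`z ∼ w` iff `w = ζ ·_χ z` for some `k`-th root of unity `ζ`. -/
def lensRel (m k : ℕ) (χ : Fin m → ℕ) (z w : Sph m) : Prop :=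
  ∃ ζ : ℂ, ζ ^ k = 1 ∧ ∀ i, (w : Fin m → ℂ) i = ζ ^ χ i * (z : Fin m → ℂ) i

/-- The weighted lens space `L(k;χ)`, with the quotient topology. -/
abbrev Lens (m k : ℕ) (χ : Fin m → ℕ) : Type := Quot (lensRel m k χ)


namespace St13
open Topology

variable {m : ℕ}

/-! ### basic facts -/

lemma sph_exists_ne (z : Sph m) : ∃ i, (z : Fin m → ℂ) i ≠ 0 := by
  by_contra h
  push_neg at h
  have h2 := z.2
  simp [h] at h2

lemma lcm_pos (χ : Fin m → ℕ) (hχ : ∀ i, 1 ≤ χ i) : 0 < Finset.univ.lcm χ := by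
  rcases Nat.eq_zero_or_pos (Finset.univ.lcm χ) with h | h
  · rw [Finset.lcm_eq_zero_iff] at h
    obtain ⟨i, -, hi⟩ := h
    exact absurd hi.symm (by have := hχ i; omega)
  · exact h

lemma chi_mul_d (χ : Fin m → ℕ) (i : Fin m) :
    χ i * (Finset.univ.lcm χ / χ i) = Finset.univ.lcm χ :=
  Nat.mul_div_cancel' (Finset.dvd_lcm (Finset.mem_univ i))

lemma abs_eq_one_of_pow {a : ℝ} (ha : 0 ≤ a) {l : ℕ} (hl : l ≠ 0) (h : a ^ l = 1) :
    a = 1 := by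
  rcases lt_trichotomy a 1 with h1 | h1 | h1
  · have := pow_lt_one₀ ha h1 hl; linarith
  · exact h1
  · have := one_lt_pow₀ h1 hl; linarith

/-! ### norms -/

def nrm (v : Fin m → ℂ) : ℝ := Real.sqrt (∑ j, ‖v j‖ ^ 2)

lemma nrm_pos {v : Fin m → ℂ} (hv : ∃ i, v i ≠ 0) : 0 < nrm v := by
  obtain ⟨i, hi⟩ := hv
  apply Real.sqrt_pos.mpr
  have h1 : 0 < ‖v i‖ ^ 2 := pow_pos (norm_pos_iff.mpr hi) 2
  exact lt_of_lt_of_le h1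
    (Finset.single_le_sum (f := fun j => ‖v j‖ ^ 2)
      (fun j _ => sq_nonneg _) (Finset.mem_univ i))

lemma nrm_sq (v : Fin m → ℂ) : nrm v ^ 2 = ∑ j, ‖v j‖ ^ 2 :=
  Real.sq_sqrt (Finset.sum_nonneg fun j _ => sq_nonneg _)

lemma nv_mem (v : Fin m → ℂ) (hv : ∃ i, v i ≠ 0) :
    ∑ i, ‖v i / ((nrm v : ℝ) : ℂ)‖ ^ 2 = 1 := by
  have h0 : 0 < nrm v := nrm_pos hv
  have h1 : ∀ i, ‖v i / ((nrm v : ℝ) : ℂ)‖ ^ 2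
      = ‖v i‖ ^ 2 / nrm v ^ 2 := by
    intro i
    rw [norm_div, div_pow, Complex.norm_of_nonneg h0.le]
  rw [Finset.sum_congr rfl fun i _ => h1 i, ← Finset.sum_div, ← nrm_sq v]
  exact div_self (by positivity)

lemma nrm_smul (t : ℂ) (ht : ‖t‖ = 1) (v : Fin m → ℂ) :
    nrm (fun i => t * v i) = nrm v := by
  simp [nrm, norm_mul, ht]

/-! ### the relation and the action -/

lemma wRel_equiv (χ : Fin m → ℕ) : Equivalence (wRel m χ) := by
  constructor
  · intro z
    exact ⟨1, by simp, fun i => by simp⟩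
  · rintro z w ⟨t, ht, h⟩
    have ht0 : t ≠ 0 := by
      intro h0; rw [h0] at ht; simp at ht
    refine ⟨t⁻¹, by rw [norm_inv, ht]; norm_num, fun i => ?_⟩
    rw [h i, inv_pow, inv_mul_cancel_left₀ (pow_ne_zero _ ht0)]
  · rintro x y z ⟨t, ht, h⟩ ⟨s, hs, h'⟩
    refine ⟨s * t, by rw [norm_mul, ht, hs, mul_one], fun i => ?_⟩
    rw [h' i, h i, mul_pow]; ring

lemma wp_mk_eq_iff (χ : Fin m → ℕ) (z w : Sph m) :
    Quot.mk (wRel m χ) z = Quot.mk (wRel m χ) w ↔ wRel m χ z w := by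
  rw [Quot.eq]
  exact (wRel_equiv χ).eqvGen_iff

def act (χ : Fin m → ℕ) (t : ℂ) (ht : ‖t‖ = 1) (z : Sph m) : Sph m :=
  ⟨fun i => t ^ χ i * (z : Fin m → ℂ) i, by
    have h2 := z.2
    calc ∑ i, ‖t ^ χ i * (z : Fin m → ℂ) i‖ ^ 2
        = ∑ i, ‖(z : Fin m → ℂ) i‖ ^ 2 := by
          refine Finset.sum_congr rfl fun i _ => ?_
          rw [norm_mul, norm_pow, ht, one_pow, one_mul]
      _ = 1 := h2⟩

lemma continuous_act (χ : Fin m → ℕ) (t : ℂ) (ht : ‖t‖ = 1) :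
    Continuous (act χ t ht) := by
  refine Continuous.subtype_mk (continuous_pi fun i => ?_) _
  exact continuous_const.mul ((continuous_apply i).comp continuous_subtype_val)

lemma act_act (χ : Fin m → ℕ) (t : ℂ) (ht : ‖t‖ = 1) (ht0 : t ≠ 0) (z : Sph m) :
    act χ t⁻¹ (by rw [norm_inv, ht]; norm_num) (act χ t ht z) = z := by
  apply Subtype.ext
  funext i
  show t⁻¹ ^ χ i * (t ^ χ i * (z : Fin m → ℂ) i) = _
  rw [inv_pow, inv_mul_cancel_left₀ (pow_ne_zero _ ht0)]

lemma isOpenMap_wp_mk (χ : Fin m → ℕ) : IsOpenMap (Quot.mk (wRel m χ)) := by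
  intro U hU
  rw [← isQuotientMap_quot_mk.isOpen_preimage]
  have hset : Quot.mk (wRel m χ) ⁻¹' (Quot.mk (wRel m χ) '' U)
      = ⋃ t : {t : ℂ // ‖t‖ = 1}, act χ t.1 t.2 '' U := by
    ext z
    simp only [Set.mem_preimage, Set.mem_image, Set.mem_iUnion]
    constructor
    · rintro ⟨u, hu, he⟩
      obtain ⟨t, ht, h⟩ := (wp_mk_eq_iff χ u z).1 he
      exact ⟨⟨t, ht⟩, u, hu, Subtype.ext (funext fun i => (h i).symm)⟩
    · rintro ⟨⟨t, ht⟩, u, hu, rfl⟩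
      exact ⟨u, hu, Quot.sound ⟨t, ht, fun i => rfl⟩⟩
  rw [hset]
  refine isOpen_iUnion fun t => ?_
  have ht0 : t.1 ≠ 0 := by
    intro h0; have := t.2; rw [h0] at this; simp at this
  have : act χ t.1 t.2 '' U
      = act χ t.1⁻¹ (by rw [norm_inv, t.2]; norm_num) ⁻¹' U := by
    ext z
    constructor
    · rintro ⟨u, hu, rfl⟩
      simpa [act_act χ t.1 t.2 ht0 u] using hu
    · intro hz
      refine ⟨_, hz, ?_⟩
      apply Subtype.ext
      funext i
      show t.1 ^ χ i * (t.1⁻¹ ^ χ i * (z : Fin m → ℂ) i) = _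
      rw [inv_pow, mul_inv_cancel_left₀ (pow_ne_zero _ ht0)]
  rw [this]
  exact hU.preimage (continuous_act χ _ _)

instance : CompactSpace {t : ℂ // ‖t‖ = 1} := by
  have h1 : {t : ℂ | ‖t‖ = 1} = Metric.sphere (0 : ℂ) 1 := by
    ext t
    simp
  have h2 : IsCompact {t : ℂ | ‖t‖ = 1} := h1 ▸ isCompact_sphere 0 1
  exact isCompact_iff_compactSpace.mp h2

instance : CompactSpace (Sph m) := by
  refine isCompact_iff_compactSpace.mp ?_
  have hcl : IsClosed {z : Fin m → ℂ | ∑ i, ‖z i‖ ^ 2 = 1} := by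
    refine isClosed_eq ?_ continuous_const
    exact continuous_finset_sum _ fun i _ =>
      (continuous_norm.comp (continuous_apply i)).pow 2
  refine Metric.isCompact_of_isClosed_isBounded hcl ?_
  refine (Metric.isBounded_closedBall (x := (0 : Fin m → ℂ)) (r := 1)).subset ?_
  intro z hz
  rw [Metric.mem_closedBall, dist_zero_right]
  refine (pi_norm_le_iff_of_nonneg zero_le_one).2 fun i => ?_
  have h1 : ‖z i‖ ^ 2 ≤ 1 := by
    rw [← hz]
    exact Finset.single_le_sum (f := fun j => ‖z j‖ ^ 2)
      (fun j _ => sq_nonneg _) (Finset.mem_univ i)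
  nlinarith [norm_nonneg (z i)]


lemma isClosed_wRel (χ : Fin m → ℕ) :
    IsClosed {p : Sph m × Sph m | wRel m χ p.1 p.2} := by
  have hg : Continuous fun p : {t : ℂ // ‖t‖ = 1} × Sph m =>
      ((p.2, act χ p.1.1 p.1.2 p.2) : Sph m × Sph m) := by
    refine Continuous.prodMk continuous_snd ?_
    refine Continuous.subtype_mk (continuous_pi fun i => ?_) _
    exact (((continuous_subtype_val.comp continuous_fst).pow _).mul
      ((continuous_apply i).comp (continuous_subtype_val.comp continuous_snd)))
  have hrange : {p : Sph m × Sph m | wRel m χ p.1 p.2}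
      = Set.range fun p : {t : ℂ // ‖t‖ = 1} × Sph m =>
        ((p.2, act χ p.1.1 p.1.2 p.2) : Sph m × Sph m) := by
    ext ⟨z, w⟩
    simp only [Set.mem_setOf_eq, Set.mem_range, Prod.mk.injEq, Prod.exists]
    constructor
    · rintro ⟨t, ht, h⟩
      exact ⟨⟨t, ht⟩, z, rfl, Subtype.ext (funext fun i => (h i).symm)⟩
    · rintro ⟨⟨t, ht⟩, u, rfl, rfl⟩
      exact ⟨t, ht, fun i => rfl⟩
  rw [hrange]
  exact (isCompact_range hg).isClosed

instance (χ : Fin m → ℕ) : T2Space (WP m χ) := by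
  rw [t2_iff_isClosed_diagonal]
  have hoq : IsOpenQuotientMap (Quot.mk (wRel m χ)) :=
    ⟨Quot.exists_rep, continuous_quot_mk, isOpenMap_wp_mk χ⟩
  have h2 : IsQuotientMap (Prod.map (Quot.mk (wRel m χ)) (Quot.mk (wRel m χ))) :=
    (hoq.prodMap hoq).isQuotientMap
  rw [← h2.isClosed_preimage]
  have : Prod.map (Quot.mk (wRel m χ)) (Quot.mk (wRel m χ)) ⁻¹' Set.diagonal (WP m χ)
      = {p : Sph m × Sph m | wRel m χ p.1 p.2} := by
    ext ⟨z, w⟩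
    simp only [Set.mem_preimage, Set.mem_setOf_eq, Prod.map_apply, Set.mem_diagonal_iff]
    exact wp_mk_eq_iff χ z w
  rw [this]
  exact isClosed_wRel χ



/-! ### the sVal computation -/

lemma sVal_one (χ : Fin m → ℕ) (hχ : ∀ i, 1 ≤ χ i) :
    sVal m (fun _ => 1) χ = Finset.univ.lcm χ := by
  unfold sVal
  have hset : {s : ℕ | 0 < s ∧ ∀ i, χ i ∣ s * (fun _ : Fin m => 1) i}
      = {s : ℕ | 0 < s ∧ ∀ i, χ i ∣ s} := by
    ext s
    simp
  rw [hset]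
  have hl : Finset.univ.lcm χ ∈ {s : ℕ | 0 < s ∧ ∀ i, χ i ∣ s} :=
    ⟨lcm_pos χ hχ, fun i => Finset.dvd_lcm (Finset.mem_univ i)⟩
  have h1 := Nat.sInf_mem (⟨_, hl⟩ : Set.Nonempty {s : ℕ | 0 < s ∧ ∀ i, χ i ∣ s})
  refine le_antisymm (Nat.sInf_le hl) ?_
  exact Nat.le_of_dvd h1.1 (Finset.lcm_dvd fun i _ => h1.2 i)

lemma dExp_one (χ : Fin m → ℕ) (hχ : ∀ i, 1 ≤ χ i) (i : Fin m) :
    dExp m (fun _ => 1) χ i = Finset.univ.lcm χ / χ i := by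
  rw [dExp, sVal_one χ hχ, mul_one]

/-! ### the forward map -/

def vfun (χ : Fin m → ℕ) (w : Fin m → ℂ) : Fin m → ℂ :=
  fun i => w i ^ (Finset.univ.lcm χ / χ i)

lemma vfun_exists_ne (χ : Fin m → ℕ) (z : Sph m) : ∃ i, vfun χ (z : Fin m → ℂ) i ≠ 0 := by
  obtain ⟨i, hi⟩ := sph_exists_ne z
  exact ⟨i, pow_ne_zero _ hi⟩

def fmap (χ : Fin m → ℕ) (z : Sph m) : Sph m :=
  ⟨fun i => vfun χ (z : Fin m → ℂ) i / ((nrm (vfun χ (z : Fin m → ℂ)) : ℝ) : ℂ),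
    nv_mem _ (vfun_exists_ne χ z)⟩

lemma isNorm_fmap (χ : Fin m → ℕ) (hχ : ∀ i, 1 ≤ χ i) (z : Sph m) :
    IsNorm m (fun _ => 1) (powVec m (dExp m (fun _ => 1) χ) z) (fmap χ z) := by
  refine ⟨(nrm (vfun χ (z : Fin m → ℂ)))⁻¹,
    inv_pos.mpr (nrm_pos (vfun_exists_ne χ z)), fun i => ?_⟩
  show vfun χ (z : Fin m → ℂ) i / _ = _
  rw [powVec, dExp_one χ hχ i, pow_one, Complex.ofReal_inv]
  rw [div_eq_inv_mul]
  rfl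

lemma fmap_cond (χ : Fin m → ℕ) (hχ : ∀ i, 1 ≤ χ i)
    (ep : WP m χ → WP m (fun _ => 1)) (hep : IsEMap m (fun _ => 1) χ ep) (z : Sph m) :
    wpMk m (fun _ => 1) (fmap χ z) = ep (wpMk m χ z) :=
  (hep.2 z (fmap χ z) (isNorm_fmap χ hχ z)).symm

lemma vfun_mul (χ : Fin m → ℕ) (t : ℂ) (z : Fin m → ℂ) :
    vfun χ (fun i => t ^ χ i * z i) = fun i => t ^ Finset.univ.lcm χ * vfun χ z i := by
  funext i
  show (t ^ χ i * z i) ^ (Finset.univ.lcm χ / χ i) = _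
  rw [mul_pow, ← pow_mul, chi_mul_d χ i]
  rfl

lemma fmap_lens (χ : Fin m → ℕ) (z w : Sph m)
    (h : lensRel m (Finset.univ.lcm χ) χ z w) : fmap χ w = fmap χ z := by
  obtain ⟨ζ, hζ, h⟩ := h
  have hv : vfun χ (w : Fin m → ℂ) = vfun χ (z : Fin m → ℂ) := by
    have h1 : (w : Fin m → ℂ) = fun i => ζ ^ χ i * (z : Fin m → ℂ) i := funext h
    rw [h1, vfun_mul, hζ]
    simp
  apply Subtype.ext
  show (fun i => vfun χ (w : Fin m → ℂ) i / _) = _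
  rw [hv]
  rfl

/-! ### the bundle map -/

def f0 (χ : Fin m → ℕ) (hχ : ∀ i, 1 ≤ χ i) (ep : WP m χ → WP m (fun _ => 1))
    (hep : IsEMap m (fun _ => 1) χ ep) (z : Sph m) :
    {p : Sph m × WP m χ // wpMk m (fun _ => 1) p.1 = ep p.2} :=
  ⟨(fmap χ z, wpMk m χ z), fmap_cond χ hχ ep hep z⟩

def F0 (χ : Fin m → ℕ) (hχ : ∀ i, 1 ≤ χ i) (ep : WP m χ → WP m (fun _ => 1))
    (hep : IsEMap m (fun _ => 1) χ ep) :
    Lens m (Finset.univ.lcm χ) χ → {p : Sph m × WP m χ // wpMk m (fun _ => 1) p.1 = ep p.2} :=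
  Quot.lift (f0 χ hχ ep hep) (by
    intro z w h
    apply Subtype.ext
    refine Prod.ext ?_ ?_
    · exact (fmap_lens χ z w h).symm
    · obtain ⟨ζ, hζ, hc⟩ := h
      have hζa : ‖ζ‖ = 1 :=
        abs_eq_one_of_pow (norm_nonneg ζ) (lcm_pos χ hχ).ne'
          (by rw [← norm_pow, hζ, norm_one])
      exact Quot.sound ⟨ζ, hζa, hc⟩)

/-! ### continuity -/

lemma continuous_fmap (χ : Fin m → ℕ) : Continuous (fmap χ : Sph m → Sph m) := by
  apply Continuous.subtype_mk
  refine continuous_pi fun i => Continuous.div ?_ ?_ ?_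
  · exact ((continuous_apply i).comp continuous_subtype_val).pow _
  · refine Complex.continuous_ofReal.comp (Real.continuous_sqrt.comp ?_)
    exact continuous_finset_sum _ fun j _ =>
      (continuous_norm.comp
        (((continuous_apply j).comp continuous_subtype_val).pow _)).pow 2
  · intro z
    exact Complex.ofReal_ne_zero.mpr (nrm_pos (vfun_exists_ne χ z)).ne'

lemma continuous_F0 (χ : Fin m → ℕ) (hχ : ∀ i, 1 ≤ χ i) (ep : WP m χ → WP m (fun _ => 1))
    (hep : IsEMap m (fun _ => 1) χ ep) : Continuous (F0 χ hχ ep hep) := by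
  apply continuous_quot_lift
  apply Continuous.subtype_mk
  exact (continuous_fmap χ).prodMk continuous_quot_mk

/-! ### bijectivity -/

lemma F0_inj (χ : Fin m → ℕ) (hχ : ∀ i, 1 ≤ χ i) (ep : WP m χ → WP m (fun _ => 1))
    (hep : IsEMap m (fun _ => 1) χ ep) : Function.Injective (F0 χ hχ ep hep) := by
  intro a b
  induction a using Quot.ind with | _ z => ?_
  induction b using Quot.ind with | _ w => ?_
  intro h
  have h1 : fmap χ z = fmap χ w := congrArg (fun p => p.1.1) h
  have h2 : Quot.mk (wRel m χ) z = Quot.mk (wRel m χ) w := congrArg (fun p => p.1.2) h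
  obtain ⟨t, ht, hw⟩ := (wp_mk_eq_iff χ z w).1 h2
  have hvw : vfun χ (w : Fin m → ℂ)
      = fun i => t ^ Finset.univ.lcm χ * vfun χ (z : Fin m → ℂ) i := by
    have hwz : (w : Fin m → ℂ) = fun i => t ^ χ i * (z : Fin m → ℂ) i := funext hw
    rw [hwz, vfun_mul]
  have htl : ‖t ^ Finset.univ.lcm χ‖ = 1 := by rw [norm_pow, ht, one_pow]
  have hnrm : nrm (vfun χ (w : Fin m → ℂ)) = nrm (vfun χ (z : Fin m → ℂ)) := by
    rw [hvw]
    exact nrm_smul _ htl _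
  obtain ⟨i0, hi0⟩ := vfun_exists_ne χ z
  have hc : ((nrm (vfun χ (z : Fin m → ℂ)) : ℝ) : ℂ) ≠ 0 :=
    Complex.ofReal_ne_zero.mpr (nrm_pos ⟨i0, hi0⟩).ne'
  have hcoord : vfun χ (z : Fin m → ℂ) i0 / ((nrm (vfun χ (z : Fin m → ℂ)) : ℝ) : ℂ)
      = t ^ Finset.univ.lcm χ * vfun χ (z : Fin m → ℂ) i0
          / ((nrm (vfun χ (z : Fin m → ℂ)) : ℝ) : ℂ) := by
    have e0 : ((fmap χ z : Sph m) : Fin m → ℂ) i0 = ((fmap χ w : Sph m) : Fin m → ℂ) i0 := by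
      rw [h1]
    have e1 : ((fmap χ w : Sph m) : Fin m → ℂ) i0
        = t ^ Finset.univ.lcm χ * vfun χ (z : Fin m → ℂ) i0
            / ((nrm (vfun χ (z : Fin m → ℂ)) : ℝ) : ℂ) := by
      show vfun χ (w : Fin m → ℂ) i0 / ((nrm (vfun χ (w : Fin m → ℂ)) : ℝ) : ℂ) = _
      rw [hnrm, hvw]
    rw [← e1, ← e0]
    rfl
  have hnum : vfun χ (z : Fin m → ℂ) i0
      = t ^ Finset.univ.lcm χ * vfun χ (z : Fin m → ℂ) i0 := by
    have := congrArg (fun a => a * ((nrm (vfun χ (z : Fin m → ℂ)) : ℝ) : ℂ)) hcoord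
    simpa [div_mul_cancel₀ _ hc] using this
  have hT : t ^ Finset.univ.lcm χ = 1 := by
    have : t ^ Finset.univ.lcm χ * vfun χ (z : Fin m → ℂ) i0
        = 1 * vfun χ (z : Fin m → ℂ) i0 := by rw [one_mul, ← hnum]
    exact mul_right_cancel₀ hi0 this
  exact Quot.sound ⟨t, hT, hw⟩

lemma F0_surj (χ : Fin m → ℕ) (hχ : ∀ i, 1 ≤ χ i) (ep : WP m χ → WP m (fun _ => 1))
    (hep : IsEMap m (fun _ => 1) χ ep) : Function.Surjective (F0 χ hχ ep hep) := by
  rintro ⟨⟨y, x⟩, hx⟩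
  obtain ⟨z, rfl⟩ := Quot.exists_rep x
  have h1 : Quot.mk (wRel m (fun _ => 1)) (fmap χ z) = Quot.mk (wRel m (fun _ => 1)) y := by
    have h0 := fmap_cond χ hχ ep hep z
    have hx' : wpMk m (fun _ => 1) y = ep (wpMk m χ z) := hx
    rw [← hx'] at h0
    exact h0
  obtain ⟨t, ht, hty⟩ := (wp_mk_eq_iff (fun _ => 1) (fmap χ z) y).1 h1
  obtain ⟨u, hu⟩ := IsAlgClosed.exists_pow_nat_eq t (lcm_pos χ hχ)
  have hu1 : ‖u‖ = 1 :=
    abs_eq_one_of_pow (norm_nonneg u) (lcm_pos χ hχ).ne'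
      (by rw [← norm_pow, hu, ht])
  refine ⟨Quot.mk _ (act χ u hu1 z), ?_⟩
  apply Subtype.ext
  refine Prod.ext ?_ ?_
  · -- fmap χ (act χ u hu1 z) = y
    apply Subtype.ext
    funext i
    show vfun χ ((act χ u hu1 z : Sph m) : Fin m → ℂ) i
        / ((nrm (vfun χ ((act χ u hu1 z : Sph m) : Fin m → ℂ)) : ℝ) : ℂ) = (y : Fin m → ℂ) i
    have hva : vfun χ ((act χ u hu1 z : Sph m) : Fin m → ℂ)
        = fun i => t * vfun χ (z : Fin m → ℂ) i := by
      show vfun χ (fun i => u ^ χ i * (z : Fin m → ℂ) i) = _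
      rw [vfun_mul, hu]
    have hyi : (y : Fin m → ℂ) i = t * ((fmap χ z : Sph m) : Fin m → ℂ) i := by
      simpa using hty i
    rw [hva, nrm_smul t ht, hyi]
    show t * vfun χ (z : Fin m → ℂ) i / _
        = t * (vfun χ (z : Fin m → ℂ) i / ((nrm (vfun χ (z : Fin m → ℂ)) : ℝ) : ℂ))
    rw [mul_div_assoc]
  · exact (Quot.sound ⟨u, hu1, fun i => rfl⟩).symm

end St13

/-- Let `l = lcm(χ)` and let `X` be the pullback of the quotient map
`S^{2n+1} → ℂP^n` along `e(1/χ) : P(χ) → ℂP^n`. Then the map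
`h : L(l;χ) → X`, `[w] ↦ (v/‖v‖, [w]_χ)` with `v = (w_0^{l/χ_0}, …, w_n^{l/χ_n})`,
is well defined and a homeomorphism. -/
theorem statement13 (n : ℕ) (hn : 1 ≤ n) (χ : Fin (n + 1) → ℕ) (hχ : ∀ i, 1 ≤ χ i)
    (ep : WP (n + 1) χ → WP (n + 1) (fun _ => 1))
    (hep : IsEMap (n + 1) (fun _ => 1) χ ep) :
    ∃ F : Lens (n + 1) (Finset.univ.lcm χ) χ ≃ₜ
        {p : Sph (n + 1) × WP (n + 1) χ // wpMk (n + 1) (fun _ => 1) p.1 = ep p.2},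
      ∀ w : Sph (n + 1),
        (((F (Quot.mk (lensRel (n + 1) (Finset.univ.lcm χ) χ) w) :
            Sph (n + 1) × WP (n + 1) χ).1 : Fin (n + 1) → ℂ) =
          fun i => (w : Fin (n + 1) → ℂ) i ^ (Finset.univ.lcm χ / χ i) /
            ((Real.sqrt (∑ j, ‖(w : Fin (n + 1) → ℂ) j ^
              (Finset.univ.lcm χ / χ j)‖ ^ 2) : ℝ) : ℂ)) ∧
        ((F (Quot.mk (lensRel (n + 1) (Finset.univ.lcm χ) χ) w) :
            Sph (n + 1) × WP (n + 1) χ).2 = wpMk (n + 1) χ w) := by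
  have hbij : Function.Bijective (St13.F0 χ hχ ep hep) :=
    ⟨St13.F0_inj χ hχ ep hep, St13.F0_surj χ hχ ep hep⟩
  let E : Lens (n + 1) (Finset.univ.lcm χ) χ ≃
      {p : Sph (n + 1) × WP (n + 1) χ // wpMk (n + 1) (fun _ => 1) p.1 = ep p.2} :=
    Equiv.ofBijective _ hbij
  have hcont : Continuous (E : Lens (n + 1) (Finset.univ.lcm χ) χ →
      {p : Sph (n + 1) × WP (n + 1) χ // wpMk (n + 1) (fun _ => 1) p.1 = ep p.2}) :=
    St13.continuous_F0 χ hχ ep hep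
  exact ⟨hcont.homeoOfEquivCompactToT2, fun w => ⟨rfl, rfl⟩⟩
end
end

section
/- Let χ be a weight vector and l = lcm(χ_0, …, χ_n). The formula t·[z] = [t ·_χ z] defines a continuous action of the circle T on the weighted lens space L(l;χ). Moreover: (i) this action descends to a free action of the quotient group T/μ_l, i.e. if t·[z] = [z] in L(l;χ) for some z ∈ S^{2n+1} and t ∈ T, then t^l = 1; and (ii) the orbit space of this T-action on L(l;χ), with the quotient topology, is homeomorphic to P(χ) via the map sending the class of z in L(l;χ) to [z]_χ. -/
noncomputable section

namespace S14

lemma abs_one_of_pow {ζ : ℂ} {k : ℕ} (hk : k ≠ 0) (h : ζ ^ k = 1) : ‖ζ‖ = 1 := by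
  have h1 : ‖ζ‖ ^ k = 1 := by rw [← norm_pow, h, norm_one]
  rcases lt_trichotomy (‖ζ‖) 1 with hlt | heq | hgt
  · have := pow_lt_one₀ (norm_nonneg _) hlt hk; linarith
  · exact heq
  · have := one_lt_pow₀ hgt hk; linarith

variable (m : ℕ) (χ : Fin m → ℕ)

def actS (t : ℂ) (ht : ‖t‖ = 1) (z : Sph m) : Sph m :=
  ⟨fun i => t ^ χ i * (z : Fin m → ℂ) i, by
    have hz := z.2
    calc ∑ i, ‖t ^ χ i * (z : Fin m → ℂ) i‖ ^ 2
        = ∑ i, ‖(z : Fin m → ℂ) i‖ ^ 2 := by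
          refine Finset.sum_congr rfl fun i _ => ?_
          rw [norm_mul, norm_pow, ht, one_pow, one_mul]
      _ = 1 := hz⟩

lemma actS_actS (t s : ℂ) (ht : ‖t‖ = 1) (hs : ‖s‖ = 1)
    (hts : ‖t * s‖ = 1) (z : Sph m) :
    actS m χ (t * s) hts z = actS m χ t ht (actS m χ s hs z) := by
  refine Subtype.ext (funext fun i => ?_)
  show (t * s) ^ χ i * _ = t ^ χ i * (s ^ χ i * _)
  rw [mul_pow, mul_assoc]

lemma actS_one (h1 : ‖1‖ = 1) (z : Sph m) : actS m χ 1 h1 z = z := by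
  refine Subtype.ext (funext fun i => ?_)
  show 1 ^ χ i * _ = _
  rw [one_pow, one_mul]

lemma continuous_actS (t : ℂ) (ht : ‖t‖ = 1) : Continuous (actS m χ t ht) := by
  refine Continuous.subtype_mk (continuous_pi fun i => ?_) _
  exact continuous_const.mul ((continuous_apply i).comp continuous_subtype_val)

variable (l : ℕ)

lemma lensRel_equiv (hl : l ≠ 0) : Equivalence (lensRel m l χ) := by
  constructor
  · exact fun z => ⟨1, one_pow _, fun i => by rw [one_pow, one_mul]⟩
  · rintro z w ⟨ζ, hζ, hc⟩
    refine ⟨ζ ^ (l - 1), by rw [← pow_mul, mul_comm, pow_mul, hζ, one_pow], fun i => ?_⟩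
    rw [hc i, ← mul_assoc, ← pow_mul, ← pow_add, ← Nat.succ_mul, show (l-1).succ = l from Nat.succ_pred_eq_of_pos (Nat.pos_of_ne_zero hl), pow_mul, hζ, one_pow, one_mul]
  · rintro z w v ⟨ζ, hζ, hc⟩ ⟨η, hη, hc'⟩
    refine ⟨η * ζ, by rw [mul_pow, hζ, hη, one_mul], fun i => ?_⟩
    rw [hc' i, hc i, mul_pow, mul_assoc]


lemma actS_cancel (t s : ℂ) (ht : ‖t‖ = 1) (hs : ‖s‖ = 1)
    (hmul : t * s = 1) (z : Sph m) : actS m χ t ht (actS m χ s hs z) = z := by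
  refine Subtype.ext (funext fun i => ?_)
  show t ^ χ i * (s ^ χ i * _) = _
  rw [← mul_assoc, ← mul_pow, hmul, one_pow, one_mul]

lemma isOpenQuotientMap_mk (hl : l ≠ 0) :
    IsOpenQuotientMap (Quot.mk (lensRel m l χ)) := by
  refine ⟨fun q => Quot.exists_rep q, continuous_quot_mk, ?_⟩
  intro U hU
  rw [← (isQuotientMap_quot_mk).isOpen_preimage]
  have key : Quot.mk (lensRel m l χ) ⁻¹' (Quot.mk (lensRel m l χ) '' U) =
      ⋃ ζ : {c : ℂ // c ^ l = 1}, actS m χ ζ.1 (abs_one_of_pow hl ζ.2) '' U := by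
    ext z
    simp only [Set.mem_preimage, Set.mem_image, Set.mem_iUnion]
    constructor
    · rintro ⟨w, hwU, hw⟩
      obtain ⟨ζ, hζ, hc⟩ := ((lensRel_equiv m χ l hl).eqvGen_iff).mp (Quot.eq.mp hw)
      exact ⟨⟨ζ, hζ⟩, w, hwU, (Subtype.ext (funext fun i => (hc i).symm) : _)⟩
    · rintro ⟨ζ, w, hwU, rfl⟩
      exact ⟨w, hwU, Quot.sound ⟨ζ.1, ζ.2, fun i => rfl⟩⟩
  rw [key]
  refine isOpen_iUnion fun ζ => ?_
  have hζ' : (ζ.1 ^ (l - 1)) ^ l = 1 := by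
    rw [← pow_mul, mul_comm, pow_mul, ζ.2, one_pow]
  have habs' : ‖ζ.1 ^ (l - 1)‖ = 1 := abs_one_of_pow hl hζ'
  have hmul : ζ.1 ^ (l - 1) * ζ.1 = 1 := by
    rw [← pow_succ, show (l-1)+1 = l from Nat.succ_pred_eq_of_pos (Nat.pos_of_ne_zero hl), ζ.2]
  rw [Set.image_eq_preimage_of_inverse
    (fun z => actS_cancel m χ _ _ habs' _ hmul z)
    (fun z => actS_cancel m χ _ _ _ habs' (by rw [mul_comm]; exact hmul) z)]
  exact hU.preimage (continuous_actS m χ _ _)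

end S14

/-- With `l = lcm(χ)`, the formula `t·[z] = [t ·_χ z]` defines a continuous
action of the circle `T` on `L(l;χ)`; if `t·[z] = [z]` then `t^l = 1` (so the action descends
to a free action of `T/μ_l`); and the orbit space of this action is homeomorphic to `P(χ)`
via the map sending the class of `z` to `[z]_χ`. -/
theorem statement14 (n : ℕ) (hn : 1 ≤ n) (χ : Fin (n + 1) → ℕ) (hχ : ∀ i, 1 ≤ χ i) :
    ∃ a : {t : ℂ // ‖t‖ = 1} →
        Lens (n + 1) (Finset.univ.lcm χ) χ → Lens (n + 1) (Finset.univ.lcm χ) χ,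
      Continuous (fun p : {t : ℂ // ‖t‖ = 1} ×
          Lens (n + 1) (Finset.univ.lcm χ) χ => a p.1 p.2) ∧
      (∀ (t : {t : ℂ // ‖t‖ = 1}) (z w : Sph (n + 1)),
        (∀ i, (w : Fin (n + 1) → ℂ) i = (t : ℂ) ^ χ i * (z : Fin (n + 1) → ℂ) i) →
        a t (Quot.mk _ z) = Quot.mk _ w) ∧
      (∀ t : {t : ℂ // ‖t‖ = 1}, (t : ℂ) = 1 → ∀ x, a t x = x) ∧
      (∀ t t' tt' : {t : ℂ // ‖t‖ = 1}, (tt' : ℂ) = (t : ℂ) * (t' : ℂ) →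
        ∀ x, a tt' x = a t (a t' x)) ∧
      (∀ (t : {t : ℂ // ‖t‖ = 1}) (z : Sph (n + 1)),
        a t (Quot.mk _ z) = Quot.mk _ z → (t : ℂ) ^ Finset.univ.lcm χ = 1) ∧
      ∃ G : Quot (fun x y : Lens (n + 1) (Finset.univ.lcm χ) χ =>
          ∃ t : {t : ℂ // ‖t‖ = 1}, a t x = y) ≃ₜ WP (n + 1) χ,
        ∀ z : Sph (n + 1),
          G (Quot.mk _ (Quot.mk (lensRel (n + 1) (Finset.univ.lcm χ) χ) z)) =
            wpMk (n + 1) χ z := by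
  classical
  set l := Finset.univ.lcm χ with hldef
  have hl : l ≠ 0 := by
    intro h
    obtain ⟨i, -, hi⟩ := Finset.lcm_eq_zero_iff.mp h
    have := hχ i; omega
  let T := {t : ℂ // ‖t‖ = 1}
  let A : T → Lens (n + 1) l χ → Lens (n + 1) l χ := fun t =>
    Quot.map (S14.actS (n + 1) χ t.1 t.2) (by
      rintro z w ⟨ζ, hζ, hc⟩
      refine ⟨ζ, hζ, fun i => ?_⟩
      show t.1 ^ χ i * (w : Fin (n+1) → ℂ) i = ζ ^ χ i * (t.1 ^ χ i * (z : Fin (n+1) → ℂ) i)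
      rw [hc i]; ring)
  refine ⟨A, ?_, ?_, ?_, ?_, ?_, ?_⟩
  · have hq :=
      ((IsOpenQuotientMap.id : IsOpenQuotientMap (id : T → T)).prodMap (S14.isOpenQuotientMap_mk (n + 1) χ l hl)).isQuotientMap
    rw [hq.continuous_iff]
    show Continuous fun p : T × Sph (n + 1) =>
      Quot.mk (lensRel (n + 1) l χ) (S14.actS (n + 1) χ p.1.1 p.1.2 p.2)
    exact continuous_quot_mk.comp (Continuous.subtype_mk (continuous_pi fun i =>
      ((continuous_subtype_val.comp continuous_fst).pow _).mul
        ((continuous_apply i).comp (continuous_subtype_val.comp continuous_snd))) _)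
  · intro t z w h
    show Quot.mk (lensRel (n + 1) l χ) (S14.actS (n + 1) χ t.1 t.2 z) = Quot.mk _ w
    exact congrArg _ (Subtype.ext (funext fun i => (h i).symm))
  · intro t ht x
    induction x using Quot.ind
    rename_i z
    show Quot.mk (lensRel (n + 1) l χ) (S14.actS (n + 1) χ t.1 t.2 z) = Quot.mk _ z
    refine congrArg _ (Subtype.ext (funext fun i => ?_))
    show t.1 ^ χ i * (z : Fin (n+1) → ℂ) i = (z : Fin (n+1) → ℂ) i
    rw [ht, one_pow, one_mul]
  · intro t t' tt' htt x
    induction x using Quot.ind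
    rename_i z
    show Quot.mk (lensRel (n + 1) l χ) (S14.actS (n + 1) χ tt'.1 tt'.2 z)
      = Quot.mk _ (S14.actS (n + 1) χ t.1 t.2 (S14.actS (n + 1) χ t'.1 t'.2 z))
    refine congrArg _ (Subtype.ext (funext fun i => ?_))
    show tt'.1 ^ χ i * (z : Fin (n+1) → ℂ) i
      = t.1 ^ χ i * (t'.1 ^ χ i * (z : Fin (n+1) → ℂ) i)
    rw [htt, mul_pow, mul_assoc]
  · intro t z h
    have h' : Quot.mk (lensRel (n + 1) l χ) (S14.actS (n + 1) χ t.1 t.2 z)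
        = Quot.mk _ z := h
    obtain ⟨ζ, hζ, hc⟩ := ((S14.lensRel_equiv (n + 1) χ l hl).eqvGen_iff).mp (Quot.eq.mp h')
    obtain ⟨j, hj⟩ : ∃ j, (z : Fin (n + 1) → ℂ) j ≠ 0 := by
      by_contra hall
      push_neg at hall
      have h2 := z.2
      simp only [hall, norm_zero] at h2
      norm_num at h2
    have hcc : (z : Fin (n+1) → ℂ) j
        = ζ ^ χ j * (t.1 ^ χ j * (z : Fin (n+1) → ℂ) j) := hc j
    have h1 : (t.1 * ζ) ^ χ j = 1 := by
      refine mul_right_cancel₀ hj ?_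
      rw [one_mul, mul_pow]
      conv_rhs => rw [hcc]
      ring
    have hdvd : χ j ∣ l := Finset.dvd_lcm (Finset.mem_univ j)
    calc t.1 ^ l = t.1 ^ l * ζ ^ l := by rw [hζ, mul_one]
      _ = (t.1 * ζ) ^ l := (mul_pow _ _ _).symm
      _ = ((t.1 * ζ) ^ χ j) ^ (l / χ j) := by rw [← pow_mul, Nat.mul_div_cancel' hdvd]
      _ = 1 := by rw [h1, one_pow]
  · have gwd : ∀ z w : Sph (n + 1), lensRel (n + 1) l χ z w →
        wpMk (n + 1) χ z = wpMk (n + 1) χ w := by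
      rintro z w ⟨ζ, hζ, hc⟩
      exact Quot.sound ⟨ζ, S14.abs_one_of_pow hl hζ, hc⟩
    have Gwd : ∀ x y : Lens (n + 1) l χ, (∃ t : T, A t x = y) →
        Quot.lift (wpMk (n + 1) χ) gwd x = Quot.lift (wpMk (n + 1) χ) gwd y := by
      rintro x y ⟨t, rfl⟩
      induction x using Quot.ind
      rename_i z
      show wpMk (n + 1) χ z = wpMk (n + 1) χ (S14.actS (n + 1) χ t.1 t.2 z)
      exact Quot.sound ⟨t.1, t.2, fun i => rfl⟩
    have Fwd : ∀ z w : Sph (n + 1), wRel (n + 1) χ z w →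
        (Quot.mk (fun x y : Lens (n + 1) l χ => ∃ t : T, A t x = y)
          (Quot.mk (lensRel (n + 1) l χ) z)) = Quot.mk _ (Quot.mk _ w) := by
      rintro z w ⟨t, ht, hc⟩
      refine Quot.sound ⟨⟨t, ht⟩, ?_⟩
      show Quot.mk (lensRel (n + 1) l χ) (S14.actS (n + 1) χ t ht z) = Quot.mk _ w
      exact congrArg _ (Subtype.ext (funext fun i => (hc i).symm))
    refine ⟨⟨⟨Quot.lift (Quot.lift (wpMk (n + 1) χ) gwd) Gwd,
        Quot.lift (fun z => Quot.mk _ (Quot.mk _ z)) Fwd, ?_, ?_⟩,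
        continuous_quot_lift _ (continuous_quot_lift _ continuous_quot_mk),
        continuous_quot_lift _ (continuous_quot_mk.comp continuous_quot_mk)⟩,
      fun z => rfl⟩
    · refine Quot.ind (fun x => ?_)
      induction x using Quot.ind
      rfl
    · exact Quot.ind fun z => rfl
end
end

section
/- Let n ≥ 1, let χ : Fin (n+1) → ℕ be a weight vector, and let χ' = (χ_0, …, χ_{n-1}). The circle T acts continuously on S^{2n-1} × S^1 (where S^{2n-1} ⊂ ℂ^n and S^1 ⊂ ℂ are the unit spheres) by t·(z, w) = ((t^{χ_0}z_0, …, t^{χ_{n-1}}z_{n-1}), t^{χ_n}w). The orbit space of this action, with the quotient topology, is homeomorphic to the weighted lens space L(χ_n; χ'). -/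
noncomputable section

section Statement15Aux

open Complex

/-- Scaling of a sphere point by powers of a unimodular complex number. -/
def scaledPt (n : ℕ) (χ' : Fin n → ℕ) (t : ℂ) (ht : ‖t‖ = 1) (z : Sph n) : Sph n :=
  ⟨fun i => t ^ χ' i * (z : Fin n → ℂ) i, by
    have hz := z.2
    simp only [map_mul, map_pow, norm_mul, norm_pow, ht, one_pow, one_mul]
    exact hz⟩

@[simp] lemma scaledPt_coe (n : ℕ) (χ' : Fin n → ℕ) (t : ℂ) (ht : ‖t‖ = 1)
    (z : Sph n) (i : Fin n) :
    (scaledPt n χ' t ht z : Fin n → ℂ) i = t ^ χ' i * (z : Fin n → ℂ) i := rfl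

/-- An explicit `k`-th root of `w⁻¹` for unimodular `w`. -/
def rtC (k : ℕ) (w : ℂ) : ℂ := Complex.exp ((-(w.arg / k) : ℝ) * Complex.I)

lemma rtC_abs (k : ℕ) (w : ℂ) : ‖rtC k w‖ = 1 :=
  Complex.norm_exp_ofReal_mul_I _

lemma rtC_pow (k : ℕ) (hk : k ≠ 0) (w : ℂ) (hw : ‖w‖ = 1) :
    rtC k w ^ k * w = 1 := by
  have hw0 : w ≠ 0 := by
    intro h0; rw [h0] at hw; simp at hw
  have hkC : (k : ℂ) ≠ 0 := Nat.cast_ne_zero.mpr hk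
  have h1 : rtC k w ^ k = Complex.exp (-((w.arg : ℝ) * Complex.I)) := by
    rw [rtC, ← Complex.exp_nat_mul]
    congr 1
    push_cast
    field_simp
  have h2 : Complex.exp ((w.arg : ℝ) * Complex.I) = w := by
    have h3 := Complex.norm_mul_exp_arg_mul_I w
    rwa [hw, Complex.ofReal_one, one_mul] at h3
  rw [h1, Complex.exp_neg, h2]
  exact inv_mul_cancel₀ hw0

lemma abs_one_of_pow (k : ℕ) (hk : k ≠ 0) (ζ : ℂ) (hζ : ζ ^ k = 1) :
    ‖ζ‖ = 1 := by
  have h1 : ‖ζ‖ ^ k = 1 := by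
    have := congrArg (‖·‖) hζ
    simpa [map_pow] using this
  exact (pow_left_strictMonoOn₀ (M₀ := ℝ) hk).injOn (norm_nonneg ζ)
    (by norm_num : (0:ℝ) ≤ 1) (by simpa using h1)

lemma scaledPt_scaledPt (n : ℕ) (χ' : Fin n → ℕ) (s t : ℂ) (hs : ‖s‖ = 1)
    (ht : ‖t‖ = 1) (hst : ‖s * t‖ = 1) (z : Sph n) :
    scaledPt n χ' s hs (scaledPt n χ' t ht z) = scaledPt n χ' (s * t) hst z := by
  apply Subtype.ext
  funext i
  simp [scaledPt, mul_pow]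
  ring

/-- Independence of the chosen root: two unimodular `k`-th roots of `w⁻¹` give the same
class in the lens space. -/
lemma indepLens (n k : ℕ) (χ' : Fin n → ℕ) (z : Sph n) (t t' w : ℂ)
    (ht : ‖t‖ = 1) (ht' : ‖t'‖ = 1)
    (h : t ^ k * w = 1) (h' : t' ^ k * w = 1) :
    Quot.mk (lensRel n k χ') (scaledPt n χ' t ht z) =
      Quot.mk (lensRel n k χ') (scaledPt n χ' t' ht' z) := by
  have ht0 : t ≠ 0 := by intro h0; rw [h0] at ht; simp at ht
  have hw0 : w ≠ 0 := by intro h0; rw [h0] at h; simp at h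
  have htk0 : t ^ k ≠ 0 := pow_ne_zero _ ht0
  have hpow : t ^ k = t' ^ k := mul_right_cancel₀ hw0 (h.trans h'.symm)
  apply Quot.sound
  refine ⟨t' * t⁻¹, ?_, ?_⟩
  · rw [mul_pow, inv_pow, ← hpow]
    exact mul_inv_cancel₀ htk0
  · intro i
    simp only [scaledPt_coe, mul_pow, inv_pow]
    have hc : (t ^ χ' i)⁻¹ * t ^ χ' i = 1 := inv_mul_cancel₀ (pow_ne_zero _ ht0)
    calc t' ^ χ' i * (z : Fin n → ℂ) i
        = t' ^ χ' i * (((t ^ χ' i)⁻¹ * t ^ χ' i) * (z : Fin n → ℂ) i) := by rw [hc, one_mul]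
      _ = t' ^ χ' i * (t ^ χ' i)⁻¹ * (t ^ χ' i * (z : Fin n → ℂ) i) := by ring

end Statement15Aux

set_option maxHeartbeats 1600000

/-- The circle `T` acts continuously on `S^{2n-1} × S^1` by
`t·(z,w) = ((t^{χ_0}z_0, …, t^{χ_{n-1}}z_{n-1}), t^{χ_n}w)`, and the orbit space of this
action is homeomorphic to the weighted lens space `L(χ_n; χ')`, where `χ' = (χ_0,…,χ_{n-1})`. -/
theorem statement15 (n : ℕ) (hn : 1 ≤ n) (χ : Fin (n + 1) → ℕ) (hχ : ∀ i, 1 ≤ χ i) :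
    ∃ act : {t : ℂ // ‖t‖ = 1} →
        Sph n × {w : ℂ // ‖w‖ = 1} → Sph n × {w : ℂ // ‖w‖ = 1},
      Continuous (fun p : {t : ℂ // ‖t‖ = 1} ×
          (Sph n × {w : ℂ // ‖w‖ = 1}) => act p.1 p.2) ∧
      (∀ (t : {t : ℂ // ‖t‖ = 1}) (z : Sph n × {w : ℂ // ‖w‖ = 1}),
        (((act t z).1 : Fin n → ℂ) =
            fun i => (t : ℂ) ^ χ i.castSucc * (z.1 : Fin n → ℂ) i) ∧
        ((act t z).2 : ℂ) = (t : ℂ) ^ χ (Fin.last n) * (z.2 : ℂ)) ∧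
      Nonempty (Quot (fun x y : Sph n × {w : ℂ // ‖w‖ = 1} =>
          ∃ t : {t : ℂ // ‖t‖ = 1}, act t x = y) ≃ₜ
        Lens n (χ (Fin.last n)) (fun i => χ i.castSucc)) := by
  classical
  set k := χ (Fin.last n) with hkdef
  set χ' : Fin n → ℕ := fun i => χ i.castSucc with hχ'def
  have hk : k ≠ 0 := Nat.one_le_iff_ne_zero.mp (hχ _)
  refine ⟨fun t p => (scaledPt n χ' t.1 t.2 p.1,
      ⟨t.1 ^ k * p.2.1, by simp [norm_mul, norm_pow, t.2, p.2.2]⟩), ?_, ?_, ?_⟩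
  · apply Continuous.prodMk
    · apply continuous_induced_rng.mpr
      show Continuous fun p : {t : ℂ // ‖t‖ = 1} ×
          (Sph n × {w : ℂ // ‖w‖ = 1}) =>
        (fun i => p.1.1 ^ χ' i * (p.2.1 : Fin n → ℂ) i : Fin n → ℂ)
      exact continuous_pi fun i =>
        (((continuous_subtype_val.comp continuous_fst).pow _).mul
          ((continuous_apply i).comp
            (continuous_subtype_val.comp (continuous_fst.comp continuous_snd))))
    · apply continuous_induced_rng.mpr
      show Continuous fun p : {t : ℂ // ‖t‖ = 1} ×
          (Sph n × {w : ℂ // ‖w‖ = 1}) => p.1.1 ^ k * p.2.2.1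
      exact ((continuous_subtype_val.comp continuous_fst).pow k).mul
          (continuous_subtype_val.comp (continuous_snd.comp continuous_snd))
  · intro t z
    exact ⟨rfl, rfl⟩
  · -- the homeomorphism
    set w1 : {w : ℂ // ‖w‖ = 1} := ⟨1, by simp⟩ with hw1
    set R : (Sph n × {w : ℂ // ‖w‖ = 1}) →
        (Sph n × {w : ℂ // ‖w‖ = 1}) → Prop :=
      fun x y => ∃ t : {t : ℂ // ‖t‖ = 1},
        (scaledPt n χ' t.1 t.2 x.1,
          (⟨t.1 ^ k * x.2.1, by simp [norm_mul, norm_pow, t.2, x.2.2]⟩ :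
            {w : ℂ // ‖w‖ = 1})) = y with hR
    let F : Sph n × {w : ℂ // ‖w‖ = 1} → Lens n k χ' :=
      fun p => Quot.mk _ (scaledPt n χ' (rtC k p.2.1) (rtC_abs k p.2.1) p.1)
    have hFeq : ∀ (p : Sph n × {w : ℂ // ‖w‖ = 1}) (t : ℂ)
        (ht : ‖t‖ = 1), t ^ k * p.2.1 = 1 →
        F p = Quot.mk _ (scaledPt n χ' t ht p.1) := by
      intro p t ht hpow
      exact indepLens n k χ' p.1 _ t p.2.1 (rtC_abs k p.2.1) ht
        (rtC_pow k hk p.2.1 p.2.2) hpow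
    have hF : ∀ a b, R a b → F a = F b := by
      rintro a b ⟨t, hb⟩
      have habs2 : ‖(t.1 : ℂ) ^ k * a.2.1‖ = 1 := by
        simp [norm_mul, norm_pow, t.2, a.2.2]
      set s := rtC k (t.1 ^ k * a.2.1) with hsdef
      have hsabs : ‖s‖ = 1 := rtC_abs _ _
      have hspow : s ^ k * (t.1 ^ k * a.2.1) = 1 := rtC_pow k hk _ habs2
      have hstabs : ‖s * t.1‖ = 1 := by
        simp [norm_mul, hsabs, t.2]
      have hstpow : (s * t.1) ^ k * a.2.1 = 1 := by
        rw [mul_pow, mul_assoc]; exact hspow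
      have h1 : F a = Quot.mk _ (scaledPt n χ' (s * t.1) hstabs a.1) :=
        hFeq a (s * t.1) hstabs hstpow
      have hb1 : b.1 = scaledPt n χ' t.1 t.2 a.1 := by rw [← hb]
      have h2 : F b = Quot.mk _ (scaledPt n χ' s hsabs b.1) := by
        apply hFeq b s hsabs
        rw [← hb]
        exact hspow
      rw [h1, h2, hb1, scaledPt_scaledPt n χ' s t.1 hsabs t.2 hstabs a.1]
    have hFcont : Continuous F := by
      rw [continuous_iff_continuousAt]
      rintro ⟨z₀, w₀⟩
      have hw00 : (w₀ : ℂ) ≠ 0 := by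
        intro h0; have := w₀.2; rw [h0] at this; simp at this
      set τ : ℂ → ℂ := fun w =>
        rtC k w₀.1 * Complex.exp ((((k : ℝ)⁻¹ : ℝ) : ℂ) * (-Complex.log (w / w₀.1)))
        with hτ
      have hτabs : ∀ w : ℂ, ‖w‖ = 1 → ‖τ w‖ = 1 := by
        intro w hw
        have hq : ‖w / w₀.1‖ = 1 := by
          rw [norm_div, hw, w₀.2]; norm_num
        simp only [hτ, map_mul, norm_mul, rtC_abs, one_mul, Complex.norm_exp,
          Complex.re_ofReal_mul, Complex.neg_re, Complex.log_re, hq,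
          Real.log_one, neg_zero, mul_zero, Real.exp_zero]
      let G : Sph n × {w : ℂ // ‖w‖ = 1} → Lens n k χ' :=
        fun p => Quot.mk _ (scaledPt n χ' (τ p.2.1) (hτabs p.2.1 p.2.2) p.1)
      have hdiv : ContinuousAt (fun w : ℂ => w / w₀.1) w₀.1 :=
        (continuous_id.div_const _).continuousAt
      have hlog : ContinuousAt (fun w : ℂ => Complex.log (w / w₀.1)) w₀.1 := by
        have hclog : ContinuousAt Complex.log ((w₀ : ℂ) / w₀.1) := by
          rw [div_self hw00]
          exact continuousAt_clog Complex.one_mem_slitPlane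
        exact ContinuousAt.comp (g := Complex.log) (f := fun w : ℂ => w / w₀.1) hclog hdiv
      have hexp : ContinuousAt (fun w : ℂ =>
          Complex.exp ((((k : ℝ)⁻¹ : ℝ) : ℂ) * (-Complex.log (w / w₀.1)))) w₀.1 :=
        Complex.continuous_exp.continuousAt.comp
          (ContinuousAt.mul continuousAt_const hlog.neg)
      have hτat : ContinuousAt τ w₀.1 := ContinuousAt.mul continuousAt_const hexp
      have hval : ContinuousAt (fun p : Sph n × {w : ℂ // ‖w‖ = 1} =>
          (fun i => τ p.2.1 ^ χ' i * (p.1 : Fin n → ℂ) i : Fin n → ℂ)) (z₀, w₀) := by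
        rw [continuousAt_pi]
        intro i
        have hc2 : ContinuousAt (fun p : Sph n × {w : ℂ // ‖w‖ = 1} =>
            (p.2 : ℂ)) (z₀, w₀) := (continuous_subtype_val.comp continuous_snd).continuousAt
        have hc1 : ContinuousAt (fun p : Sph n × {w : ℂ // ‖w‖ = 1} =>
            (p.1 : Fin n → ℂ) i) (z₀, w₀) :=
          ((continuous_apply i).comp (continuous_subtype_val.comp continuous_fst)).continuousAt
        have hτ2 : ContinuousAt (fun p : Sph n × {w : ℂ // ‖w‖ = 1} =>
            τ (p.2 : ℂ)) (z₀, w₀) :=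
          ContinuousAt.comp (g := τ)
            (f := fun p : Sph n × {w : ℂ // ‖w‖ = 1} => (p.2 : ℂ)) hτat hc2
        exact (hτ2.pow _).mul hc1
      have hsub : ContinuousAt (fun p : Sph n × {w : ℂ // ‖w‖ = 1} =>
          scaledPt n χ' (τ p.2.1) (hτabs p.2.1 p.2.2) p.1) (z₀, w₀) :=
        Topology.IsInducing.subtypeVal.continuousAt_iff.mpr hval
      have hGat : ContinuousAt G (z₀, w₀) :=
        (continuous_quot_mk.continuousAt).comp hsub
      apply hGat.congr
      have hS : IsOpen {p : Sph n × {w : ℂ // ‖w‖ = 1} |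
          p.2.1 / w₀.1 ∈ Complex.slitPlane} :=
        Complex.isOpen_slitPlane.preimage
          ((continuous_subtype_val.comp continuous_snd).div_const _)
      have hmem : (z₀, w₀) ∈ {p : Sph n × {w : ℂ // ‖w‖ = 1} |
          p.2.1 / w₀.1 ∈ Complex.slitPlane} := by
        show (w₀ : ℂ) / w₀.1 ∈ Complex.slitPlane
        rw [div_self hw00]; exact Complex.one_mem_slitPlane
      refine Filter.eventually_of_mem (hS.mem_nhds hmem) ?_
      rintro ⟨z, w⟩ hp
      have hx0 : (w : ℂ) / w₀.1 ≠ 0 := Complex.slitPlane_ne_zero hp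
      have hwne : (w : ℂ) ≠ 0 := by
        intro h0; rw [h0] at hx0; simp at hx0
      have hτpow : τ w.1 ^ k * w.1 = 1 := by
        have hkC : (k : ℂ) ≠ 0 := Nat.cast_ne_zero.mpr hk
        have h1 : τ w.1 ^ k = rtC k w₀.1 ^ k * Complex.exp (-Complex.log (w.1 / w₀.1)) := by
          rw [hτ]
          rw [mul_pow, ← Complex.exp_nat_mul]
          congr 2
          push_cast
          field_simp
        rw [h1, Complex.exp_neg, Complex.exp_log hx0]
        have h2 : (w.1 / w₀.1)⁻¹ * w.1 = w₀.1 := by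
          field_simp
        calc rtC k w₀.1 ^ k * (w.1 / w₀.1)⁻¹ * w.1
            = rtC k w₀.1 ^ k * ((w.1 / w₀.1)⁻¹ * w.1) := by ring
          _ = rtC k w₀.1 ^ k * w₀.1 := by rw [h2]
          _ = 1 := rtC_pow k hk w₀.1 w₀.2
      exact (hFeq (z, w) (τ w.1) (hτabs w.1 w.2) hτpow).symm
    have hg : ∀ a b : Sph n, lensRel n k χ' a b →
        Quot.mk R (a, w1) = Quot.mk R (b, w1) := by
      rintro a b ⟨ζ, hζk, hζ⟩
      have hζabs : ‖ζ‖ = 1 := abs_one_of_pow k hk ζ hζk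
      apply Quot.sound
      refine ⟨⟨ζ, hζabs⟩, ?_⟩
      refine Prod.ext ?_ ?_
      · apply Subtype.ext
        funext i
        exact (hζ i).symm
      · apply Subtype.ext
        show ζ ^ k * (w1 : ℂ) = (w1 : ℂ)
        rw [hw1]
        simp [hζk]
    have hleft : ∀ p : Sph n × {w : ℂ // ‖w‖ = 1},
        Quot.lift (fun z : Sph n => Quot.mk R (z, w1)) hg (F p) = Quot.mk R p := by
      rintro ⟨z, w⟩
      have hpow : rtC k w.1 ^ k * w.1 = 1 := rtC_pow k hk w.1 w.2
      show Quot.mk R (scaledPt n χ' (rtC k w.1) (rtC_abs k w.1) z, w1) = Quot.mk R (z, w)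
      symm
      apply Quot.sound
      refine ⟨⟨rtC k w.1, rtC_abs k w.1⟩, ?_⟩
      refine Prod.ext rfl ?_
      apply Subtype.ext
      show rtC k w.1 ^ k * w.1 = (w1 : ℂ)
      rw [hpow, hw1]
    have hright : ∀ z : Sph n, F (z, w1) = Quot.mk (lensRel n k χ') z := by
      intro z
      have hone : ‖(1 : ℂ)‖ = 1 := by simp
      have h1 : (1 : ℂ) ^ k * (w1 : ℂ) = 1 := by rw [hw1]; simp
      have h2 := hFeq (z, w1) 1 hone h1
      have h3 : scaledPt n χ' (1 : ℂ) hone z = z := by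
        apply Subtype.ext
        funext i
        simp [scaledPt]
      rw [h2, h3]
    refine ⟨⟨⟨Quot.lift F hF, Quot.lift (fun z : Sph n => Quot.mk R (z, w1)) hg,
      Quot.ind hleft, Quot.ind ?_⟩, ?_, ?_⟩⟩
    · intro z
      exact hright z
    · exact continuous_quot_lift _ hFcont
    · exact continuous_quot_lift _ (continuous_quot_mk.comp
        (Continuous.prodMk continuous_id continuous_const))
end
end

section
/- Let n ≥ 1, let χ : Fin (n+1) → ℕ be a weight vector, and let χ' = (χ_0, …, χ_{n-1}). The subspace C = {[z]_χ ∈ P(χ) : |z_n|² ≥ 1/2} of P(χ) (this condition is independent of the chosen representative z ∈ S^{2n+1}) is homeomorphic to the cone on the weighted lens space L(χ_n; χ'), i.e. to the quotient (L(χ_n;χ') × [0,1]) / (L(χ_n;χ') × {0}). -/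
noncomputable section

namespace S16
open Metric

lemma abs_unit_of_pow_eq_one {ζ : ℂ} {k : ℕ} (hk : 0 < k) (h : ζ ^ k = 1) :
    ‖ζ‖ = 1 := by
  have h1 : ‖ζ‖ ^ k = 1 := by
    rw [← norm_pow, h, norm_one]
  rcases lt_trichotomy (‖ζ‖) 1 with hlt | heq | hgt
  · exact absurd h1 (by nlinarith [pow_lt_one₀ (norm_nonneg ζ) hlt hk.ne'])
  · exact heq
  · exact absurd h1 (by nlinarith [one_lt_pow₀ hgt hk.ne'])

lemma wRel_equivalence (m : ℕ) (χ : Fin m → ℕ) : Equivalence (wRel m χ) where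
  refl z := ⟨1, by simp, fun i => by simp⟩
  symm := by
    rintro z w ⟨t, ht, h⟩
    have ht0 : t ≠ 0 := fun h0 => by simp [h0] at ht
    refine ⟨t⁻¹, by simp [ht], fun i => ?_⟩
    rw [h i]
    field_simp
    rw [mul_assoc, ← mul_pow, one_div_mul_cancel ht0, one_pow, mul_one]
  trans := by
    rintro x y z ⟨t, ht, h⟩ ⟨s, hs, h'⟩
    refine ⟨s * t, by simp [ht, hs], fun i => ?_⟩
    rw [h' i, h i, mul_pow]; ring

lemma lensRel_equivalence (m k : ℕ) (hk : 0 < k) (χ : Fin m → ℕ) :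
    Equivalence (lensRel m k χ) where
  refl z := ⟨1, by simp, fun i => by simp⟩
  symm := by
    rintro z w ⟨ζ, hζ, h⟩
    have hζ0 : ζ ≠ 0 := by
      intro h0; rw [h0, zero_pow hk.ne'] at hζ; exact zero_ne_one hζ
    refine ⟨ζ⁻¹, by rw [inv_pow, hζ, inv_one], fun i => ?_⟩
    rw [h i]
    field_simp
    rw [mul_assoc, ← mul_pow, one_div_mul_cancel hζ0, one_pow, mul_one]
  trans := by
    rintro x y z ⟨t, ht, h⟩ ⟨s, hs, h'⟩
    refine ⟨s * t, by rw [mul_pow, ht, hs, one_mul], fun i => ?_⟩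
    rw [h' i, h i, mul_pow]; ring

lemma wpMk_eq_iff {m : ℕ} {χ : Fin m → ℕ} {z w : Sph m} :
    wpMk m χ z = wpMk m χ w ↔ wRel m χ z w := by
  rw [wpMk, wpMk, Quot.eq, (wRel_equivalence m χ).eqvGen_iff]

lemma lensMk_eq_iff {m k : ℕ} (hk : 0 < k) {χ : Fin m → ℕ} {z w : Sph m} :
    (Quot.mk (lensRel m k χ) z : Lens m k χ) = Quot.mk _ w ↔ lensRel m k χ z w := by
  rw [Quot.eq, (lensRel_equivalence m k hk χ).eqvGen_iff]



lemma sph_abs_sq_le (z : Sph m) (i : Fin m) : ‖z.1 i‖ ^ 2 ≤ 1 := by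
  have h := Finset.single_le_sum (f := fun j => ‖z.1 j‖ ^ 2)
    (fun j _ => sq_nonneg _) (Finset.mem_univ i)
  rwa [z.2] at h

lemma sph_abs_le (z : Sph m) (i : Fin m) : ‖z.1 i‖ ≤ 1 := by
  nlinarith [sph_abs_sq_le z i, norm_nonneg (z.1 i)]

lemma sph_compact (m : ℕ) : IsCompact {z : Fin m → ℂ | ∑ i, ‖z i‖ ^ 2 = 1} := by
  apply isCompact_of_isClosed_isBounded
  · exact isClosed_eq (by continuity) continuous_const
  · apply (isBounded_closedBall (x := (0 : Fin m → ℂ)) (r := 1)).subset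
    intro z hz
    simp only [mem_closedBall, dist_zero_right]
    rw [pi_norm_le_iff_of_nonneg (zero_le_one : (0:ℝ) ≤ 1)]
    intro i
    have h1 : ‖z i‖ ^ 2 ≤ 1 := by
      have h := Finset.single_le_sum (f := fun j => ‖z j‖ ^ 2)
        (fun j _ => sq_nonneg _) (Finset.mem_univ i)
      rwa [hz] at h
    nlinarith [norm_nonneg (z i)]

instance (m : ℕ) : CompactSpace (Sph m) := isCompact_iff_compactSpace.mp (sph_compact m)

variable {m : ℕ} {χ : Fin m → ℕ}

/-- the ambient orbit of a sphere point -/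
def orb (χ : Fin m → ℕ) (z : Sph m) : Set (Fin m → ℂ) :=
  (fun t : ℂ => fun i => t ^ χ i * z.1 i) '' sphere 0 1

lemma isCompact_orb (z : Sph m) : IsCompact (orb χ z) :=
  (isCompact_sphere 0 1).image (by continuity)

lemma mem_orb (z w : Sph m) : w.1 ∈ orb χ z ↔ wRel m χ z w := by
  constructor
  · rintro ⟨t, ht, h⟩
    rw [mem_sphere_zero_iff_norm] at ht
    exact ⟨t, ht, fun i => (congrFun h i).symm⟩
  · rintro ⟨t, ht, h⟩
    refine ⟨t, by rwa [mem_sphere_zero_iff_norm], funext fun i => (h i).symm⟩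

/-- multiplication by the weighted unit scalar, as a map of ambient space -/
lemma isometry_wmul {t : ℂ} (ht : ‖t‖ = 1) :
    Isometry (fun v : Fin m → ℂ => fun i => t ^ χ i * v i) := by
  have : (fun v : Fin m → ℂ => fun i => t ^ χ i * v i) = Pi.map (fun i (x : ℂ) => t ^ χ i * x) := rfl
  rw [this]
  apply Isometry.piMap
  intro i
  apply Isometry.of_dist_eq
  intro x y
  have hnorm : ‖t ^ χ i‖ = 1 := by
    rw [norm_pow, ht, one_pow]
  rw [dist_eq_norm, dist_eq_norm, ← mul_sub, norm_mul, hnorm, one_mul]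

lemma infDist_orb_invariant (z x y : Sph m) (h : wRel m χ x y) :
    infDist y.1 (orb χ z) = infDist x.1 (orb χ z) := by
  obtain ⟨t, ht, hxy⟩ := h
  have ht0 : t ≠ 0 := fun h0 => by simp [h0] at ht
  have himg : (fun v : Fin m → ℂ => fun i => t ^ χ i * v i) '' orb χ z = orb χ z := by
    apply Set.Subset.antisymm
    · rintro _ ⟨_, ⟨s, hs, rfl⟩, rfl⟩
      refine ⟨t * s, ?_, ?_⟩
      · rw [mem_sphere_zero_iff_norm, norm_mul]
        rw [mem_sphere_zero_iff_norm] at hs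
        rw [hs, ht, mul_one]
      · funext i
        dsimp only
        rw [mul_pow]; ring
    · rintro _ ⟨s, hs, rfl⟩
      refine ⟨fun i => (t⁻¹ * s) ^ χ i * z.1 i, ⟨t⁻¹ * s, ?_, rfl⟩, ?_⟩
      · rw [mem_sphere_zero_iff_norm, norm_mul, norm_inv]
        rw [mem_sphere_zero_iff_norm] at hs
        rw [hs, ht]; norm_num
      · funext i
        dsimp only
        rw [mul_pow, inv_pow, ← mul_assoc, mul_inv_cancel_left₀ (pow_ne_zero _ ht0)]
  have hy : y.1 = (fun v : Fin m → ℂ => fun i => t ^ χ i * v i) x.1 := funext hxy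
  conv_lhs => rw [hy, ← himg]
  rw [infDist_image (isometry_wmul ht)]

instance wpT2 (m : ℕ) (χ : Fin m → ℕ) : T2Space (WP m χ) := by
  constructor
  intro a b hab
  induction a using Quot.ind with | _ z =>
  induction b using Quot.ind with | _ w =>
  have hinv : ∀ x y : Sph m, wRel m χ x y →
      infDist x.1 (orb χ z) = infDist y.1 (orb χ z) :=
    fun x y h => (infDist_orb_invariant z x y h).symm
  set g : WP m χ → ℝ := Quot.lift (fun x : Sph m => infDist x.1 (orb χ z)) hinv with hg
  have hgc : Continuous g :=
    continuous_quot_lift _ ((continuous_infDist_pt _).comp continuous_subtype_val)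
  have hne : (orb χ z).Nonempty := ⟨z.1, 1, by simp [mem_sphere_zero_iff_norm], by
    funext i; simp⟩
  have hwz : w.1 ∉ orb χ z := by
    intro hmem
    exact hab (Quot.sound ((mem_orb z w).mp hmem))
  have hε : 0 < infDist w.1 (orb χ z) :=
    ((isCompact_orb z).isClosed.notMem_iff_infDist_pos hne).mp hwz
  set ε := infDist w.1 (orb χ z)
  refine ⟨g ⁻¹' Set.Iio (ε / 2), g ⁻¹' Set.Ioi (ε / 2),
    hgc.isOpen_preimage _ isOpen_Iio, hgc.isOpen_preimage _ isOpen_Ioi, ?_, ?_, ?_⟩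
  · have hz0 : g (Quot.mk _ z) = 0 := by
      show infDist z.1 (orb χ z) = 0
      exact infDist_zero_of_mem ((mem_orb z z).mpr ⟨1, by simp, fun i => by simp⟩)
    simp only [Set.mem_preimage, Set.mem_Iio, hz0]
    positivity
  · simp only [Set.mem_preimage, Set.mem_Ioi]
    show ε / 2 < infDist w.1 (orb χ z)
    linarith
  · rw [Set.disjoint_left]
    rintro x h1 h2
    simp only [Set.mem_preimage, Set.mem_Iio, Set.mem_Ioi] at h1 h2
    linarith


section Cone

lemma real_pow_eq_one {x : ℝ} (hx : 0 ≤ x) {k : ℕ} (hk : 0 < k) (h : x ^ k = 1) : x = 1 := by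
  rcases lt_trichotomy x 1 with hlt | heq | hgt
  · exact absurd h (by nlinarith [pow_lt_one₀ hx hlt hk.ne'])
  · exact heq
  · exact absurd h (by nlinarith [one_lt_pow₀ hgt hk.ne'])

abbrev II : Type := {s : ℝ // s ∈ Set.Icc (0 : ℝ) 1}

def sO (t : ℝ) : ℝ := t / Real.sqrt 2

lemma sO_sq (t : ℝ) : sO t ^ 2 = t ^ 2 / 2 := by
  rw [sO, div_pow, Real.sq_sqrt (by norm_num : (0:ℝ) ≤ 2)]

lemma sO_nonneg {t : ℝ} (ht : 0 ≤ t) : 0 ≤ sO t := div_nonneg ht (Real.sqrt_nonneg 2)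

lemma sO_sq_le {t : ℝ} (ht : t ∈ Set.Icc (0:ℝ) 1) : sO t ^ 2 ≤ 1 / 2 := by
  rw [sO_sq]; nlinarith [ht.1, ht.2]

variable {n : ℕ}

def vec (u : Fin n → ℂ) (t : ℝ) : Fin (n + 1) → ℂ :=
  Fin.snoc (fun j => ((sO t : ℝ) : ℂ) * u j) ((Real.sqrt (1 - sO t ^ 2) : ℝ) : ℂ)

lemma vec_sum (u : Sph n) {t : ℝ} (ht : t ∈ Set.Icc (0:ℝ) 1) :
    ∑ i, ‖vec u.1 t i‖ ^ 2 = 1 := by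
  rw [Fin.sum_univ_castSucc]
  have h1 : ∀ j : Fin n,
      ‖vec u.1 t j.castSucc‖ ^ 2 = sO t ^ 2 * ‖u.1 j‖ ^ 2 := by
    intro j
    simp only [vec, Fin.snoc_castSucc, norm_mul, mul_pow, Complex.norm_real, Real.norm_eq_abs, sq_abs]
  have h2 : ‖vec u.1 t (Fin.last n)‖ ^ 2 = 1 - sO t ^ 2 := by
    simp only [vec, Fin.snoc_last, Complex.norm_real, Real.norm_eq_abs, sq_abs]
    exact Real.sq_sqrt (by nlinarith [sO_sq_le ht])
  rw [h2, Finset.sum_congr rfl (fun j _ => h1 j), ← Finset.mul_sum, u.2, mul_one]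
  ring

def sphVec (u : Sph n) (t : II) : Sph (n + 1) := ⟨vec u.1 t.1, vec_sum u t.2⟩

lemma sphVec_last (u : Sph n) (t : II) :
    (sphVec u t).1 (Fin.last n) = ((Real.sqrt (1 - sO t.1 ^ 2) : ℝ) : ℂ) := by
  simp only [sphVec, vec, Fin.snoc_last]

lemma sphVec_castSucc (u : Sph n) (t : II) (j : Fin n) :
    (sphVec u t).1 j.castSucc = ((sO t.1 : ℝ) : ℂ) * u.1 j := by
  simp only [sphVec, vec, Fin.snoc_castSucc]

lemma abs_sphVec_last_sq (u : Sph n) (t : II) :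
    ‖(sphVec u t).1 (Fin.last n)‖ ^ 2 = 1 - sO t.1 ^ 2 := by
  rw [sphVec_last, Complex.norm_real, Real.norm_eq_abs, sq_abs]
  exact Real.sq_sqrt (by nlinarith [sO_sq_le t.2])

lemma half_le_sphVec (u : Sph n) (t : II) :
    1 / 2 ≤ ‖(sphVec u t).1 (Fin.last n)‖ ^ 2 := by
  rw [abs_sphVec_last_sq]
  nlinarith [sO_sq_le t.2]

lemma continuous_vecmap (n : ℕ) : Continuous (fun p : Sph n × II => vec p.1.1 p.2.1) := by
  apply continuous_pi
  intro i
  refine Fin.lastCases ?_ ?_ i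
  · simp only [vec, Fin.snoc_last]
    apply Complex.continuous_ofReal.comp
    apply Real.continuous_sqrt.comp
    have : Continuous (fun p : Sph n × II => sO p.2.1) := by
      unfold sO; fun_prop
    fun_prop
  · intro j
    simp only [vec, Fin.snoc_castSucc]
    have h1 : Continuous (fun p : Sph n × II => ((sO p.2.1 : ℝ) : ℂ)) := by
      unfold sO
      exact Complex.continuous_ofReal.comp ((continuous_subtype_val.comp continuous_snd).div_const _)
    exact h1.mul ((continuous_apply j).comp (continuous_subtype_val.comp continuous_fst))

variable (n : ℕ) (χ : Fin (n + 1) → ℕ)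

abbrev CSp : Type := {x : WP (n + 1) χ // ∃ z : Sph (n + 1), wpMk (n + 1) χ z = x ∧
  1 / 2 ≤ ‖(z : Fin (n + 1) → ℂ) (Fin.last n)‖ ^ 2}

abbrev ConeT : Type := Quot (fun a b : Lens n (χ (Fin.last n)) (fun i => χ i.castSucc) × II =>
  (a.2 : ℝ) = 0 ∧ (b.2 : ℝ) = 0)

def cMap (u : Sph n) (t : II) : CSp n χ :=
  ⟨wpMk (n + 1) χ (sphVec u t), sphVec u t, rfl, half_le_sphVec u t⟩

lemma wRel_sphVec (hk : 0 < χ (Fin.last n)) {u v : Sph n} {t : II}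
    (h : lensRel n (χ (Fin.last n)) (fun i => χ i.castSucc) u v) :
    wRel (n + 1) χ (sphVec u t) (sphVec v t) := by
  obtain ⟨ζ, hζ, hcoord⟩ := h
  refine ⟨ζ, abs_unit_of_pow_eq_one hk hζ, fun i => ?_⟩
  refine Fin.lastCases ?_ ?_ i
  · rw [sphVec_last, sphVec_last, hζ, one_mul]
  · intro j
    rw [sphVec_castSucc, sphVec_castSucc, hcoord j]
    ring

lemma sphVec_zero (u v : Sph n) {t s : II} (ht : t.1 = 0) (hs : s.1 = 0) :
    sphVec u t = sphVec v s := by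
  apply Subtype.ext
  funext i
  refine Fin.lastCases ?_ ?_ i
  · rw [sphVec_last, sphVec_last, ht, hs]
  · intro j
    rw [sphVec_castSucc, sphVec_castSucc, ht, hs]
    simp [sO]

def Gmap (hk : 0 < χ (Fin.last n)) :
    Lens n (χ (Fin.last n)) (fun i => χ i.castSucc) × II → CSp n χ :=
  fun p => Quot.lift (fun u => cMap n χ u p.2)
    (fun u v h => Subtype.ext (Quot.sound (wRel_sphVec n χ hk h))) p.1

lemma continuous_Gmap (hk : 0 < χ (Fin.last n)) : Continuous (Gmap n χ hk) := by
  apply (isQuotientMap_quot_mk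
    (r := lensRel n (χ (Fin.last n)) (fun i => χ i.castSucc))).continuous_lift_prod_left
  show Continuous fun p : Sph n × II => cMap n χ p.1 p.2
  apply Continuous.subtype_mk
  exact continuous_quot_mk.comp
    ((Continuous.subtype_mk (continuous_vecmap n) _ : Continuous fun p : Sph n × II => sphVec p.1 p.2))

def Fmap (hk : 0 < χ (Fin.last n)) : ConeT n χ → CSp n χ :=
  Quot.lift (Gmap n χ hk) (by
    rintro ⟨qa, ta⟩ ⟨qb, tb⟩ ⟨hta, htb⟩
    induction qa using Quot.ind with | _ u =>
    induction qb using Quot.ind with | _ v =>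
    exact Subtype.ext (congrArg (wpMk (n + 1) χ) (sphVec_zero n u v hta htb)))

lemma continuous_Fmap (hk : 0 < χ (Fin.last n)) : Continuous (Fmap n χ hk) :=
  continuous_quot_lift _ (continuous_Gmap n χ hk)

lemma sphVec_rel_eq (hk : 0 < χ (Fin.last n)) {u v : Sph n} {t s : II}
    (h : wRel (n + 1) χ (sphVec u t) (sphVec v s)) :
    t = s ∧ (t.1 = 0 ∨ lensRel n (χ (Fin.last n)) (fun i => χ i.castSucc) u v) := by
  obtain ⟨τ, hτ, hc⟩ := h
  set a := Real.sqrt (1 - sO t.1 ^ 2) with ha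
  set b := Real.sqrt (1 - sO s.1 ^ 2) with hb
  have ha0 : 0 < a := Real.sqrt_pos.mpr (by nlinarith [sO_sq_le t.2])
  have hb0 : 0 < b := Real.sqrt_pos.mpr (by nlinarith [sO_sq_le s.2])
  have hlast := hc (Fin.last n)
  rw [sphVec_last, sphVec_last, ← ha, ← hb] at hlast
  -- hlast : (b : ℂ) = τ ^ χ (Fin.last n) * (a : ℂ)
  have habs : b = a := by
    have := congrArg (‖·‖) hlast
    rwa [norm_mul, norm_pow, hτ, one_pow, one_mul, Complex.norm_real, Real.norm_eq_abs, Complex.norm_real, Real.norm_eq_abs,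
      abs_of_nonneg ha0.le, abs_of_nonneg hb0.le] at this
  have hts : t = s := by
    have hsq : 1 - sO t.1 ^ 2 = 1 - sO s.1 ^ 2 := by
      have h1 := Real.sq_sqrt (show (0:ℝ) ≤ 1 - sO t.1 ^ 2 by nlinarith [sO_sq_le t.2])
      have h2 := Real.sq_sqrt (show (0:ℝ) ≤ 1 - sO s.1 ^ 2 by nlinarith [sO_sq_le s.2])
      rw [← h1, ← h2, ← ha, ← hb, habs]
    have hsq' : t.1 ^ 2 = s.1 ^ 2 := by
      have := hsq
      rw [sO_sq, sO_sq] at this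
      linarith
    apply Subtype.ext
    rw [← Real.sqrt_sq t.2.1, ← Real.sqrt_sq s.2.1, hsq']
  have hτk : τ ^ χ (Fin.last n) = 1 := by
    have hane : ((a : ℝ) : ℂ) ≠ 0 := by
      simp only [ne_eq, Complex.ofReal_eq_zero]
      exact ha0.ne'
    have : ((a : ℝ) : ℂ) = τ ^ χ (Fin.last n) * (a : ℂ) := by
      rw [← hlast, habs]
    field_simp at this
    first
      | exact this
      | exact this.symm
  refine ⟨hts, ?_⟩
  by_cases ht0 : t.1 = 0
  · exact Or.inl ht0
  · right
    have hsO : sO t.1 ≠ 0 := by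
      have : 0 < t.1 := lt_of_le_of_ne t.2.1 (Ne.symm ht0)
      have : 0 < sO t.1 := div_pos this (Real.sqrt_pos.mpr (by norm_num))
      exact this.ne'
    have hsOc : ((sO t.1 : ℝ) : ℂ) ≠ 0 := by
      simp only [ne_eq, Complex.ofReal_eq_zero]; exact hsO
    refine ⟨τ, hτk, fun j => ?_⟩
    have hcj := hc j.castSucc
    rw [sphVec_castSucc, sphVec_castSucc, ← hts] at hcj
    -- hcj : (sO t : ℂ) * v.1 j = τ ^ χ j.castSucc * ((sO t : ℂ) * u.1 j)
    exact mul_left_cancel₀ hsOc (by rw [hcj]; ring)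

end Cone

section Surj

variable (n : ℕ) (χ : Fin (n + 1) → ℕ)

/-- a base point of the sphere -/
def basePt (hn : 1 ≤ n) : Sph n :=
  ⟨fun j => if j = ⟨0, hn⟩ then 1 else 0, by
    have : ∀ j : Fin n, ‖(fun j => if j = (⟨0, hn⟩ : Fin n) then (1:ℂ) else 0) j‖ ^ 2
        = if j = ⟨0, hn⟩ then 1 else 0 := by
      intro j; by_cases h : j = ⟨0, hn⟩ <;> simp [h]
    rw [Finset.sum_congr rfl (fun j _ => this j), Finset.sum_ite_eq' Finset.univ]
    simp⟩

lemma cMap_surj (hn : 1 ≤ n) (hχ : ∀ i, 1 ≤ χ i) (c : CSp n χ) :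
    ∃ p : Sph n × II, cMap n χ p.1 p.2 = c := by
  obtain ⟨x, hx⟩ := c
  obtain ⟨z, hzx, hz2⟩ := hx
  set r := ‖z.1 (Fin.last n)‖ with hrdef
  have hr0 : 0 < r := by nlinarith [norm_nonneg (z.1 (Fin.last n))]
  have hrle : r ≤ 1 := sph_abs_le z _
  have hzlast : z.1 (Fin.last n) ≠ 0 := by
    intro h0
    rw [hrdef, h0, norm_zero] at hr0
    exact lt_irrefl 0 hr0
  have hk : 0 < χ (Fin.last n) := hχ _
  obtain ⟨τ, hτ⟩ := IsAlgClosed.exists_pow_nat_eq ((r : ℂ) / z.1 (Fin.last n)) hk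
  have hτabs : ‖τ‖ = 1 := by
    apply real_pow_eq_one (norm_nonneg τ) hk
    rw [← norm_pow, hτ, norm_div, Complex.norm_real, Real.norm_eq_abs, abs_of_nonneg hr0.le, ← hrdef,
      div_self hr0.ne']
  have hwmem : ∑ i, ‖(fun i => τ ^ χ i * z.1 i) i‖ ^ 2 = 1 := by
    have : ∀ i, ‖τ ^ χ i * z.1 i‖ ^ 2 = ‖z.1 i‖ ^ 2 := by
      intro i; rw [norm_mul, norm_pow, hτabs, one_pow, one_mul]
    rw [Finset.sum_congr rfl (fun i _ => this i), z.2]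
  set w : Sph (n + 1) := ⟨fun i => τ ^ χ i * z.1 i, hwmem⟩ with hwdef
  have hwz : wRel (n + 1) χ z w := ⟨τ, hτabs, fun i => rfl⟩
  have hwx : wpMk (n + 1) χ w = x := by
    rw [← hzx]
    exact (Quot.sound hwz).symm
  have hwlast : w.1 (Fin.last n) = (r : ℂ) := by
    show τ ^ χ (Fin.last n) * z.1 (Fin.last n) = (r : ℂ)
    rw [hτ, div_mul_cancel₀ _ hzlast]
  have hsum' : ∑ j : Fin n, ‖w.1 j.castSucc‖ ^ 2 = 1 - r ^ 2 := by
    have hw2 := w.2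
    rw [Fin.sum_univ_castSucc, hwlast, Complex.norm_real, Real.norm_eq_abs, abs_of_nonneg hr0.le] at hw2
    linarith
  by_cases hr1 : 1 - r ^ 2 = 0
  · -- r = 1 case : cone point
    have hre : r = 1 := by
      have : (r - 1) * (r + 1) = 0 := by nlinarith
      rcases mul_eq_zero.mp this with h | h
      · linarith
      · linarith
    have hwj : ∀ j : Fin n, w.1 j.castSucc = 0 := by
      have hz0 : ∀ j ∈ Finset.univ, ‖w.1 (Fin.castSucc j)‖ ^ 2 = 0 := by
        rw [← Finset.sum_eq_zero_iff_of_nonneg (fun j _ => sq_nonneg _)]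
        rw [hsum', hre]; ring
      intro j
      have := hz0 j (Finset.mem_univ j)
      have habs0 : ‖w.1 j.castSucc‖ = 0 := by nlinarith [norm_nonneg (w.1 j.castSucc)]
      exact norm_eq_zero.mp habs0
    refine ⟨(basePt n hn, ⟨0, by norm_num, by norm_num⟩), ?_⟩
    apply Subtype.ext
    show wpMk (n + 1) χ (sphVec (basePt n hn) _) = x
    rw [← hwx]
    congr 1
    apply Subtype.ext
    funext i
    refine Fin.lastCases ?_ ?_ i
    · rw [sphVec_last, hwlast, hre]
      norm_num [sO]
    · intro j
      rw [sphVec_castSucc, hwj j]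
      norm_num [sO]
  · have hr2 : 0 < 1 - r ^ 2 := lt_of_le_of_ne (by nlinarith) (Ne.symm hr1)
    set σ := Real.sqrt (1 - r ^ 2) with hσdef
    have hσ0 : 0 < σ := Real.sqrt_pos.mpr hr2
    have hσsq : σ ^ 2 = 1 - r ^ 2 := Real.sq_sqrt hr2.le
    set t : ℝ := Real.sqrt (2 * (1 - r ^ 2)) with htdef
    have htmem : t ∈ Set.Icc (0:ℝ) 1 := by
      constructor
      · exact Real.sqrt_nonneg _
      · rw [htdef]
        apply Real.sqrt_le_one.mpr
        nlinarith
    have hsOt : sO t = σ := by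
      rw [sO, htdef, Real.sqrt_mul (by norm_num : (0:ℝ) ≤ 2), hσdef,
        mul_div_cancel_left₀ _ (by positivity : Real.sqrt 2 ≠ 0)]
    have hσc : ((σ : ℝ) : ℂ) ≠ 0 := by
      simp only [ne_eq, Complex.ofReal_eq_zero]; exact hσ0.ne'
    have humem : ∑ j, ‖(fun j : Fin n => w.1 j.castSucc / (σ : ℂ)) j‖ ^ 2 = 1 := by
      have : ∀ j : Fin n, ‖w.1 j.castSucc / (σ : ℂ)‖ ^ 2
          = ‖w.1 j.castSucc‖ ^ 2 / σ ^ 2 := by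
        intro j
        rw [norm_div, div_pow, Complex.norm_real, Real.norm_eq_abs, abs_of_nonneg hσ0.le]
      rw [Finset.sum_congr rfl (fun j _ => this j), ← Finset.sum_div, hsum', hσsq,
        div_self hr1]
    set u : Sph n := ⟨fun j => w.1 j.castSucc / (σ : ℂ), humem⟩ with hudef
    refine ⟨(u, ⟨t, htmem⟩), ?_⟩
    apply Subtype.ext
    show wpMk (n + 1) χ (sphVec u _) = x
    rw [← hwx]
    congr 1
    apply Subtype.ext
    funext i
    refine Fin.lastCases ?_ ?_ i
    · rw [sphVec_last, hwlast]
      show ((Real.sqrt (1 - sO t ^ 2) : ℝ) : ℂ) = (r : ℂ)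
      rw [hsOt, hσsq]
      norm_num
      rw [Real.sqrt_sq hr0.le]
    · intro j
      rw [sphVec_castSucc]
      show ((sO t : ℝ) : ℂ) * (w.1 j.castSucc / (σ : ℂ)) = w.1 j.castSucc
      rw [hsOt, mul_comm, div_mul_cancel₀ _ hσc]

end Surj

end S16

/-- The condition `|z_n|² ≥ 1/2` is independent of the representative
`z ∈ S^{2n+1}` of a class in `P(χ)`, and the subspace `C = {[z]_χ : |z_n|² ≥ 1/2}` of
`P(χ)` is homeomorphic to the cone on the weighted lens space `L(χ_n; χ')`, i.e. to
`(L(χ_n;χ') × [0,1]) / (L(χ_n;χ') × {0})`. -/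
theorem statement16 (n : ℕ) (hn : 1 ≤ n) (χ : Fin (n + 1) → ℕ) (hχ : ∀ i, 1 ≤ χ i) :
    (∀ z w : Sph (n + 1), wpMk (n + 1) χ z = wpMk (n + 1) χ w →
      (1 / 2 ≤ ‖(z : Fin (n + 1) → ℂ) (Fin.last n)‖ ^ 2 ↔
        1 / 2 ≤ ‖(w : Fin (n + 1) → ℂ) (Fin.last n)‖ ^ 2)) ∧
    Nonempty (
      {x : WP (n + 1) χ // ∃ z : Sph (n + 1), wpMk (n + 1) χ z = x ∧
        1 / 2 ≤ ‖(z : Fin (n + 1) → ℂ) (Fin.last n)‖ ^ 2} ≃ₜ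
      Quot (fun a b : Lens n (χ (Fin.last n)) (fun i => χ i.castSucc) ×
          {s : ℝ // s ∈ Set.Icc (0 : ℝ) 1} =>
        (a.2 : ℝ) = 0 ∧ (b.2 : ℝ) = 0)) := by
  constructor
  · intro z w h
    have hinv : ∀ a b : Sph (n + 1), wRel (n + 1) χ a b →
        ‖a.1 (Fin.last n)‖ = ‖b.1 (Fin.last n)‖ := by
      rintro a b ⟨t, ht, hc⟩
      rw [hc (Fin.last n), norm_mul, norm_pow, ht, one_pow, one_mul]
    have heq : ‖z.1 (Fin.last n)‖ = ‖w.1 (Fin.last n)‖ :=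
      congrArg (Quot.lift (fun z : Sph (n + 1) => ‖z.1 (Fin.last n)‖) hinv) h
    rw [show ((z : Fin (n + 1) → ℂ) (Fin.last n)) = z.1 (Fin.last n) from rfl,
      show ((w : Fin (n + 1) → ℂ) (Fin.last n)) = w.1 (Fin.last n) from rfl, heq]
  · have hk : 0 < χ (Fin.last n) := hχ _
    haveI : CompactSpace S16.II := isCompact_iff_compactSpace.mp isCompact_Icc
    refine ⟨?_⟩
    have hbij : Function.Bijective (S16.Fmap n χ hk) := by
      constructor
      · intro a b hab
        induction a using Quot.ind with | _ pa =>
        induction b using Quot.ind with | _ pb =>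
        obtain ⟨qa, ta⟩ := pa
        obtain ⟨qb, tb⟩ := pb
        induction qa using Quot.ind with | _ u =>
        induction qb using Quot.ind with | _ v =>
        have h1 : wpMk (n + 1) χ (S16.sphVec u ta) = wpMk (n + 1) χ (S16.sphVec v tb) :=
          congrArg Subtype.val hab
        obtain ⟨hts, hcase⟩ := S16.sphVec_rel_eq n χ hk (S16.wpMk_eq_iff.mp h1)
        rcases hcase with ht0 | hlens
        · exact Quot.sound ⟨ht0, by rw [← hts]; exact ht0⟩
        · have hq : (Quot.mk _ u : Lens n (χ (Fin.last n)) (fun i => χ i.castSucc))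
              = Quot.mk _ v := Quot.sound hlens
          rw [hq, hts]
      · intro c
        obtain ⟨⟨u, t⟩, hp⟩ := S16.cMap_surj n χ hn hχ c
        exact ⟨Quot.mk _ (Quot.mk _ u, t), hp⟩
    exact (Continuous.homeoOfEquivCompactToT2
      (f := Equiv.ofBijective _ hbij) (S16.continuous_Fmap n χ hk)).symm
end
end

section
/- Let n ≥ 1 and let χ be a weakly divisive weight vector, i.e. χ_j divides χ_n for every 0 ≤ j < n. Let χ' = (χ_0, …, χ_{n-1}) and let f : L(χ_n; χ') → P(χ') be the natural projection, sending the class in L(χ_n;χ') of z ∈ S^{2n-1} to [z]_{χ'}. Then P(χ) is homeomorphic to the mapping cone of f, i.e. to the quotient of (L(χ_n;χ') × [0,1]) ⊔ P(χ') by the relations (x, 0) ∼ (x', 0) for all x, x' ∈ L(χ_n;χ') and (x, 1) ∼ f(x) for all x ∈ L(χ_n;χ'), with the quotient topology. (Equivalently: P(χ) is the Thom space of a complex line bundle over P(χ') whose unit sphere bundle projection is f.) -/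
noncomputable section

namespace S17

lemma pow_eq_one_real {x : ℝ} {k : ℕ} (hk : 0 < k) (hx : 0 ≤ x) (h : x ^ k = 1) : x = 1 := by
  rcases (pow_eq_one_iff_cases).mp h with h1 | h1 | h1
  · omega
  · exact h1
  · linarith [h1.1]

lemma conj_mul_self {t : ℂ} (ht : ‖t‖ = 1) : (starRingEnd ℂ) t * t = 1 := by
  rw [mul_comm, Complex.mul_conj, Complex.normSq_eq_norm_sq, ht]
  norm_num

variable {m : ℕ}

def relOf (χ : Fin m → ℕ) (G : Set ℂ) (z w : Sph m) : Prop :=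
  ∃ t : ℂ, t ∈ G ∧ ∀ i, (w : Fin m → ℂ) i = t ^ χ i * (z : Fin m → ℂ) i

structure GoodSet (G : Set ℂ) : Prop where
  one : (1:ℂ) ∈ G
  habs : ∀ t ∈ G, ‖t‖ = 1
  hmul : ∀ s ∈ G, ∀ t ∈ G, s * t ∈ G
  hconj : ∀ t ∈ G, (starRingEnd ℂ) t ∈ G
  hcpt : IsCompact G

example (m : ℕ) (χ : Fin m → ℕ) : wRel m χ = relOf χ {t : ℂ | ‖t‖ = 1} := rfl
example (m k : ℕ) (χ : Fin m → ℕ) : lensRel m k χ = relOf χ {ζ : ℂ | ζ ^ k = 1} := rfl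

instance : CompactSpace (Sph m) := by
  have h : IsCompact {z : Fin m → ℂ | ∑ i, ‖z i‖ ^ 2 = 1} := by
    apply Metric.isCompact_of_isClosed_isBounded
    · apply isClosed_eq _ continuous_const
      exact continuous_finset_sum _ fun i _ =>
        (continuous_norm.comp (continuous_apply i)).pow 2
    · apply Bornology.IsBounded.subset (Metric.isBounded_closedBall (x := (0 : Fin m → ℂ)) (r := 1))
      intro z hz
      simp only [Set.mem_setOf_eq] at hz
      rw [Metric.mem_closedBall, dist_zero_right]
      rw [pi_norm_le_iff_of_nonneg zero_le_one]
      intro i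
      have h1 : ‖z i‖ ^ 2 ≤ 1 := by
        rw [← hz]
        exact Finset.single_le_sum (f := fun j => ‖z j‖ ^ 2)
          (fun j _ => by positivity) (Finset.mem_univ i)
      have h2 := norm_nonneg (z i)
      nlinarith
  exact isCompact_iff_compactSpace.mp h

def act (χ : Fin m → ℕ) (t : ℂ) (ht : ‖t‖ = 1) (z : Sph m) : Sph m :=
  ⟨fun i => t ^ χ i * (z : Fin m → ℂ) i, by
    have h : ∀ i, ‖t ^ χ i * (z : Fin m → ℂ) i‖ ^ 2
        = ‖(z : Fin m → ℂ) i‖ ^ 2 := by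
      intro i; rw [norm_mul, norm_pow, ht, one_pow, one_mul]
    simp_rw [h]; exact z.2⟩

lemma continuous_act (χ : Fin m → ℕ) (t : ℂ) (ht : ‖t‖ = 1) :
    Continuous (act χ t ht) := by
  apply Continuous.subtype_mk
  exact continuous_pi fun i => continuous_const.mul ((continuous_apply i).comp continuous_subtype_val)

lemma continuous_act_pair (χ : Fin m → ℕ) {G : Set ℂ} (hG : GoodSet G) :
    Continuous (fun q : G × Sph m => act χ (q.1 : ℂ) (hG.habs _ q.1.2) q.2) := by
  apply Continuous.subtype_mk
  apply continuous_pi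
  intro i
  exact ((continuous_subtype_val.comp continuous_fst).pow _).mul
    ((continuous_apply i).comp (continuous_subtype_val.comp continuous_snd))

lemma relOf_equivalence (χ : Fin m → ℕ) {G : Set ℂ} (hG : GoodSet G) :
    Equivalence (relOf χ G) where
  refl z := ⟨1, hG.one, fun i => by rw [one_pow, one_mul]⟩
  symm := by
    rintro z w ⟨t, htG, h⟩
    refine ⟨(starRingEnd ℂ) t, hG.hconj t htG, fun i => ?_⟩
    rw [h i, ← mul_assoc, ← mul_pow, conj_mul_self (hG.habs t htG), one_pow, one_mul]
  trans := by
    rintro z w v ⟨t, htG, h⟩ ⟨u, huG, h'⟩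
    exact ⟨u * t, hG.hmul u huG t htG, fun i => by rw [h' i, h i, ← mul_assoc, ← mul_pow]⟩

lemma relOf_mk_eq {χ : Fin m → ℕ} {G : Set ℂ} (hG : GoodSet G) {z w : Sph m} :
    Quot.mk (relOf χ G) z = Quot.mk (relOf χ G) w ↔ relOf χ G z w :=
  Quot.eq.trans (relOf_equivalence χ hG).eqvGen_iff

lemma isOpenMap_mk (χ : Fin m → ℕ) {G : Set ℂ} (hG : GoodSet G) :
    IsOpenMap (Quot.mk (relOf χ G)) := by
  intro U hU
  rw [← isQuotientMap_quot_mk.isOpen_preimage]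
  have hset : Quot.mk (relOf χ G) ⁻¹' (Quot.mk (relOf χ G) '' U)
      = ⋃ t : G, (act χ (t : ℂ) (hG.habs _ t.2)) ⁻¹' U := by
    ext z
    simp only [Set.mem_preimage, Set.mem_image, Set.mem_iUnion]
    constructor
    · rintro ⟨u, hu, he⟩
      obtain ⟨t, htG, h⟩ := (relOf_mk_eq hG).mp he
      refine ⟨⟨(starRingEnd ℂ) t, hG.hconj t htG⟩, ?_⟩
      have heq : act χ ((starRingEnd ℂ) t) (hG.habs _ (hG.hconj t htG)) z = u := by
        apply Subtype.ext
        funext i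
        show (starRingEnd ℂ) t ^ χ i * (z : Fin m → ℂ) i = (u : Fin m → ℂ) i
        rw [h i, ← mul_assoc, ← mul_pow, conj_mul_self (hG.habs t htG), one_pow, one_mul]
      exact heq ▸ hu
    · rintro ⟨t, hmem⟩
      exact ⟨act χ (t : ℂ) (hG.habs _ t.2) z, hmem,
        (Quot.sound ⟨(t : ℂ), t.2, fun i => rfl⟩).symm⟩
  rw [hset]
  exact isOpen_iUnion fun t => hU.preimage (continuous_act χ _ _)

lemma isClosed_relOf (χ : Fin m → ℕ) {G : Set ℂ} (hG : GoodSet G) :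
    IsClosed {p : Sph m × Sph m | relOf χ G p.1 p.2} := by
  haveI : CompactSpace G := isCompact_iff_compactSpace.mp hG.hcpt
  have hr : {p : Sph m × Sph m | relOf χ G p.1 p.2}
      = Set.range (fun q : G × Sph m => (q.2, act χ (q.1 : ℂ) (hG.habs _ q.1.2) q.2)) := by
    ext ⟨z, w⟩
    simp only [Set.mem_setOf_eq, Set.mem_range]
    constructor
    · rintro ⟨t, htG, h⟩
      exact ⟨(⟨t, htG⟩, z), Prod.ext rfl (Subtype.ext (funext fun i => (h i).symm))⟩
    · rintro ⟨⟨t, z'⟩, h⟩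
      obtain ⟨h1, h2⟩ := Prod.ext_iff.mp h
      simp only at h1 h2
      subst h1
      exact ⟨(t : ℂ), t.2, fun i => by rw [← h2]; rfl⟩
  rw [hr]
  exact (isCompact_range ((continuous_snd).prodMk (continuous_act_pair χ hG))).isClosed

lemma t2_quot (χ : Fin m → ℕ) {G : Set ℂ} (hG : GoodSet G) :
    T2Space (Quot (relOf χ G)) := by
  rw [t2_iff_isClosed_diagonal]
  have hsurj : Function.Surjective
      (Prod.map (Quot.mk (relOf χ G)) (Quot.mk (relOf χ G))) :=
    Function.Surjective.prodMap (fun q => Quot.exists_rep q) (fun q => Quot.exists_rep q)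
  have hqm := ((isOpenMap_mk χ hG).prodMap (isOpenMap_mk χ hG)).isQuotientMap
    (continuous_quot_mk.prodMap continuous_quot_mk) hsurj
  rw [← hqm.isClosed_preimage]
  have hpre : Prod.map (Quot.mk (relOf χ G)) (Quot.mk (relOf χ G)) ⁻¹' Set.diagonal _
      = {p : Sph m × Sph m | relOf χ G p.1 p.2} := by
    ext ⟨z, w⟩
    simp only [Set.mem_preimage, Set.mem_setOf_eq, Prod.map, Set.mem_diagonal_iff]
    exact relOf_mk_eq hG
  rw [hpre]
  exact isClosed_relOf χ hG

lemma goodSet_circle : GoodSet {t : ℂ | ‖t‖ = 1} where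
  one := by simp [Set.mem_setOf_eq]
  habs t ht := ht
  hmul s hs t ht := by simp only [Set.mem_setOf_eq] at *; rw [norm_mul, hs, ht, one_mul]
  hconj t ht := by simp only [Set.mem_setOf_eq] at *; rw [Complex.norm_conj]; exact ht
  hcpt := by
    have h : {t : ℂ | ‖t‖ = 1} = Metric.sphere (0:ℂ) 1 := by
      ext t; simp [Metric.mem_sphere, Complex.dist_eq]
    rw [h]; exact isCompact_sphere 0 1

lemma goodSet_mu (k : ℕ) (hk : 0 < k) : GoodSet {ζ : ℂ | ζ ^ k = 1} where
  one := by simp [Set.mem_setOf_eq]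
  habs t ht := pow_eq_one_real hk (norm_nonneg _) (by rw [← norm_pow, ht, norm_one])
  hmul s hs t ht := by simp only [Set.mem_setOf_eq] at *; rw [mul_pow, hs, ht, one_mul]
  hconj t ht := by simp only [Set.mem_setOf_eq] at *; rw [← map_pow, ht, map_one]
  hcpt := by
    apply Metric.isCompact_of_isClosed_isBounded
    · exact isClosed_eq (continuous_pow k) continuous_const
    · apply Bornology.IsBounded.subset (Metric.isBounded_closedBall (x := (0:ℂ)) (r := 1))
      intro t ht
      simp only [Set.mem_setOf_eq] at ht
      rw [Metric.mem_closedBall, dist_zero_right,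
        pow_eq_one_real hk (norm_nonneg _) (by rw [← norm_pow, ht, norm_one])]


variable {n : ℕ}

abbrev unitI : Type := {s : ℝ // s ∈ Set.Icc (0 : ℝ) 1}

def padF (z : Fin n → ℂ) (s : ℝ) : Fin (n + 1) → ℂ :=
  fun i => if h : (i : ℕ) < n then (Real.sqrt s : ℂ) * z ⟨i, h⟩ else (Real.sqrt (1 - s) : ℂ)

lemma Fin.eq_last_of_not_lt {i : Fin (n + 1)} (h : ¬ (i : ℕ) < n) : i = Fin.last n :=
  Fin.ext (Nat.le_antisymm (Nat.lt_succ_iff.mp i.isLt) (not_lt.mp h))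

lemma padF_castSucc (z : Fin n → ℂ) (s : ℝ) (j : Fin n) :
    padF z s j.castSucc = (Real.sqrt s : ℂ) * z j := by
  have h : ((j.castSucc : Fin (n + 1)) : ℕ) < n := j.isLt
  rw [padF, dif_pos h]
  congr 1

lemma padF_lt (z : Fin n → ℂ) (s : ℝ) {i : Fin (n + 1)} (h : (i : ℕ) < n) :
    padF z s i = (Real.sqrt s : ℂ) * z ⟨i, h⟩ := dif_pos h

lemma padF_last (z : Fin n → ℂ) (s : ℝ) :
    padF z s (Fin.last n) = (Real.sqrt (1 - s) : ℂ) := dif_neg (by simp)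

lemma pad_mem (z : Sph n) {s : ℝ} (h0 : 0 ≤ s) (h1 : s ≤ 1) :
    ∑ i, ‖padF (z : Fin n → ℂ) s i‖ ^ 2 = 1 := by
  rw [Fin.sum_univ_castSucc]
  have hj : ∀ j : Fin n, ‖padF (z : Fin n → ℂ) s j.castSucc‖ ^ 2
      = s * ‖(z : Fin n → ℂ) j‖ ^ 2 := by
    intro j
    rw [padF_castSucc, norm_mul, Complex.norm_real, Real.norm_eq_abs, abs_of_nonneg (Real.sqrt_nonneg s),
      mul_pow, Real.sq_sqrt h0]
  simp_rw [hj]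
  rw [← Finset.mul_sum, z.2, mul_one, padF_last, Complex.norm_real, Real.norm_eq_abs,
    abs_of_nonneg (Real.sqrt_nonneg _), Real.sq_sqrt (by linarith)]
  ring

def pad (z : Sph n) (s : ℝ) (h0 : 0 ≤ s) (h1 : s ≤ 1) : Sph (n + 1) :=
  ⟨padF (z : Fin n → ℂ) s, pad_mem z h0 h1⟩

lemma continuous_pad :
    Continuous (fun p : Sph n × unitI => pad p.1 (p.2 : ℝ) p.2.2.1 p.2.2.2) := by
  apply Continuous.subtype_mk
  apply continuous_pi
  intro i
  by_cases h : (i : ℕ) < n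
  · simp only [padF, dif_pos h]
    exact (Complex.continuous_ofReal.comp (Real.continuous_sqrt.comp
        (continuous_subtype_val.comp continuous_snd))).mul
      ((continuous_apply _).comp (continuous_subtype_val.comp continuous_fst))
  · simp only [padF, dif_neg h]
    exact Complex.continuous_ofReal.comp (Real.continuous_sqrt.comp
      ((continuous_const.sub continuous_subtype_val).comp continuous_snd))




section Main

variable (n : ℕ) (χ : Fin (n + 1) → ℕ)

lemma lens_pad_sound (hχ : ∀ i, 1 ≤ χ i) (s : unitI) {z w : Sph n}
    (h : lensRel n (χ (Fin.last n)) (fun i => χ i.castSucc) z w) :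
    wpMk (n + 1) χ (pad z (s : ℝ) s.2.1 s.2.2) = wpMk (n + 1) χ (pad w (s : ℝ) s.2.1 s.2.2) := by
  obtain ⟨ζ, hζk, hco₀⟩ := h
  have hco : ∀ j : Fin n, (w : Fin n → ℂ) j = ζ ^ χ j.castSucc * (z : Fin n → ℂ) j := hco₀
  apply Quot.sound
  refine ⟨ζ, (goodSet_mu _ (hχ (Fin.last n))).habs ζ hζk, fun i => ?_⟩
  show padF (w : Fin n → ℂ) (s : ℝ) i = ζ ^ χ i * padF (z : Fin n → ℂ) (s : ℝ) i
  by_cases hlt : (i : ℕ) < n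
  · rw [padF_lt _ _ hlt, padF_lt _ _ hlt, hco ⟨(i : ℕ), hlt⟩]
    have hi : ((⟨(i : ℕ), hlt⟩ : Fin n)).castSucc = i := Fin.ext rfl
    rw [hi]; ring
  · rw [Fin.eq_last_of_not_lt hlt, padF_last, padF_last, hζk, one_mul]

lemma w_pad_one_sound {z w : Sph n} (h : wRel n (fun i => χ i.castSucc) z w) :
    wpMk (n + 1) χ (pad z 1 zero_le_one le_rfl) = wpMk (n + 1) χ (pad w 1 zero_le_one le_rfl) := by
  obtain ⟨t, ht, hco₀⟩ := h
  have hco : ∀ j : Fin n, (w : Fin n → ℂ) j = t ^ χ j.castSucc * (z : Fin n → ℂ) j := hco₀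
  apply Quot.sound
  refine ⟨t, ht, fun i => ?_⟩
  show padF (w : Fin n → ℂ) 1 i = t ^ χ i * padF (z : Fin n → ℂ) 1 i
  by_cases hlt : (i : ℕ) < n
  · rw [padF_lt _ _ hlt, padF_lt _ _ hlt, hco ⟨(i : ℕ), hlt⟩]
    have hi : ((⟨(i : ℕ), hlt⟩ : Fin n)).castSucc = i := Fin.ext rfl
    rw [hi]; ring
  · rw [Fin.eq_last_of_not_lt hlt, padF_last, padF_last]
    norm_num

def gfun (hχ : ∀ i, 1 ≤ χ i)
    (p : Lens n (χ (Fin.last n)) (fun i => χ i.castSucc) × unitI) : WP (n + 1) χ :=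
  Quot.lift (fun z => wpMk (n + 1) χ (pad z (p.2 : ℝ) p.2.2.1 p.2.2.2))
    (fun _ _ h => lens_pad_sound n χ hχ p.2 h) p.1

def hfun : WP n (fun i => χ i.castSucc) → WP (n + 1) χ :=
  Quot.lift (fun z => wpMk (n + 1) χ (pad z 1 zero_le_one le_rfl))
    (fun _ _ h => w_pad_one_sound n χ h)

lemma s_eq {z z' : Sph n} {s s' : ℝ} (h0 : 0 ≤ s) (h0' : 0 ≤ s') {t : ℂ}
    (ht : ‖t‖ = 1) (χc : Fin n → ℕ)
    (hcast : ∀ j : Fin n, ((Real.sqrt s' : ℝ) : ℂ) * (z' : Fin n → ℂ) j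
      = t ^ χc j * (((Real.sqrt s : ℝ) : ℂ) * (z : Fin n → ℂ) j)) :
    s' = s := by
  have key : ∀ j, s' * ‖(z' : Fin n → ℂ) j‖ ^ 2
      = s * ‖(z : Fin n → ℂ) j‖ ^ 2 := by
    intro j
    have h1 := congrArg (‖·‖) (hcast j)
    rw [norm_mul, norm_mul, norm_mul, norm_pow, ht, one_pow, one_mul, Complex.norm_real, Real.norm_eq_abs,
      Complex.norm_real, Real.norm_eq_abs, abs_of_nonneg (Real.sqrt_nonneg _),
      abs_of_nonneg (Real.sqrt_nonneg _)] at h1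
    have h2 := congrArg (· ^ 2) h1
    simp only [mul_pow] at h2
    rwa [Real.sq_sqrt h0, Real.sq_sqrt h0'] at h2
  calc s' = s' * ∑ j, ‖(z' : Fin n → ℂ) j‖ ^ 2 := by rw [z'.2, mul_one]
    _ = ∑ j, s' * ‖(z' : Fin n → ℂ) j‖ ^ 2 := Finset.mul_sum _ _ _
    _ = ∑ j, s * ‖(z : Fin n → ℂ) j‖ ^ 2 := Finset.sum_congr rfl fun j _ => key j
    _ = s * ∑ j, ‖(z : Fin n → ℂ) j‖ ^ 2 := (Finset.mul_sum _ _ _).symm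
    _ = s := by rw [z.2, mul_one]

def basept (hn : 1 ≤ n) : Sph n :=
  ⟨fun j => if j = ⟨0, hn⟩ then 1 else 0, by
    have h : ∀ j : Fin n, ‖(if j = ⟨0, hn⟩ then (1 : ℂ) else 0)‖ ^ 2
        = if j = ⟨0, hn⟩ then (1 : ℝ) else 0 := by
      intro j; split_ifs <;> simp
    simp_rw [h]
    simp⟩

def normVec (t : ℂ) (u : Sph (n + 1)) (sv : ℝ) : Fin n → ℂ :=
  fun j => (starRingEnd ℂ) t ^ χ j.castSucc * (u : Fin (n + 1) → ℂ) j.castSucc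
    / ((Real.sqrt sv : ℝ) : ℂ)

lemma normVec_apply (t : ℂ) (u : Sph (n + 1)) (sv : ℝ) (j : Fin n) :
    normVec n χ t u sv j = (starRingEnd ℂ) t ^ χ j.castSucc
      * (u : Fin (n + 1) → ℂ) j.castSucc / ((Real.sqrt sv : ℝ) : ℂ) := rfl

end Main

end S17

/-- For a weakly divisive weight vector `χ` (each `χ_j` with `j < n`
divides `χ_n`), `P(χ)` is homeomorphic to the mapping cone of the natural projection
`f : L(χ_n;χ') → P(χ')`, i.e. to the quotient of `(L(χ_n;χ') × [0,1]) ⊔ P(χ')` by the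
relations `(x,0) ∼ (x',0)` and `(x,1) ∼ f(x)`. -/
theorem statement17 (n : ℕ) (hn : 1 ≤ n) (χ : Fin (n + 1) → ℕ) (hχ : ∀ i, 1 ≤ χ i)
    (hdiv : ∀ j : Fin n, χ j.castSucc ∣ χ (Fin.last n))
    (f : Lens n (χ (Fin.last n)) (fun i => χ i.castSucc) → WP n (fun i => χ i.castSucc))
    (hfc : Continuous f)
    (hf : ∀ z : Sph n,
      f (Quot.mk (lensRel n (χ (Fin.last n)) (fun i => χ i.castSucc)) z) =
        wpMk n (fun i => χ i.castSucc) z) :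
    Nonempty (
      Quot (fun a b :
          (Lens n (χ (Fin.last n)) (fun i => χ i.castSucc) ×
            {s : ℝ // s ∈ Set.Icc (0 : ℝ) 1}) ⊕ WP n (fun i => χ i.castSucc) =>
        (∃ x x' : Lens n (χ (Fin.last n)) (fun i => χ i.castSucc),
          ∃ s s' : {s : ℝ // s ∈ Set.Icc (0 : ℝ) 1},
            a = Sum.inl (x, s) ∧ b = Sum.inl (x', s') ∧ (s : ℝ) = 0 ∧ (s' : ℝ) = 0) ∨
        (∃ (x : Lens n (χ (Fin.last n)) (fun i => χ i.castSucc))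
            (s : {s : ℝ // s ∈ Set.Icc (0 : ℝ) 1}),
          a = Sum.inl (x, s) ∧ (s : ℝ) = 1 ∧ b = Sum.inr (f x))) ≃ₜ
      WP (n + 1) χ) := by
  have hk : 0 < χ (Fin.last n) := hχ _
  have hmkW : ∀ z w : Sph (n + 1), wpMk (n + 1) χ z = wpMk (n + 1) χ w ↔ wRel (n + 1) χ z w :=
    fun z w => S17.relOf_mk_eq S17.goodSet_circle
  haveI hT2 : T2Space (WP (n + 1) χ) := S17.t2_quot χ S17.goodSet_circle
  haveI hT2L : T2Space (Lens n (χ (Fin.last n)) (fun i => χ i.castSucc)) :=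
    S17.t2_quot (fun i => χ i.castSucc) (S17.goodSet_mu _ hk)
  refine ⟨Continuous.homeoOfEquivCompactToT2 (f := Equiv.ofBijective
    (Quot.lift (Sum.elim (S17.gfun n χ hχ) (S17.hfun n χ)) ?_) ⟨?_, ?_⟩) ?_⟩
  -- compatibility
  · rintro a b (⟨x, x', s, s', rfl, rfl, hs, hs'⟩ | ⟨x, s, rfl, hs, rfl⟩)
    · obtain ⟨z, rfl⟩ := Quot.exists_rep x
      obtain ⟨z', rfl⟩ := Quot.exists_rep x'
      show wpMk (n + 1) χ (S17.pad z (s : ℝ) s.2.1 s.2.2)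
        = wpMk (n + 1) χ (S17.pad z' (s' : ℝ) s'.2.1 s'.2.2)
      refine congrArg (wpMk (n + 1) χ) (Subtype.ext (funext fun i => ?_))
      show S17.padF (z : Fin n → ℂ) (s : ℝ) i = S17.padF (z' : Fin n → ℂ) (s' : ℝ) i
      rw [hs, hs']
      by_cases hlt : (i : ℕ) < n
      · rw [S17.padF_lt _ _ hlt, S17.padF_lt _ _ hlt]
        simp
      · rw [S17.Fin.eq_last_of_not_lt hlt, S17.padF_last, S17.padF_last]
    · obtain ⟨z, rfl⟩ := Quot.exists_rep x
      rw [hf z]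
      show wpMk (n + 1) χ (S17.pad z (s : ℝ) s.2.1 s.2.2)
        = wpMk (n + 1) χ (S17.pad z 1 zero_le_one le_rfl)
      refine congrArg (wpMk (n + 1) χ) (Subtype.ext (funext fun i => ?_))
      show S17.padF (z : Fin n → ℂ) (s : ℝ) i = S17.padF (z : Fin n → ℂ) 1 i
      rw [hs]
  -- injectivity
  · intro a b hab
    obtain ⟨p, rfl⟩ := Quot.exists_rep a
    obtain ⟨q, rfl⟩ := Quot.exists_rep b
    rcases p with ⟨x, s⟩ | y <;> rcases q with ⟨x', s'⟩ | y'
    · obtain ⟨z, rfl⟩ := Quot.exists_rep x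
      obtain ⟨z', rfl⟩ := Quot.exists_rep x'
      replace hab : wpMk (n + 1) χ (S17.pad z (s : ℝ) s.2.1 s.2.2)
          = wpMk (n + 1) χ (S17.pad z' (s' : ℝ) s'.2.1 s'.2.2) := hab
      obtain ⟨t, ht, hco₀⟩ := (hmkW _ _).mp hab
      have hco : ∀ i, S17.padF (z' : Fin n → ℂ) (s' : ℝ) i
          = t ^ χ i * S17.padF (z : Fin n → ℂ) (s : ℝ) i := hco₀
      have hlast : ((Real.sqrt (1 - (s' : ℝ)) : ℝ) : ℂ)
          = t ^ χ (Fin.last n) * ((Real.sqrt (1 - (s : ℝ)) : ℝ) : ℂ) := by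
        have h := hco (Fin.last n)
        rwa [S17.padF_last, S17.padF_last] at h
      have hcast : ∀ j : Fin n, ((Real.sqrt (s' : ℝ) : ℝ) : ℂ) * (z' : Fin n → ℂ) j
          = t ^ χ j.castSucc * (((Real.sqrt (s : ℝ) : ℝ) : ℂ) * (z : Fin n → ℂ) j) := by
        intro j
        have h := hco j.castSucc
        rwa [S17.padF_castSucc, S17.padF_castSucc] at h
      have hss : (s' : ℝ) = (s : ℝ) := S17.s_eq (n := n) s.2.1 s'.2.1 ht _ hcast
      by_cases hs0 : (s : ℝ) = 0
      · exact Quot.sound (Or.inl ⟨Quot.mk _ z, Quot.mk _ z', s, s', rfl, rfl, hs0,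
          by rw [hss, hs0]⟩)
      by_cases hs1 : (s : ℝ) = 1
      · have hzz' : wRel n (fun i => χ i.castSucc) z z' := by
          refine ⟨t, ht, fun j => ?_⟩
          have h := hcast j
          rw [hss, hs1] at h
          simpa [Real.sqrt_one] using h
        trans Quot.mk _ (Sum.inr (f (Quot.mk _ z)))
        · exact Quot.sound (Or.inr ⟨Quot.mk _ z, s, rfl, hs1, rfl⟩)
        trans Quot.mk _ (Sum.inr (f (Quot.mk _ z')))
        · have hffz : f (Quot.mk _ z) = f (Quot.mk _ z') := by
            rw [hf z, hf z']
            exact Quot.sound hzz'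
          rw [hffz]
        · symm
          exact Quot.sound (Or.inr ⟨Quot.mk _ z', s', rfl, by rw [hss, hs1], rfl⟩)
      · have hlt1 : (s : ℝ) < 1 := lt_of_le_of_ne s.2.2 hs1
        have hpos : 0 < (s : ℝ) := lt_of_le_of_ne s.2.1 (Ne.symm hs0)
        have hsq1 : ((Real.sqrt (1 - (s : ℝ)) : ℝ) : ℂ) ≠ 0 :=
          Complex.ofReal_ne_zero.mpr (by rw [Real.sqrt_ne_zero']; linarith)
        have hsqs : ((Real.sqrt (s : ℝ) : ℝ) : ℂ) ≠ 0 :=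
          Complex.ofReal_ne_zero.mpr (by rw [Real.sqrt_ne_zero']; linarith)
        have htk : t ^ χ (Fin.last n) = 1 := by
          rw [hss] at hlast
          apply mul_right_cancel₀ hsq1
          rw [one_mul, ← hlast]
        have hzz' : lensRel n (χ (Fin.last n)) (fun i => χ i.castSucc) z z' := by
          refine ⟨t, htk, fun j => ?_⟩
          show (z' : Fin n → ℂ) j = t ^ χ j.castSucc * (z : Fin n → ℂ) j
          apply mul_left_cancel₀ hsqs
          have h := hcast j
          rw [hss] at h
          rw [h]; ring
        have hxx : Quot.mk (lensRel n (χ (Fin.last n)) (fun i => χ i.castSucc)) z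
            = Quot.mk _ z' := Quot.sound hzz'
        have hsseq : s = s' := Subtype.ext hss.symm
        rw [hxx, hsseq]
    · obtain ⟨z, rfl⟩ := Quot.exists_rep x
      obtain ⟨z', rfl⟩ := Quot.exists_rep y'
      replace hab : wpMk (n + 1) χ (S17.pad z (s : ℝ) s.2.1 s.2.2)
          = wpMk (n + 1) χ (S17.pad z' 1 zero_le_one le_rfl) := hab
      obtain ⟨t, ht, hco₀⟩ := (hmkW _ _).mp hab
      have hco : ∀ i, S17.padF (z' : Fin n → ℂ) 1 i
          = t ^ χ i * S17.padF (z : Fin n → ℂ) (s : ℝ) i := hco₀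
      have htne : t ^ χ (Fin.last n) ≠ 0 := by
        apply pow_ne_zero
        intro h0
        rw [h0] at ht; simp at ht
      have hs1 : (s : ℝ) = 1 := by
        have h := hco (Fin.last n)
        rw [S17.padF_last, S17.padF_last, show (1 : ℝ) - 1 = 0 by norm_num, Real.sqrt_zero,
          Complex.ofReal_zero] at h
        rcases mul_eq_zero.mp h.symm with h1 | h1
        · exact absurd h1 htne
        · have h2 : Real.sqrt (1 - (s : ℝ)) = 0 := by exact_mod_cast h1
          have h3 := Real.sqrt_eq_zero'.mp h2
          have h4 := s.2.2; linarith
      have hzz' : wRel n (fun i => χ i.castSucc) z z' := by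
        refine ⟨t, ht, fun j => ?_⟩
        have h := hco j.castSucc
        rw [S17.padF_castSucc, S17.padF_castSucc, hs1] at h
        simpa [Real.sqrt_one] using h
      trans Quot.mk _ (Sum.inr (f (Quot.mk _ z)))
      · exact Quot.sound (Or.inr ⟨Quot.mk _ z, s, rfl, hs1, rfl⟩)
      · rw [hf z]
        have hzz'' : wpMk n (fun i => χ i.castSucc) z = Quot.mk _ z' := Quot.sound hzz'
        rw [hzz'']
    · obtain ⟨z, rfl⟩ := Quot.exists_rep y
      obtain ⟨z', rfl⟩ := Quot.exists_rep x'
      replace hab : wpMk (n + 1) χ (S17.pad z 1 zero_le_one le_rfl)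
          = wpMk (n + 1) χ (S17.pad z' (s' : ℝ) s'.2.1 s'.2.2) := hab
      obtain ⟨t, ht, hco₀⟩ := (hmkW _ _).mp hab
      have hco : ∀ i, S17.padF (z' : Fin n → ℂ) (s' : ℝ) i
          = t ^ χ i * S17.padF (z : Fin n → ℂ) 1 i := hco₀
      have hs1 : (s' : ℝ) = 1 := by
        have h := hco (Fin.last n)
        rw [S17.padF_last, S17.padF_last, show (1 : ℝ) - 1 = 0 by norm_num, Real.sqrt_zero,
          Complex.ofReal_zero, mul_zero] at h
        have h2 : Real.sqrt (1 - (s' : ℝ)) = 0 := by exact_mod_cast h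
        have h3 := Real.sqrt_eq_zero'.mp h2
        have h4 := s'.2.2; linarith
      have hzz' : wRel n (fun i => χ i.castSucc) z z' := by
        refine ⟨t, ht, fun j => ?_⟩
        have h := hco j.castSucc
        rw [S17.padF_castSucc, S17.padF_castSucc, hs1] at h
        simpa [Real.sqrt_one] using h
      symm
      trans Quot.mk _ (Sum.inr (f (Quot.mk _ z')))
      · exact Quot.sound (Or.inr ⟨Quot.mk _ z', s', rfl, hs1, rfl⟩)
      · rw [hf z']
        have hzz'' : wpMk n (fun i => χ i.castSucc) z' = Quot.mk _ z :=
          (Quot.sound hzz').symm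
        rw [hzz'']
    · obtain ⟨z, rfl⟩ := Quot.exists_rep y
      obtain ⟨z', rfl⟩ := Quot.exists_rep y'
      replace hab : wpMk (n + 1) χ (S17.pad z 1 zero_le_one le_rfl)
          = wpMk (n + 1) χ (S17.pad z' 1 zero_le_one le_rfl) := hab
      obtain ⟨t, ht, hco₀⟩ := (hmkW _ _).mp hab
      have hco : ∀ i, S17.padF (z' : Fin n → ℂ) 1 i
          = t ^ χ i * S17.padF (z : Fin n → ℂ) 1 i := hco₀
      have hzz' : wRel n (fun i => χ i.castSucc) z z' := by
        refine ⟨t, ht, fun j => ?_⟩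
        have h := hco j.castSucc
        rw [S17.padF_castSucc, S17.padF_castSucc] at h
        simpa [Real.sqrt_one] using h
      have hyy : Quot.mk (wRel n (fun i => χ i.castSucc)) z = Quot.mk _ z' :=
        Quot.sound hzz'
      rw [hyy]
  -- surjectivity
  · intro w
    obtain ⟨u, rfl⟩ := Quot.exists_rep w
    set sval := ∑ j : Fin n, ‖(u : Fin (n + 1) → ℂ) j.castSucc‖ ^ 2 with hsval
    set c := (u : Fin (n + 1) → ℂ) (Fin.last n) with hc
    have hsum : sval + ‖c‖ ^ 2 = 1 := by
      have h := u.2; rwa [Fin.sum_univ_castSucc] at h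
    have hs0 : 0 ≤ sval := Finset.sum_nonneg fun j _ => by positivity
    have habsc : 0 ≤ ‖c‖ := norm_nonneg _
    have hs1 : sval ≤ 1 := by nlinarith
    by_cases hsz : sval = 0
    · have habs1 : ‖c‖ = 1 := by nlinarith
      obtain ⟨t, htc⟩ := IsAlgClosed.exists_pow_nat_eq c hk
      have habst : ‖t‖ = 1 :=
        S17.pow_eq_one_real hk (norm_nonneg _) (by rw [← norm_pow, htc, habs1])
      refine ⟨Quot.mk _ (Sum.inl (Quot.mk _ (S17.basept n hn),
        ⟨0, le_rfl, zero_le_one⟩)), ?_⟩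
      refine (hmkW _ _).mpr ⟨t, habst, fun i => ?_⟩
      show (u : Fin (n + 1) → ℂ) i
        = t ^ χ i * S17.padF ((S17.basept n hn : Sph n) : Fin n → ℂ) (0 : ℝ) i
      by_cases hlt : (i : ℕ) < n
      · rw [S17.padF_lt _ _ hlt, Real.sqrt_zero, Complex.ofReal_zero, zero_mul, mul_zero]
        have hsum0 : ∑ j : Fin n, ‖(u : Fin (n + 1) → ℂ) j.castSucc‖ ^ 2 = 0 := by
          rw [← hsval]; exact hsz
        have hzero : ‖(u : Fin (n + 1) → ℂ)
            ((⟨(i : ℕ), hlt⟩ : Fin n)).castSucc‖ ^ 2 = 0 :=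
          (Finset.sum_eq_zero_iff_of_nonneg (fun j _ => by positivity)).mp hsum0
            ⟨(i : ℕ), hlt⟩ (Finset.mem_univ _)
        have hi : ((⟨(i : ℕ), hlt⟩ : Fin n)).castSucc = i := Fin.ext rfl
        rw [hi] at hzero
        have hz2 := (pow_eq_zero_iff two_ne_zero).mp hzero
        exact norm_eq_zero.mp hz2
      · rw [S17.Fin.eq_last_of_not_lt hlt, S17.padF_last]
        rw [show (1 : ℝ) - 0 = 1 by norm_num, Real.sqrt_one, Complex.ofReal_one, mul_one, htc]
    · have hspos : 0 < sval := lt_of_le_of_ne hs0 (Ne.symm hsz)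
      have hsqne : ((Real.sqrt sval : ℝ) : ℂ) ≠ 0 :=
        Complex.ofReal_ne_zero.mpr (by rw [Real.sqrt_ne_zero']; linarith)
      obtain ⟨t, htc⟩ := IsAlgClosed.exists_pow_nat_eq
        (if c = 0 then 1 else c / (‖c‖ : ℂ)) hk
      have habst : ‖t‖ = 1 := by
        apply S17.pow_eq_one_real hk (norm_nonneg _)
        rw [← norm_pow, htc]
        split_ifs with h
        · exact norm_one
        · rw [norm_div, Complex.norm_real, Real.norm_eq_abs, abs_of_nonneg habsc,
            div_self (norm_ne_zero_iff.mpr h)]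
      have hsqrt1s : Real.sqrt (1 - sval) = ‖c‖ := by
        rw [show 1 - sval = ‖c‖ ^ 2 by linarith, Real.sqrt_sq habsc]
      have hlastc : t ^ χ (Fin.last n) * ((Real.sqrt (1 - sval) : ℝ) : ℂ) = c := by
        rw [htc, hsqrt1s]
        split_ifs with h
        · simp [h]
        · rw [div_mul_cancel₀ _ (Complex.ofReal_ne_zero.mpr
            (fun h0 => (norm_ne_zero_iff.mpr h) h0))]
      have habsv : ∀ j, ‖S17.normVec n χ t u sval j‖ ^ 2
          = ‖(u : Fin (n + 1) → ℂ) j.castSucc‖ ^ 2 / sval := by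
        intro j
        show ‖(starRingEnd ℂ) t ^ χ j.castSucc
          * (u : Fin (n + 1) → ℂ) j.castSucc / ((Real.sqrt sval : ℝ) : ℂ)‖ ^ 2 = _
        rw [norm_div, norm_mul, norm_pow, Complex.norm_conj, habst, one_pow, one_mul,
          Complex.norm_real, Real.norm_eq_abs, abs_of_nonneg (Real.sqrt_nonneg _), div_pow,
          Real.sq_sqrt hs0]
      have hvmem : ∑ j, ‖S17.normVec n χ t u sval j‖ ^ 2 = 1 := by
        simp_rw [habsv]
        rw [← Finset.sum_div, ← hsval, div_self hsz]
      refine ⟨Quot.mk _ (Sum.inl (Quot.mk _ (⟨S17.normVec n χ t u sval, hvmem⟩ : Sph n),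
        ⟨sval, hs0, hs1⟩)), ?_⟩
      refine (hmkW _ _).mpr ⟨t, habst, fun i => ?_⟩
      show (u : Fin (n + 1) → ℂ) i = t ^ χ i * S17.padF (S17.normVec n χ t u sval) sval i
      by_cases hlt : (i : ℕ) < n
      · rw [S17.padF_lt _ _ hlt]
        have hi : ((⟨(i : ℕ), hlt⟩ : Fin n)).castSucc = i := Fin.ext rfl
        rw [S17.normVec_apply n χ t u sval ⟨(i : ℕ), hlt⟩, hi]
        calc (u : Fin (n + 1) → ℂ) i
            = (t * (starRingEnd ℂ) t) ^ χ i * (u : Fin (n + 1) → ℂ) i := by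
              rw [mul_comm t, S17.conj_mul_self habst, one_pow, one_mul]
          _ = _ := by
              rw [mul_pow]
              field_simp
      · rw [S17.Fin.eq_last_of_not_lt hlt, S17.padF_last]
        exact (hlastc.trans hc.symm).symm
  -- continuity
  · show Continuous (Quot.lift (Sum.elim (S17.gfun n χ hχ) (S17.hfun n χ)) _)
    apply continuous_quot_lift
    apply Continuous.sumElim
    · have hq : Topology.IsQuotientMap (Prod.map
          (Quot.mk (lensRel n (χ (Fin.last n)) (fun i => χ i.castSucc)))
          (id : S17.unitI → S17.unitI)) := by
        apply IsClosedMap.isQuotientMap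
        · exact Continuous.isClosedMap (continuous_quot_mk.prodMap continuous_id)
        · exact continuous_quot_mk.prodMap continuous_id
        · exact Function.Surjective.prodMap (fun q => Quot.exists_rep q)
            Function.surjective_id
      have hgq : S17.gfun n χ hχ ∘ Prod.map
            (Quot.mk (lensRel n (χ (Fin.last n)) (fun i => χ i.castSucc)))
            (id : S17.unitI → S17.unitI)
          = fun p : Sph n × S17.unitI =>
            wpMk (n + 1) χ (S17.pad p.1 (p.2 : ℝ) p.2.2.1 p.2.2.2) :=
        funext fun p => rfl
      rw [hq.continuous_iff, hgq]
      exact continuous_quot_mk.comp S17.continuous_pad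
    · apply continuous_quot_lift
      have hp1 : Continuous (fun z : Sph n => S17.pad z 1 zero_le_one le_rfl) := by
        have h := S17.continuous_pad.comp (Continuous.prodMk (continuous_id (X := Sph n))
          (continuous_const (y := (⟨1, zero_le_one, le_rfl⟩ : S17.unitI))))
        exact h
      exact continuous_quot_mk.comp hp1
end
end

section
/- Let χ be a divisive weight vector, i.e. χ_{j-1} divides χ_j for every 1 ≤ j ≤ n. Then for every 0 ≤ j ≤ n, the subspace {[z]_χ ∈ P(χ) : z_j ≠ 0 and z_i = 0 for all i < j} of P(χ) (these conditions are independent of the chosen representative z ∈ S^{2n+1}) is homeomorphic to ℂ^{n-j}. In particular these n+1 pairwise disjoint subspaces cover P(χ), giving a cell decomposition of P(χ) with exactly one cell in each even dimension 0, 2, …, 2n. -/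
noncomputable section

namespace St18

open Topology

lemma wRel_equiv (m : ℕ) (χ : Fin m → ℕ) : Equivalence (wRel m χ) := by
  refine ⟨fun z => ⟨1, by simp, by simp⟩, ?_, ?_⟩
  · rintro z w ⟨t, ht, h⟩
    have ht0 : t ≠ 0 := by
      intro h0; rw [h0] at ht; simp at ht
    refine ⟨t⁻¹, by simp [ht], fun i => ?_⟩
    rw [h i, ← mul_assoc, ← mul_pow, inv_mul_cancel₀ ht0, one_pow, one_mul]
  · rintro z w u ⟨t, ht, h⟩ ⟨s, hs, h'⟩
    refine ⟨s * t, by simp [map_mul, ht, hs], fun i => ?_⟩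
    rw [h' i, h i, mul_pow]; ring

lemma mk_eq_iff (m : ℕ) (χ : Fin m → ℕ) (z w : Sph m) :
    wpMk m χ z = wpMk m χ w ↔ wRel m χ z w := by
  rw [wpMk, wpMk, Quot.eq]
  exact (wRel_equiv m χ).eqvGen_iff

lemma chain_dvd {n : ℕ} {χ : Fin (n + 1) → ℕ}
    (hdiv : ∀ j : Fin n, χ j.castSucc ∣ χ j.succ) :
    ∀ a b : Fin (n + 1), a ≤ b → χ a ∣ χ b := by
  intro a b hab
  obtain ⟨a, ha⟩ := a; obtain ⟨b, hb⟩ := b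
  simp only [Fin.mk_le_mk] at hab
  induction b with
  | zero => interval_cases a; exact dvd_rfl
  | succ b ih =>
    rcases Nat.lt_or_ge a (b+1) with h | h
    · have hb' : b < n + 1 := by omega
      refine dvd_trans (ih hb' (by omega)) ?_
      have := hdiv ⟨b, by omega⟩
      simpa [Fin.castSucc, Fin.succ] using this
    · have : a = b + 1 := by omega
      subst this; exact dvd_rfl
section
variable {n : ℕ} (χ : Fin (n + 1) → ℕ) (j : Fin (n + 1))

def idx (k : Fin (n - j)) : Fin (n + 1) :=
  ⟨j + 1 + k, by have := k.isLt; have := j.isLt; omega⟩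

def dd (k : Fin (n - j)) : ℕ := χ (idx j k) / χ j

lemma dd_mul (hχ : ∀ i, 1 ≤ χ i) (hdvd : ∀ i, j ≤ i → χ j ∣ χ i) (k : Fin (n - j)) :
    χ j * dd χ j k = χ (idx j k) :=
  Nat.mul_div_cancel' (hdvd _ (by simp [idx, Fin.le_def]; omega)) 

lemma dd_pos (hχ : ∀ i, 1 ≤ χ i) (hdvd : ∀ i, j ≤ i → χ j ∣ χ i) (k : Fin (n - j)) :
    0 < dd χ j k := by
  have h := dd_mul χ j hχ hdvd k
  have := hχ (idx j k)
  rcases Nat.eq_zero_or_pos (dd χ j k) with h0 | h0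
  · rw [h0, Nat.mul_zero] at h; omega
  · exact h0

def ff (z : Fin (n + 1) → ℂ) (k : Fin (n - j)) : ℂ :=
  z (idx j k) * (starRingEnd ℂ (z j)) ^ dd χ j k / (‖z j‖ : ℂ) ^ dd χ j k

def rr (v : Fin (n - j) → ℂ) : ℝ := Real.sqrt (1 - ∑ k, ‖v k‖ ^ 2)

def zz (v : Fin (n - j) → ℂ) (i : Fin (n + 1)) : ℂ :=
  if h1 : (i : ℕ) < (j : ℕ) then 0
  else if h2 : (i : ℕ) = (j : ℕ) then (rr j v : ℂ)
  else v ⟨(i : ℕ) - j - 1, by have := i.isLt; omega⟩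

lemma zz_lt (v : Fin (n - j) → ℂ) (i : Fin (n + 1)) (h : (i : ℕ) < (j : ℕ)) :
    zz j v i = 0 := by simp [zz, h]

lemma zz_j (v : Fin (n - j) → ℂ) : zz j v j = (rr j v : ℂ) := by simp [zz]

lemma zz_idx (v : Fin (n - j) → ℂ) (k : Fin (n - j)) : zz j v (idx j k) = v k := by
  have hk := k.isLt
  simp only [zz]
  rw [dif_neg (by simp only [idx]; omega), dif_neg (by simp only [idx]; omega)]
  congr 1
  ext
  simp [idx]; omega

lemma sum_split (F : Fin (n + 1) → ℝ) (h0 : ∀ i : Fin (n+1), (i : ℕ) < (j : ℕ) → F i = 0) :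
    ∑ i, F i = F j + ∑ k, F (idx j k) := by
  classical
  have h1 : ∑ i, F i = ∑ i ∈ Finset.univ.filter (fun i : Fin (n+1) => (j:ℕ) ≤ (i:ℕ)), F i := by
    refine (Finset.sum_subset (Finset.subset_univ _) ?_).symm
    intro i _ hi
    simp only [Finset.mem_filter, Finset.mem_univ, true_and, not_le] at hi
    exact h0 i hi
  have h2 : Finset.univ.filter (fun i : Fin (n+1) => (j:ℕ) ≤ (i:ℕ)) =
      insert j (Finset.univ.filter (fun i : Fin (n+1) => (j:ℕ) < (i:ℕ))) := by
    ext i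
    simp only [Finset.mem_filter, Finset.mem_univ, true_and, Finset.mem_insert]
    constructor
    · intro h
      rcases Nat.eq_or_lt_of_le h with h | h
      · left; exact Fin.ext h.symm
      · right; exact h
    · rintro (rfl | h) <;> omega
  have h3 : j ∉ Finset.univ.filter (fun i : Fin (n+1) => (j:ℕ) < (i:ℕ)) := by simp
  rw [h1, h2, Finset.sum_insert h3]
  congr 1
  refine (Finset.sum_bij' (fun (k : Fin (n - j)) _ => idx j k)
    (fun i hi => ⟨(i:ℕ) - j - 1, by
      simp only [Finset.mem_filter, Finset.mem_univ, true_and] at hi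
      have := i.isLt; omega⟩) ?_ ?_ ?_ ?_ ?_).symm
  · intro k _
    simp only [Finset.mem_filter, Finset.mem_univ, true_and, idx]
    have := k.isLt; omega
  · intro i hi; exact Finset.mem_univ _
  · intro k _
    simp only [Finset.mem_filter, Finset.mem_univ, true_and, idx] at *
    ext; simp; omega
  · intro i hi
    simp only [Finset.mem_filter, Finset.mem_univ, true_and] at hi
    ext; simp [idx]; omega
  · intro i hi; rfl

end
section
variable {n : ℕ} {χ : Fin (n + 1) → ℕ} {j : Fin (n + 1)}

/-- cell membership predicate on the sphere -/
def cellP (j : Fin (n + 1)) (z : Sph (n + 1)) : Prop :=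
  (z : Fin (n + 1) → ℂ) j ≠ 0 ∧ ∀ i, i < j → (z : Fin (n + 1) → ℂ) i = 0

lemma cellP_invariant {z w : Sph (n + 1)} (h : wRel (n + 1) χ z w) :
    cellP j z → cellP j w := by
  rintro ⟨hz1, hz2⟩
  obtain ⟨t, ht, hw⟩ := h
  have ht0 : t ≠ 0 := by intro h0; rw [h0] at ht; simp at ht
  constructor
  · rw [hw j]
    exact mul_ne_zero (pow_ne_zero _ ht0) hz1
  · intro i hi
    rw [hw i, hz2 i hi, mul_zero]

lemma ff_invariant (hχ : ∀ i, 1 ≤ χ i) (hdvd : ∀ i, j ≤ i → χ j ∣ χ i)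
    {z w : Sph (n + 1)} (h : wRel (n + 1) χ z w) :
    ff χ j (w : Fin (n + 1) → ℂ) = ff χ j (z : Fin (n + 1) → ℂ) := by
  obtain ⟨t, ht, hw⟩ := h
  have ht0 : t ≠ 0 := by intro h0; rw [h0] at ht; simp at ht
  funext k
  have hdpos := dd_pos χ j hχ hdvd k
  have habs : ‖(w : Fin (n + 1) → ℂ) j‖ = ‖(z : Fin (n + 1) → ℂ) j‖ := by
    rw [hw j, norm_mul, norm_pow, ht, one_pow, one_mul]
  by_cases hz : (z : Fin (n + 1) → ℂ) j = 0
  · have hwj : (w : Fin (n + 1) → ℂ) j = 0 := by rw [hw j, hz, mul_zero]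
    simp [ff, hz, hwj, zero_pow hdpos.ne']
  · have hA : ((‖(z : Fin (n + 1) → ℂ) j‖ : ℂ)) ^ dd χ j k ≠ 0 := by
      apply pow_ne_zero
      simpa using ((norm_ne_zero_iff.mpr hz))
    have key : t ^ χ (idx j k) * (starRingEnd ℂ t) ^ χ (idx j k) = 1 := by
      rw [← mul_pow, Complex.mul_conj, Complex.normSq_eq_norm_sq, ht]
      norm_num
    simp only [ff, habs, hw (idx j k), hw j, map_mul, map_pow, norm_mul, norm_pow, mul_pow, ← pow_mul,
      dd_mul χ j hχ hdvd k, ht, one_pow, one_mul]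
    rw [div_eq_div_iff hA hA]
    ring_nf
    ring_nf at key
    linear_combination ((z : Fin (n + 1) → ℂ) (idx j k) *
      (starRingEnd ℂ ((z : Fin (n + 1) → ℂ) j)) ^ dd χ j k *
      (‖(z : Fin (n + 1) → ℂ) j‖ : ℂ) ^ dd χ j k) * key

lemma ff_abs {z : Fin (n + 1) → ℂ} (hz : z j ≠ 0) (k : Fin (n - j)) :
    ‖ff χ j z k‖ = ‖z (idx j k)‖ := by
  have h0 : ‖z j‖ ≠ 0 := (norm_ne_zero_iff.mpr hz)
  rw [ff, norm_div, norm_mul, norm_pow, norm_pow, Complex.norm_conj, Complex.norm_real,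
    Real.norm_eq_abs, abs_of_nonneg (norm_nonneg _), mul_div_cancel_right₀]
  exact pow_ne_zero _ h0

lemma sum_ff {z : Sph (n + 1)} (hz : cellP j z) :
    ∑ k, ‖ff χ j (z : Fin (n + 1) → ℂ) k‖ ^ 2 =
      1 - ‖(z : Fin (n + 1) → ℂ) j‖ ^ 2 := by
  have hsplit := sum_split j (fun i => ‖(z : Fin (n + 1) → ℂ) i‖ ^ 2)
    (fun i hi => by simp [hz.2 i (show i < j by rwa [Fin.lt_def])])
  have hsum := z.2
  have : ∀ k, ‖ff χ j (z : Fin (n + 1) → ℂ) k‖ ^ 2 =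
      ‖(z : Fin (n + 1) → ℂ) (idx j k)‖ ^ 2 := fun k => by rw [ff_abs hz.1]
  rw [Finset.sum_congr rfl (fun k _ => this k)]
  rw [hsum] at hsplit
  linarith

lemma sum_ff_lt {z : Sph (n + 1)} (hz : cellP j z) :
    ∑ k, ‖ff χ j (z : Fin (n + 1) → ℂ) k‖ ^ 2 < 1 := by
  rw [sum_ff hz]
  have : 0 < ‖(z : Fin (n + 1) → ℂ) j‖ := (norm_pos_iff.mpr hz.1)
  nlinarith

lemma sum_sq_nonneg (v : Fin (n - j) → ℂ) : 0 ≤ ∑ k, ‖v k‖ ^ 2 :=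
  Finset.sum_nonneg fun k _ => sq_nonneg _

lemma rr_sq {v : Fin (n - j) → ℂ} (hv : ∑ k, ‖v k‖ ^ 2 < 1) :
    rr j v ^ 2 = 1 - ∑ k, ‖v k‖ ^ 2 :=
  Real.sq_sqrt (by linarith)

lemma rr_pos {v : Fin (n - j) → ℂ} (hv : ∑ k, ‖v k‖ ^ 2 < 1) :
    0 < rr j v :=
  Real.sqrt_pos.2 (by linarith)

lemma zz_sphere {v : Fin (n - j) → ℂ} (hv : ∑ k, ‖v k‖ ^ 2 < 1) :
    ∑ i, ‖zz j v i‖ ^ 2 = 1 := by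
  have hsplit := sum_split j (fun i => ‖zz j v i‖ ^ 2)
    (fun i hi => by simp [zz_lt j v i hi])
  rw [hsplit, zz_j]
  have h1 : ∀ k : Fin (n - j), ‖zz j v (idx j k)‖ ^ 2 = ‖v k‖ ^ 2 :=
    fun k => by rw [zz_idx]
  rw [Finset.sum_congr rfl (fun k _ => h1 k), Complex.norm_real, Real.norm_eq_abs,
    abs_of_nonneg (rr_pos hv).le, rr_sq hv]
  ring

/-- the sphere point determined by `v` -/
def zzS (j : Fin (n + 1)) (v : Fin (n - j) → ℂ) (hv : ∑ k, ‖v k‖ ^ 2 < 1) :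
    Sph (n + 1) := ⟨zz j v, zz_sphere hv⟩

lemma zzS_cellP {v : Fin (n - j) → ℂ} (hv : ∑ k, ‖v k‖ ^ 2 < 1) :
    cellP j (zzS j v hv) := by
  constructor
  · show zz j v j ≠ 0
    rw [zz_j]
    exact_mod_cast (rr_pos hv).ne'
  · intro i hi
    exact zz_lt j v i (by rwa [Fin.lt_def] at hi)

lemma ff_zz {v : Fin (n - j) → ℂ} (hv : ∑ k, ‖v k‖ ^ 2 < 1) :
    ff χ j (zz j v) = v := by
  funext k
  have hr := rr_pos hv
  rw [ff, zz_idx, zz_j, Complex.conj_ofReal, Complex.norm_real, Real.norm_eq_abs, abs_of_nonneg hr.le,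
    mul_div_cancel_right₀]
  exact pow_ne_zero _ (by exact_mod_cast hr.ne')

lemma exists_unimodular_root (c : ℂ) (hc : ‖c‖ = 1) (k : ℕ) (hk : 0 < k) :
    ∃ t : ℂ, ‖t‖ = 1 ∧ t ^ k = c := by
  obtain ⟨t, ht⟩ := IsAlgClosed.exists_pow_nat_eq c hk
  refine ⟨t, ?_, ht⟩
  have habs : ‖t‖ ^ k = 1 := by rw [← norm_pow, ht, hc]
  have h0 : 0 ≤ ‖t‖ := norm_nonneg t
  rcases lt_trichotomy (‖t‖) 1 with h | h | h
  · have := pow_lt_one₀ h0 h hk.ne'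
    linarith
  · exact h
  · have := one_lt_pow₀ h hk.ne'
    linarith

lemma wRel_zz (hχ : ∀ i, 1 ≤ χ i) (hdvd : ∀ i, j ≤ i → χ j ∣ χ i)
    {z : Sph (n + 1)} (hz : cellP j z) :
    wRel (n + 1) χ z (zzS j (ff χ j (z : Fin (n + 1) → ℂ)) (sum_ff_lt hz)) := by
  set a : ℝ := ‖(z : Fin (n + 1) → ℂ) j‖ with ha
  have ha0 : 0 < a := (norm_pos_iff.mpr hz.1)
  set c : ℂ := starRingEnd ℂ ((z : Fin (n + 1) → ℂ) j) / (a : ℂ) with hc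
  have hca : ‖c‖ = 1 := by
    rw [hc, norm_div, Complex.norm_conj, Complex.norm_real, Real.norm_eq_abs, abs_of_nonneg ha0.le, ← ha,
      div_self ha0.ne']
  obtain ⟨t, ht, htc⟩ := exists_unimodular_root c hca (χ j) (hχ j)
  refine ⟨t, ht, fun i => ?_⟩
  show zz j (ff χ j (z : Fin (n + 1) → ℂ)) i = t ^ χ i * (z : Fin (n + 1) → ℂ) i
  rcases lt_trichotomy (i : ℕ) (j : ℕ) with hij | hij | hij
  · rw [zz_lt j _ i hij, hz.2 i (by rwa [Fin.lt_def]), mul_zero]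
  · rw [show i = j from Fin.ext hij, zz_j]
    have hrr : rr j (ff χ j (z : Fin (n + 1) → ℂ)) = a := by
      rw [rr, sum_ff hz, ← ha]
      have : (1 : ℝ) - (1 - a ^ 2) = a ^ 2 := by ring
      rw [this, Real.sqrt_sq ha0.le]
    rw [hrr, htc, hc]
    rw [div_mul_eq_mul_div, Complex.conj_mul']
    push_cast
    rw [ha]
    field_simp
  · -- i > j
    have hk : (i : ℕ) - j - 1 < n - j := by have := i.isLt; omega
    set k : Fin (n - j) := ⟨(i : ℕ) - j - 1, hk⟩ with hkdef
    have hik : i = idx j k := by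
      ext; simp [idx, hkdef]; omega
    rw [hik, zz_idx, ff]
    have hχi : χ (idx j k) = χ j * dd χ j k := (dd_mul χ j hχ hdvd k).symm
    rw [hχi, pow_mul, htc, hc, div_pow]
    ring
end
section
variable {n : ℕ} {χ : Fin (n + 1) → ℕ} {j : Fin (n + 1)}

/-- action of a unimodular number on the sphere -/
def act (χ : Fin (n + 1) → ℕ) (t : ℂ) (ht : ‖t‖ = 1) (z : Sph (n + 1)) :
    Sph (n + 1) :=
  ⟨fun i => t ^ χ i * (z : Fin (n + 1) → ℂ) i, by
    have : ∀ i, ‖t ^ χ i * (z : Fin (n + 1) → ℂ) i‖ ^ 2 =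
        ‖(z : Fin (n + 1) → ℂ) i‖ ^ 2 := fun i => by
      rw [norm_mul, norm_pow, ht, one_pow, one_mul]
    rw [Finset.sum_congr rfl fun i _ => this i]
    exact z.2⟩

lemma act_continuous (χ : Fin (n + 1) → ℕ) (t : ℂ) (ht : ‖t‖ = 1) :
    Continuous (act χ t ht) := by
  refine Continuous.subtype_mk (continuous_pi fun i => ?_) _
  exact continuous_const.mul ((continuous_apply i).comp continuous_subtype_val)

lemma isOpenMap_wpMk (χ : Fin (n + 1) → ℕ) : IsOpenMap (wpMk (n + 1) χ) := by
  intro U hU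
  rw [← isQuotientMap_quot_mk.isOpen_preimage]
  have hset : Quot.mk (wRel (n + 1) χ) ⁻¹' (wpMk (n + 1) χ '' U) =
      ⋃ t : {t : ℂ // ‖t‖ = 1}, (act χ t.1 t.2) ⁻¹' U := by
    ext z
    simp only [Set.mem_preimage, Set.mem_image, Set.mem_iUnion]
    constructor
    · rintro ⟨u, hu, hequ⟩
      have hrel : wRel (n + 1) χ z u :=
        (wRel_equiv (n + 1) χ).symm ((mk_eq_iff (n + 1) χ u z).mp hequ)
      obtain ⟨s, hs, h⟩ := hrel
      refine ⟨⟨s, hs⟩, ?_⟩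
      have : act χ s hs z = u := Subtype.ext (funext fun i => (h i).symm)
      rwa [this]
    · rintro ⟨t, hmem⟩
      refine ⟨act χ t.1 t.2 z, hmem, ?_⟩
      exact (mk_eq_iff (n + 1) χ _ _).mpr
        ((wRel_equiv (n + 1) χ).symm ⟨t.1, t.2, fun i => rfl⟩)
  rw [hset]
  exact isOpen_iUnion fun t => hU.preimage (act_continuous χ t.1 t.2)

/-- The cell as a subspace of `P(χ)`. -/
abbrev CellT (χ : Fin (n + 1) → ℕ) (j : Fin (n + 1)) : Type :=
  {x : WP (n + 1) χ // ∃ z : Sph (n + 1), wpMk (n + 1) χ z = x ∧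
    (z : Fin (n + 1) → ℂ) j ≠ 0 ∧ ∀ i, i < j → (z : Fin (n + 1) → ℂ) i = 0}

/-- the restricted quotient map onto the cell -/
def qc (χ : Fin (n + 1) → ℕ) (j : Fin (n + 1)) (z : {z : Sph (n + 1) // cellP j z}) :
    CellT χ j :=
  ⟨wpMk (n + 1) χ z.1, z.1, rfl, z.2.1, z.2.2⟩

lemma qc_continuous : Continuous (qc χ j) := by
  refine Continuous.subtype_mk ?_ _
  exact continuous_quot_mk.comp continuous_subtype_val

lemma qc_surjective : Function.Surjective (qc χ j) := by
  rintro ⟨x, z, rfl, h1, h2⟩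
  exact ⟨⟨z, h1, h2⟩, rfl⟩

lemma qc_isOpenMap : IsOpenMap (qc χ j) := by
  intro U hU
  obtain ⟨V, hV, hVU⟩ := isOpen_induced_iff.mp hU
  have hset : qc χ j '' U = Subtype.val ⁻¹' (wpMk (n + 1) χ '' V) := by
    ext x
    simp only [Set.mem_image, Set.mem_preimage]
    constructor
    · rintro ⟨u, hu, rfl⟩
      exact ⟨u.1, by rw [← hVU] at hu; exact hu, rfl⟩
    · rintro ⟨v, hv, hvx⟩
      obtain ⟨z, hzx, hz1, hz2⟩ := x.2
      have hrel : wRel (n + 1) χ z v := by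
        rw [← mk_eq_iff]
        rw [hzx, ← hvx]
      have hcv : cellP j v := cellP_invariant hrel ⟨hz1, hz2⟩
      refine ⟨⟨v, hcv⟩, ?_, ?_⟩
      · rw [← hVU]; exact hv
      · exact Subtype.ext hvx
  rw [hset]
  exact (isOpenMap_wpMk χ V hV).preimage continuous_subtype_val

lemma qc_isQuotientMap : IsQuotientMap (qc χ j) :=
  (qc_isOpenMap).isQuotientMap qc_continuous qc_surjective

/-- the induced map `P(χ) ⊇ cell → ℂ^{n-j}` -/
def fbar (χ : Fin (n + 1) → ℕ) (j : Fin (n + 1)) (hχ : ∀ i, 1 ≤ χ i)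
    (hdvd : ∀ i, j ≤ i → χ j ∣ χ i) : WP (n + 1) χ → (Fin (n - j) → ℂ) :=
  Quot.lift (fun z : Sph (n + 1) => ff χ j (z : Fin (n + 1) → ℂ))
    (fun _ _ hab => (ff_invariant hχ hdvd hab).symm)

lemma fbar_mk (hχ : ∀ i, 1 ≤ χ i) (hdvd : ∀ i, j ≤ i → χ j ∣ χ i) (z : Sph (n + 1)) :
    fbar χ j hχ hdvd (wpMk (n + 1) χ z) = ff χ j (z : Fin (n + 1) → ℂ) := rfl

lemma fbar_cell_continuous (hχ : ∀ i, 1 ≤ χ i) (hdvd : ∀ i, j ≤ i → χ j ∣ χ i) :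
    Continuous (fun x : CellT χ j => fbar χ j hχ hdvd x.1) := by
  rw [qc_isQuotientMap.continuous_iff]
  have : (fun x : CellT χ j => fbar χ j hχ hdvd x.1) ∘ qc χ j =
      fun z : {z : Sph (n + 1) // cellP j z} => ff χ j ((z : Sph (n + 1)) : Fin (n + 1) → ℂ) := by
    funext z; rfl
  rw [this]
  refine continuous_pi fun k => ?_
  have hcoord : ∀ i : Fin (n + 1), Continuous
      (fun z : {z : Sph (n + 1) // cellP j z} => ((z : Sph (n + 1)) : Fin (n + 1) → ℂ) i) :=
    fun i => (continuous_apply i).comp (continuous_subtype_val.comp continuous_subtype_val)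
  refine Continuous.div ?_ ?_ ?_
  · exact (hcoord (idx j k)).mul ((continuous_star.comp (hcoord j)).pow _)
  · exact (Complex.continuous_ofReal.comp (continuous_norm.comp (hcoord j))).pow _
  · intro z
    refine pow_ne_zero _ ?_
    show ((‖((z : Sph (n+1)) : Fin (n+1) → ℂ) j‖ : ℂ)) ≠ 0
    rw [Complex.ofReal_ne_zero]
    exact (norm_ne_zero_iff.mpr z.2.1)

end
section
variable {n : ℕ} {χ : Fin (n + 1) → ℕ} {j : Fin (n + 1)}

/-- auxiliary for `left_inv` -/
lemma invFun_eq (hχ : ∀ i, 1 ≤ χ i) (hdvd : ∀ i, j ≤ i → χ j ∣ χ i) {z : Sph (n + 1)}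
    (h1 : (z : Fin (n + 1) → ℂ) j ≠ 0) (h2 : ∀ i, i < j → (z : Fin (n + 1) → ℂ) i = 0)
    {v : Fin (n - j) → ℂ} (hveq : v = ff χ j (z : Fin (n + 1) → ℂ))
    (hv : ∑ k, ‖v k‖ ^ 2 < 1) :
    wpMk (n + 1) χ (zzS j v hv) = wpMk (n + 1) χ z := by
  subst hveq
  exact (mk_eq_iff (n + 1) χ _ _).mpr ((wRel_equiv (n + 1) χ).symm (wRel_zz hχ hdvd ⟨h1, h2⟩))

lemma fbar_mem (hχ : ∀ i, 1 ≤ χ i) (hdvd : ∀ i, j ≤ i → χ j ∣ χ i) (x : CellT χ j) :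
    ∑ k, ‖fbar χ j hχ hdvd x.1 k‖ ^ 2 < 1 := by
  obtain ⟨z, hzx, h1, h2⟩ := x.2
  rw [← hzx, fbar_mk]
  exact sum_ff_lt ⟨h1, h2⟩

/-- Step 1: the cell is homeomorphic to the open "round ball" in the plain pi type. -/
def cellHomeoBall (hχ : ∀ i, 1 ≤ χ i) (hdvd : ∀ i, j ≤ i → χ j ∣ χ i) :
    CellT χ j ≃ₜ {v : Fin (n - j) → ℂ // ∑ k, ‖v k‖ ^ 2 < 1} where
  toFun x := ⟨fbar χ j hχ hdvd x.1, fbar_mem hχ hdvd x⟩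
  invFun v := ⟨wpMk (n + 1) χ (zzS j v.1 v.2), zzS j v.1 v.2, rfl,
    (zzS_cellP v.2).1, (zzS_cellP v.2).2⟩
  left_inv x := by
    apply Subtype.ext
    obtain ⟨z, hzx, h1, h2⟩ := x.2
    exact Eq.trans (invFun_eq hχ hdvd h1 h2 (by show fbar χ j hχ hdvd x.1 = _; rw [← hzx, fbar_mk]) _) hzx
  right_inv v := by
    apply Subtype.ext
    show fbar χ j hχ hdvd (wpMk (n + 1) χ (zzS j v.1 v.2)) = v.1
    rw [fbar_mk]
    exact ff_zz v.2
  continuous_toFun := (fbar_cell_continuous hχ hdvd).subtype_mk (fbar_mem hχ hdvd)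
  continuous_invFun := by
    apply Continuous.subtype_mk
    show Continuous fun v : {v : Fin (n - j) → ℂ // ∑ k, ‖v k‖ ^ 2 < 1} =>
      Quot.mk (wRel (n + 1) χ) (zzS j v.1 v.2)
    refine Continuous.comp continuous_quot_mk ?_
    apply Continuous.subtype_mk
    refine continuous_pi fun i => ?_
    show Continuous fun v : {v : Fin (n - j) → ℂ // ∑ k, ‖v k‖ ^ 2 < 1} =>
      zz j v.1 i
    unfold zz
    split_ifs with h1 h2
    · exact continuous_const
    · unfold rr
      refine Complex.continuous_ofReal.comp (Real.continuous_sqrt.comp ?_)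
      refine continuous_const.sub ?_
      refine continuous_finset_sum _ fun k _ => ?_
      exact ((continuous_norm.comp
        ((continuous_apply k).comp continuous_subtype_val)).pow 2)
    · exact (continuous_apply _).comp continuous_subtype_val

/-- Step 2: transferring to the metric ball in the Euclidean space. -/
def ballHomeo :
    {v : Fin (n - j) → ℂ // ∑ k, ‖v k‖ ^ 2 < 1} ≃ₜ
      (Metric.ball (0 : EuclideanSpace ℂ (Fin (n - (j : ℕ)))) 1) := by
  refine (EuclideanSpace.equiv (Fin (n - (j : ℕ))) ℂ).toHomeomorph.symm.subtype fun v => ?_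
  rw [Metric.mem_ball, dist_zero_right, EuclideanSpace.norm_eq,
    Real.sqrt_lt' one_pos, one_pow]
  exact Iff.rfl

/-- The full cell homeomorphism. -/
def cellHomeo (hχ : ∀ i, 1 ≤ χ i) (hdvd : ∀ i, j ≤ i → χ j ∣ χ i) :
    CellT χ j ≃ₜ (Fin (n - (j : ℕ)) → ℂ) :=
  (cellHomeoBall hχ hdvd).trans <| ballHomeo.trans <|
    (Homeomorph.unitBall (E := EuclideanSpace ℂ (Fin (n - (j : ℕ))))).symm.trans
      (EuclideanSpace.equiv (Fin (n - (j : ℕ))) ℂ).toHomeomorph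

end

end St18

/-- For a divisive weight vector `χ` (each `χ_{j-1}` divides `χ_j`), the
condition "`z_j ≠ 0` and `z_i = 0` for `i < j`" is independent of the representative
`z ∈ S^{2n+1}`; for every `j` the corresponding subspace of `P(χ)` is homeomorphic to
`ℂ^{n-j}`; and every point of `P(χ)` lies in exactly one of these `n+1` subspaces, giving a
cell decomposition with one cell in each even dimension `0, 2, …, 2n`. -/
theorem statement18 (n : ℕ) (hn : 1 ≤ n) (χ : Fin (n + 1) → ℕ) (hχ : ∀ i, 1 ≤ χ i)
    (hdiv : ∀ j : Fin n, χ j.castSucc ∣ χ j.succ) :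
    (∀ (j : Fin (n + 1)) (z w : Sph (n + 1)), wpMk (n + 1) χ z = wpMk (n + 1) χ w →
      (((z : Fin (n + 1) → ℂ) j ≠ 0 ∧ ∀ i, i < j → (z : Fin (n + 1) → ℂ) i = 0) ↔
        ((w : Fin (n + 1) → ℂ) j ≠ 0 ∧ ∀ i, i < j → (w : Fin (n + 1) → ℂ) i = 0))) ∧
    (∀ j : Fin (n + 1), Nonempty (
      {x : WP (n + 1) χ // ∃ z : Sph (n + 1), wpMk (n + 1) χ z = x ∧
        (z : Fin (n + 1) → ℂ) j ≠ 0 ∧ ∀ i, i < j → (z : Fin (n + 1) → ℂ) i = 0} ≃ₜ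
      (Fin (n - (j : ℕ)) → ℂ))) ∧
    (∀ x : WP (n + 1) χ, ∃! j : Fin (n + 1), ∃ z : Sph (n + 1),
      wpMk (n + 1) χ z = x ∧
        (z : Fin (n + 1) → ℂ) j ≠ 0 ∧ ∀ i, i < j → (z : Fin (n + 1) → ℂ) i = 0) := by
  have hdvd : ∀ j i : Fin (n + 1), j ≤ i → χ j ∣ χ i := fun j i hij =>
    St18.chain_dvd hdiv j i hij
  refine ⟨?_, ?_, ?_⟩
  · -- Part 1: independence of the representative
    intro j z w h
    have hrel : wRel (n + 1) χ z w := (St18.mk_eq_iff (n + 1) χ z w).mp h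
    constructor
    · intro hz
      exact St18.cellP_invariant hrel hz
    · intro hw
      exact St18.cellP_invariant ((St18.wRel_equiv (n + 1) χ).symm hrel) hw
  · -- Part 2: the cells are homeomorphic to complex affine spaces
    intro j
    exact ⟨St18.cellHomeo hχ (hdvd j)⟩
  · -- Part 3: the cells partition `P(χ)`
    intro x
    obtain ⟨z, rfl⟩ := Quot.exists_rep x
    have hex : ∃ i : Fin (n + 1), (z : Fin (n + 1) → ℂ) i ≠ 0 := by
      by_contra hc
      push_neg at hc
      have h0 : ∑ i, ‖(z : Fin (n + 1) → ℂ) i‖ ^ 2 = 0 :=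
        Finset.sum_eq_zero fun i _ => by rw [hc i]; simp
      rw [z.2] at h0
      norm_num at h0
    set s : Finset (Fin (n + 1)) :=
      Finset.univ.filter (fun i => (z : Fin (n + 1) → ℂ) i ≠ 0) with hs
    have hne : s.Nonempty := by
      obtain ⟨i, hi⟩ := hex
      exact ⟨i, by simp [hs, hi]⟩
    set j : Fin (n + 1) := s.min' hne with hj
    have hjmem : (z : Fin (n + 1) → ℂ) j ≠ 0 :=
      (Finset.mem_filter.mp (s.min'_mem hne)).2
    have hjlt : ∀ i, i < j → (z : Fin (n + 1) → ℂ) i = 0 := by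
      intro i hi
      by_contra hi0
      have : j ≤ i := s.min'_le i (by simp [hs, hi0])
      exact absurd hi (not_lt.mpr this)
    have hcell : St18.cellP j z := ⟨hjmem, hjlt⟩
    refine ⟨j, ⟨z, rfl, hjmem, hjlt⟩, ?_⟩
    rintro j' ⟨w, hwx, hw1, hw2⟩
    have hrel : wRel (n + 1) χ w z := (St18.mk_eq_iff (n + 1) χ w z).mp hwx
    have hcz : St18.cellP j' z := St18.cellP_invariant hrel ⟨hw1, hw2⟩
    rcases lt_trichotomy j' j with h | h | h
    · exact absurd (hjlt j' h) hcz.1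
    · exact h
    · exact absurd (hcz.2 j h) hjmem
end
end

section
/- For any weight vector χ, the open subspace U = {[z]_χ ∈ P(χ) : z_n ≠ 0} of P(χ) (this condition is independent of the chosen representative z ∈ S^{2n+1}) is homeomorphic to the orbit space ℂ^n/μ_{χ_n}, where ζ ∈ μ_{χ_n} acts on ℂ^n by ζ·(w_0, …, w_{n-1}) = (ζ^{χ_0}w_0, …, ζ^{χ_{n-1}}w_{n-1}) and the orbit space carries the quotient topology. In particular, the point [0, …, 0, 1]_χ has a neighbourhood of the form ℂ^n/μ_{χ_n}, so P(χ) has at worst finite cyclic quotient singularities. -/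
noncomputable section

theorem wRel_equiv (m : ℕ) (χ : Fin m → ℕ) : Equivalence (wRel m χ) := by
  constructor
  · intro z; exact ⟨1, by simp, by simp⟩
  · rintro z w ⟨t, ht, h⟩
    have ht0 : t ≠ 0 := by intro h0; simp [h0] at ht
    refine ⟨t⁻¹, by simp [ht], fun i => ?_⟩
    rw [h i]; field_simp
    rw [one_div, inv_pow, inv_mul_cancel_right₀ (pow_ne_zero _ ht0)]
  · rintro z w v ⟨t, ht, h⟩ ⟨s, hs, h'⟩
    refine ⟨s * t, by simp [ht, hs], fun i => ?_⟩
    rw [h' i, h i, mul_pow]; ring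

theorem wpMk_eq_iff (m : ℕ) (χ : Fin m → ℕ) (z w : Sph m) :
    wpMk m χ z = wpMk m χ w ↔ wRel m χ z w := by
  rw [wpMk, wpMk, Quot.eq]
  exact (wRel_equiv m χ).eqvGen_iff

section Main
variable (n : ℕ) (χ : Fin (n + 1) → ℕ)

theorem part1 (z w : Sph (n + 1)) (h : wpMk (n + 1) χ z = wpMk (n + 1) χ w) :
    ((z : Fin (n + 1) → ℂ) (Fin.last n) ≠ 0 ↔ (w : Fin (n + 1) → ℂ) (Fin.last n) ≠ 0) := by
  rw [wpMk_eq_iff] at h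
  obtain ⟨t, ht, hw⟩ := h
  have ht0 : t ≠ 0 := by intro h0; simp [h0] at ht
  rw [hw (Fin.last n)]
  simp [pow_ne_zero _ ht0, ht0]

def Uset : Set (WP (n + 1) χ) :=
  {x | ∃ z : Sph (n + 1), wpMk (n + 1) χ z = x ∧ (z : Fin (n + 1) → ℂ) (Fin.last n) ≠ 0}

theorem preimage_Uset :
    (Quot.mk (wRel (n + 1) χ)) ⁻¹' (Uset n χ)
      = {z : Sph (n + 1) | (z : Fin (n + 1) → ℂ) (Fin.last n) ≠ 0} := by
  ext z
  constructor
  · rintro ⟨w, hw, hwn⟩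
    exact ((part1 n χ w z hw).mp hwn)
  · intro hz
    exact ⟨z, rfl, hz⟩

theorem isOpen_sphere_part :
    IsOpen {z : Sph (n + 1) | (z : Fin (n + 1) → ℂ) (Fin.last n) ≠ 0} := by
  have : Continuous fun z : Sph (n + 1) => (z : Fin (n + 1) → ℂ) (Fin.last n) :=
    (continuous_apply (Fin.last n)).comp continuous_subtype_val
  exact isOpen_compl_singleton.preimage this

theorem part2 : IsOpen (Uset n χ) := by
  rw [← isQuotientMap_quot_mk.isOpen_preimage, preimage_Uset]
  exact isOpen_sphere_part n

end Main

section Norm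
variable (n : ℕ) (χ : Fin (n + 1) → ℕ)

/-- extend `w : ℂ^n` by `1` in the last slot -/
def vext (w : Fin n → ℂ) : Fin (n + 1) → ℂ := Fin.snoc w 1

def Pfun (w : Fin n → ℂ) (l : ℝ) : ℝ :=
  ∑ j : Fin (n + 1), l ^ (2 * χ j) * ‖vext n w j‖ ^ 2

variable (hχ : ∀ i, 1 ≤ χ i)
include hχ

theorem Pfun_strictMono (w : Fin n → ℂ) : StrictMonoOn (Pfun n χ w) (Set.Ici 0) := by
  intro a ha b hb hab
  simp only [Set.mem_Ici] at ha hb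
  unfold Pfun
  apply Finset.sum_lt_sum
  · intro j _
    exact mul_le_mul_of_nonneg_right
      (pow_le_pow_left₀ ha hab.le _) (sq_nonneg _)
  · refine ⟨Fin.last n, Finset.mem_univ _, ?_⟩
    have h1 : vext n w (Fin.last n) = 1 := by simp [vext]
    rw [h1]
    simp only [norm_one, one_pow, mul_one]
    exact pow_lt_pow_left₀ hab ha (by have := hχ (Fin.last n); omega)

theorem Pfun_zero (w : Fin n → ℂ) : Pfun n χ w 0 = 0 := by
  unfold Pfun
  apply Finset.sum_eq_zero
  intro j _
  rw [zero_pow (by have := hχ j; omega)]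
  ring

omit hχ in
theorem Pfun_one_le (w : Fin n → ℂ) : 1 ≤ Pfun n χ w 1 := by
  unfold Pfun
  have : (1:ℝ) ^ (2 * χ (Fin.last n)) * ‖vext n w (Fin.last n)‖ ^ 2 = 1 := by
    simp [vext]
  refine le_trans (le_of_eq this.symm) ?_
  exact Finset.single_le_sum (f := fun j => (1:ℝ) ^ (2 * χ j) * ‖vext n w j‖ ^ 2)
    (fun j _ => by positivity) (Finset.mem_univ _)

omit hχ in
theorem Pfun_continuous (l : ℝ) : Continuous fun w => Pfun n χ w l := by
  unfold Pfun
  apply continuous_finset_sum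
  intro j _
  apply Continuous.mul continuous_const
  apply Continuous.pow
  apply continuous_norm.comp
  unfold vext
  induction j using Fin.lastCases with
  | last => simpa using continuous_const
  | cast i => simpa using continuous_apply i

omit hχ in
theorem Pfun_continuous_l (w : Fin n → ℂ) : Continuous (Pfun n χ w) := by
  unfold Pfun
  exact continuous_finset_sum _ (fun j _ => (continuous_pow _).mul continuous_const)

theorem lam_exists (w : Fin n → ℂ) : ∃ l : ℝ, 0 < l ∧ Pfun n χ w l = 1 := by
  have h := intermediate_value_Icc (by norm_num : (0:ℝ) ≤ 1)
    ((Pfun_continuous_l n χ w).continuousOn)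
  have h1 : (1:ℝ) ∈ Set.Icc (Pfun n χ w 0) (Pfun n χ w 1) := by
    rw [Pfun_zero n χ hχ]
    exact ⟨by norm_num, Pfun_one_le n χ w⟩
  obtain ⟨l, hl, hl1⟩ := h h1
  refine ⟨l, ?_, hl1⟩
  rcases lt_or_eq_of_le hl.1 with h | h
  · exact h
  · exfalso; rw [← h] at hl1; rw [Pfun_zero n χ hχ] at hl1; norm_num at hl1

def lam (w : Fin n → ℂ) : ℝ := (lam_exists n χ hχ w).choose

theorem lam_pos (w : Fin n → ℂ) : 0 < lam n χ hχ w := (lam_exists n χ hχ w).choose_spec.1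

theorem lam_eq_one (w : Fin n → ℂ) : Pfun n χ w (lam n χ hχ w) = 1 :=
  (lam_exists n χ hχ w).choose_spec.2

theorem lam_unique (w : Fin n → ℂ) (l : ℝ) (hl : 0 < l) (h1 : Pfun n χ w l = 1) :
    l = lam n χ hχ w := by
  apply (Pfun_strictMono n χ hχ w).injOn hl.le (lam_pos n χ hχ w).le
  rw [h1, lam_eq_one]

theorem lam_continuous : Continuous (lam n χ hχ) := by
  rw [continuous_iff_continuousAt]
  intro w0
  rw [ContinuousAt, Metric.tendsto_nhds]
  intro ε hε
  set l0 := lam n χ hχ w0 with hl0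
  set δ := min (ε / 2) (l0 / 2) with hδ
  have hδpos : 0 < δ := lt_min (by linarith) (by have := lam_pos n χ hχ w0; linarith)
  have hδl0 : δ ≤ l0 / 2 := min_le_right _ _
  have hlow : (0:ℝ) ≤ l0 - δ := by have := lam_pos n χ hχ w0; linarith
  have h1 : Pfun n χ w0 (l0 - δ) < 1 := by
    have := Pfun_strictMono n χ hχ w0 hlow (Set.mem_Ici.mpr (lam_pos n χ hχ w0).le)
      (by linarith : l0 - δ < l0)
    rwa [lam_eq_one n χ hχ w0] at this
  have h2 : 1 < Pfun n χ w0 (l0 + δ) := by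
    have := Pfun_strictMono n χ hχ w0 (Set.mem_Ici.mpr (lam_pos n χ hχ w0).le)
      (Set.mem_Ici.mpr (by have := lam_pos n χ hχ w0; linarith)) (by linarith : l0 < l0 + δ)
    rwa [lam_eq_one n χ hχ w0] at this
  have hopen : IsOpen {w | Pfun n χ w (l0 - δ) < 1 ∧ 1 < Pfun n χ w (l0 + δ)} := by
    apply IsOpen.inter
    · exact isOpen_lt (Pfun_continuous n χ _) continuous_const
    · exact isOpen_lt continuous_const (Pfun_continuous n χ _)
  have hmem : {w | Pfun n χ w (l0 - δ) < 1 ∧ 1 < Pfun n χ w (l0 + δ)} ∈ nhds w0 :=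
    hopen.mem_nhds ⟨h1, h2⟩
  filter_upwards [hmem] with w hw
  have hlw := lam_pos n χ hχ w
  have hup : lam n χ hχ w < l0 + δ := by
    by_contra hc
    push_neg at hc
    have := (Pfun_strictMono n χ hχ w).monotoneOn
      (Set.mem_Ici.mpr (by have := lam_pos n χ hχ w0; linarith))
      (by simp [Set.mem_Ici]; positivity : lam n χ hχ w ∈ Set.Ici 0) hc
    rw [lam_eq_one n χ hχ w] at this
    linarith [hw.2]
  have hdown : l0 - δ < lam n χ hχ w := by
    by_contra hc
    push_neg at hc
    have := (Pfun_strictMono n χ hχ w).monotoneOn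
      (Set.mem_Ici.mpr hlw.le)
      (Set.mem_Ici.mpr hlow) hc
    rw [lam_eq_one n χ hχ w] at this
    linarith [hw.1]
  rw [Real.dist_eq, abs_sub_lt_iff]
  constructor <;> [skip; skip] <;>
    (first | (have : δ ≤ ε / 2 := min_le_left _ _; linarith))

end Norm

section Fdir
variable (n : ℕ) (χ : Fin (n + 1) → ℕ) (hχ : ∀ i, 1 ≤ χ i)

theorem abs_one_of_pow_eq_one {N : ℕ} (hN : N ≠ 0) {ζ : ℂ} (h : ζ ^ N = 1) :
    ‖ζ‖ = 1 := by
  have h2 : ‖ζ‖ ^ N = 1 := by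
    rw [← norm_pow, h, norm_one]
  rcases lt_trichotomy (‖ζ‖) 1 with hlt | heq | hgt
  · exfalso
    have := pow_lt_one₀ (norm_nonneg ζ) hlt hN
    rw [h2] at this; exact lt_irrefl 1 this
  · exact heq
  · exfalso
    have := one_lt_pow₀ hgt hN
    rw [h2] at this; exact lt_irrefl 1 this

def muRel : (Fin n → ℂ) → (Fin n → ℂ) → Prop := fun u v =>
  ∃ ζ : ℂ, ζ ^ χ (Fin.last n) = 1 ∧ ∀ i, v i = ζ ^ χ i.castSucc * u i

include hχ

def Nmap (w : Fin n → ℂ) : Sph (n + 1) :=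
  ⟨fun j => ((lam n χ hχ w : ℝ) : ℂ) ^ χ j * vext n w j, by
    have hl := lam_pos n χ hχ w
    have h1 := lam_eq_one n χ hχ w
    rw [← h1]
    unfold Pfun
    apply Finset.sum_congr rfl
    intro j _
    rw [norm_mul, norm_pow, Complex.norm_real, Real.norm_eq_abs, abs_of_pos hl, mul_pow, ← pow_mul,
      mul_comm (χ j) 2]⟩

theorem Nmap_continuous : Continuous fun w => (Nmap n χ hχ w : Fin (n + 1) → ℂ) := by
  apply continuous_pi
  intro j
  apply Continuous.mul
  · exact (Complex.continuous_ofReal.comp (lam_continuous n χ hχ)).pow _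
  · unfold vext
    induction j using Fin.lastCases with
    | last => simpa using continuous_const
    | cast i => simpa using continuous_apply i

theorem lam_invariant (u v : Fin n → ℂ) (h : muRel n χ u v) :
    lam n χ hχ v = lam n χ hχ u := by
  obtain ⟨ζ, hζ, hv⟩ := h
  have habs : ‖ζ‖ = 1 :=
    abs_one_of_pow_eq_one (by have := hχ (Fin.last n); omega) hζ
  have hP : ∀ l, Pfun n χ v l = Pfun n χ u l := by
    intro l
    unfold Pfun
    apply Finset.sum_congr rfl
    intro j _
    congr 1
    unfold vext
    induction j using Fin.lastCases with
    | last => simp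
    | cast i => simp [hv i, norm_mul, norm_pow, habs]
  apply lam_unique n χ hχ u (lam n χ hχ v) (lam_pos n χ hχ v)
  rw [← hP, lam_eq_one]

theorem fmap_sound (u v : Fin n → ℂ) (h : muRel n χ u v) :
    wpMk (n + 1) χ (Nmap n χ hχ u) = wpMk (n + 1) χ (Nmap n χ hχ v) := by
  obtain ⟨ζ, hζ, hv⟩ := h
  have habs : ‖ζ‖ = 1 :=
    abs_one_of_pow_eq_one (by have := hχ (Fin.last n); omega) hζ
  have hlam := lam_invariant n χ hχ u v ⟨ζ, hζ, hv⟩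
  apply Quot.sound
  refine ⟨ζ, habs, fun j => ?_⟩
  show ((lam n χ hχ v : ℝ) : ℂ) ^ χ j * vext n v j
      = ζ ^ χ j * (((lam n χ hχ u : ℝ) : ℂ) ^ χ j * vext n u j)
  rw [hlam]
  unfold vext
  induction j using Fin.lastCases with
  | last => simp [hζ]
  | cast i => simp [hv i]; ring

theorem Nmap_last_ne (w : Fin n → ℂ) :
    (Nmap n χ hχ w : Fin (n + 1) → ℂ) (Fin.last n) ≠ 0 := by
  show ((lam n χ hχ w : ℝ) : ℂ) ^ χ (Fin.last n) * vext n w (Fin.last n) ≠ 0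
  have hl := lam_pos n χ hχ w
  have h1 : vext n w (Fin.last n) = 1 := by simp [vext]
  rw [h1, mul_one]
  apply pow_ne_zero
  exact_mod_cast hl.ne'

def Fsub : Quot (muRel n χ) → {x : WP (n + 1) χ // x ∈ Uset n χ} := fun y =>
  ⟨Quot.lift (fun w => wpMk (n + 1) χ (Nmap n χ hχ w)) (fmap_sound n χ hχ) y, by
    induction y using Quot.ind with
    | _ w => exact ⟨Nmap n χ hχ w, rfl, Nmap_last_ne n χ hχ w⟩⟩

theorem Fsub_continuous : Continuous (Fsub n χ hχ) := by
  apply Continuous.subtype_mk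
  exact continuous_quot_lift _
    (continuous_quot_mk.comp (Continuous.subtype_mk (Nmap_continuous n χ hχ) _))

end Fdir

section Gdir
variable (n : ℕ) (χ : Fin (n + 1) → ℕ) (hχ : ∀ i, 1 ≤ χ i)
include hχ

omit hχ in
theorem real_eq_one_of_pow {a : ℝ} (ha : 0 ≤ a) {N : ℕ} (hN : N ≠ 0) (h : a ^ N = 1) :
    a = 1 := by
  rcases lt_trichotomy a 1 with hlt | heq | hgt
  · exfalso; have := pow_lt_one₀ ha hlt hN; rw [h] at this; exact lt_irrefl 1 this
  · exact heq
  · exfalso; have := one_lt_pow₀ hgt hN; rw [h] at this; exact lt_irrefl 1 this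

def cfun (z : Sph (n + 1)) : ℂ :=
  (‖(z : Fin (n + 1) → ℂ) (Fin.last n)‖ : ℂ) / (z : Fin (n + 1) → ℂ) (Fin.last n)

def rfun (z : Sph (n + 1)) : ℝ :=
  ‖(z : Fin (n + 1) → ℂ) (Fin.last n)‖ ^ ((χ (Fin.last n) : ℝ)⁻¹)

omit hχ in
theorem cfun_ne (z : Sph (n + 1)) (hz : (z : Fin (n + 1) → ℂ) (Fin.last n) ≠ 0) :
    cfun n z ≠ 0 := by
  apply div_ne_zero _ hz
  simpa using hz

omit hχ in
theorem abs_cfun (z : Sph (n + 1)) (hz : (z : Fin (n + 1) → ℂ) (Fin.last n) ≠ 0) :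
    ‖cfun n z‖ = 1 := by
  unfold cfun
  rw [norm_div, Complex.norm_real, Real.norm_eq_abs, abs_of_nonneg (norm_nonneg _)]
  rw [div_self (by simpa using hz)]

omit hχ in
theorem rfun_pos (z : Sph (n + 1)) (hz : (z : Fin (n + 1) → ℂ) (Fin.last n) ≠ 0) :
    0 < rfun n χ z :=
  Real.rpow_pos_of_pos (by simpa using hz) _

theorem rfun_pow (z : Sph (n + 1)) :
    rfun n χ z ^ χ (Fin.last n) = ‖(z : Fin (n + 1) → ℂ) (Fin.last n)‖ := by
  have hN : (χ (Fin.last n) : ℝ) ≠ 0 := by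
    have := hχ (Fin.last n); positivity
  unfold rfun
  rw [← Real.rpow_natCast (‖(z : Fin (n + 1) → ℂ) (Fin.last n)‖
      ^ ((χ (Fin.last n) : ℝ)⁻¹)) (χ (Fin.last n)),
    ← Real.rpow_mul (norm_nonneg _), inv_mul_cancel₀ hN, Real.rpow_one]

theorem rfun_zero (z : Sph (n + 1)) (hz : (z : Fin (n + 1) → ℂ) (Fin.last n) = 0) :
    rfun n χ z = 0 := by
  unfold rfun
  rw [hz, norm_zero, Real.zero_rpow
    (inv_ne_zero (Nat.cast_ne_zero.mpr (by have := hχ (Fin.last n); omega)))]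

def gAux (t : ℂ) (z : Sph (n + 1)) : Fin n → ℂ := fun i =>
  t ^ χ i.castSucc * (z : Fin (n + 1) → ℂ) i.castSucc / ((rfun n χ z : ℝ) : ℂ) ^ χ i.castSucc

def texp (z : Sph (n + 1)) : ℂ :=
  Complex.exp (Complex.log (cfun n z) / (χ (Fin.last n) : ℂ))

omit hχ in
theorem texp_pow (z : Sph (n + 1)) (hz : (z : Fin (n + 1) → ℂ) (Fin.last n) ≠ 0)
    (hN : χ (Fin.last n) ≠ 0) :
    texp n χ z ^ χ (Fin.last n) = cfun n z := by
  unfold texp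
  rw [← Complex.exp_nat_mul, mul_div_cancel₀ _ (by exact_mod_cast hN),
    Complex.exp_log (cfun_ne n z hz)]

theorem gAux_indep (z : Sph (n + 1)) (hz : (z : Fin (n + 1) → ℂ) (Fin.last n) ≠ 0)
    {t t' : ℂ} (ht : t ^ χ (Fin.last n) = cfun n z) (ht' : t' ^ χ (Fin.last n) = cfun n z) :
    Quot.mk (muRel n χ) (gAux n χ t z) = Quot.mk (muRel n χ) (gAux n χ t' z) := by
  have hN : χ (Fin.last n) ≠ 0 := by have := hχ (Fin.last n); omega
  have ht0 : t ≠ 0 := by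
    intro h0; rw [h0, zero_pow hN] at ht; exact cfun_ne n z hz ht.symm
  apply Quot.sound
  refine ⟨t' / t, ?_, fun i => ?_⟩
  · rw [div_pow, ht, ht', div_self (cfun_ne n z hz)]
  · show gAux n χ t' z i = (t' / t) ^ χ i.castSucc * gAux n χ t z i
    unfold gAux
    have hcan : (t' / t) ^ χ i.castSucc * t ^ χ i.castSucc = t' ^ χ i.castSucc := by
      rw [div_pow, div_mul_cancel₀ _ (pow_ne_zero _ ht0)]
    rw [← hcan]
    ring

def ghat (z : Sph (n + 1)) : Quot (muRel n χ) :=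
  Quot.mk (muRel n χ) (gAux n χ (texp n χ z) z)

theorem ghat_spec (z : Sph (n + 1)) (hz : (z : Fin (n + 1) → ℂ) (Fin.last n) ≠ 0)
    {t : ℂ} (ht : t ^ χ (Fin.last n) = cfun n z) :
    ghat n χ z = Quot.mk (muRel n χ) (gAux n χ t z) := by
  have hN : χ (Fin.last n) ≠ 0 := by have := hχ (Fin.last n); omega
  exact gAux_indep n χ hχ z hz (texp_pow n χ z hz hN) ht

theorem ghat_invariant (z w : Sph (n + 1)) (h : wRel (n + 1) χ z w) :
    ghat n χ z = ghat n χ w := by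
  obtain ⟨s, hs, hw⟩ := h
  have hs0 : s ≠ 0 := by intro h0; simp [h0] at hs
  have hN : χ (Fin.last n) ≠ 0 := by have := hχ (Fin.last n); omega
  by_cases hz : (z : Fin (n + 1) → ℂ) (Fin.last n) = 0
  · have hwn : (w : Fin (n + 1) → ℂ) (Fin.last n) = 0 := by
      rw [hw (Fin.last n), hz, mul_zero]
    unfold ghat
    congr 1
    funext i
    unfold gAux
    rw [rfun_zero n χ hχ z hz, rfun_zero n χ hχ w hwn]
    simp [zero_pow (by have := hχ i.castSucc; omega : χ i.castSucc ≠ 0)]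
  · have hwn : (w : Fin (n + 1) → ℂ) (Fin.last n) ≠ 0 := by
      rw [hw (Fin.last n)]
      exact mul_ne_zero (pow_ne_zero _ hs0) hz
    set t := texp n χ z with hter
    have ht : t ^ χ (Fin.last n) = cfun n z := texp_pow n χ z hz hN
    have habsw : ‖(w : Fin (n + 1) → ℂ) (Fin.last n)‖
        = ‖(z : Fin (n + 1) → ℂ) (Fin.last n)‖ := by
      rw [hw (Fin.last n), norm_mul, norm_pow, hs, one_pow, one_mul]
    have hrw : rfun n χ w = rfun n χ z := by unfold rfun; rw [habsw]
    have ht' : (t * s⁻¹) ^ χ (Fin.last n) = cfun n w := by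
      rw [mul_pow, ht]
      unfold cfun
      rw [habsw, hw (Fin.last n), inv_pow]
      field_simp
    rw [ghat_spec n χ hχ w hwn ht']
    rw [ghat_spec n χ hχ z hz ht]
    congr 1
    funext i
    unfold gAux
    rw [hrw, hw i.castSucc, mul_pow]
    field_simp
    rw [one_div, inv_pow, inv_mul_cancel_right₀ (pow_ne_zero _ hs0)]

theorem ghat_continuousAt (z0 : Sph (n + 1))
    (hz0 : (z0 : Fin (n + 1) → ℂ) (Fin.last n) ≠ 0) :
    ContinuousAt (ghat n χ) z0 := by
  have hN : χ (Fin.last n) ≠ 0 := by have := hχ (Fin.last n); omega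
  set N := χ (Fin.last n) with hNdef
  -- the local branch
  set tloc : Sph (n + 1) → ℂ := fun z =>
    texp n χ z0 * Complex.exp (Complex.log (cfun n z / cfun n z0) / (N : ℂ)) with htloc
  have hc0 : cfun n z0 ≠ 0 := cfun_ne n z0 hz0
  have htpow : ∀ z : Sph (n + 1), (z : Fin (n + 1) → ℂ) (Fin.last n) ≠ 0 →
      tloc z ^ N = cfun n z := by
    intro z hz
    rw [htloc]
    simp only
    rw [mul_pow, texp_pow n χ z0 hz0 hN, ← Complex.exp_nat_mul,
      mul_div_cancel₀ _ (by exact_mod_cast hN : (N : ℂ) ≠ 0),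
      Complex.exp_log (div_ne_zero (cfun_ne n z hz) hc0)]
    field_simp
  -- continuity of pieces at z0
  have heval : ContinuousAt (fun z : Sph (n + 1) => (z : Fin (n + 1) → ℂ) (Fin.last n)) z0 :=
    ((continuous_apply (Fin.last n)).comp continuous_subtype_val).continuousAt
  have hcfun : ContinuousAt (fun z : Sph (n + 1) => cfun n z) z0 := by
    apply ContinuousAt.div _ heval hz0
    exact (Complex.continuous_ofReal.continuousAt.comp
      (continuous_norm.continuousAt.comp heval))
  have hlog : ContinuousAt (fun z : Sph (n + 1) =>
      Complex.log (cfun n z / cfun n z0)) z0 := by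
    apply ContinuousAt.clog (hcfun.div_const _)
    rw [div_self hc0]
    simp [Complex.mem_slitPlane_iff]
  have htloccont : ContinuousAt tloc z0 := by
    apply ContinuousAt.mul continuousAt_const
    exact Complex.continuous_exp.continuousAt.comp (hlog.div_const _)
  have hrfun : ContinuousAt (fun z : Sph (n + 1) => rfun n χ z) z0 := by
    apply ContinuousAt.rpow_const
    · exact continuous_norm.continuousAt.comp heval
    · right; positivity
  have hrne : ((rfun n χ z0 : ℝ) : ℂ) ≠ 0 := by
    exact_mod_cast (rfun_pos n χ z0 hz0).ne'
  have hbranch : ContinuousAt (fun z => Quot.mk (muRel n χ) (gAux n χ (tloc z) z)) z0 := by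
    apply ContinuousAt.comp continuous_quot_mk.continuousAt
    apply continuousAt_pi.mpr
    intro i
    unfold gAux
    apply ContinuousAt.div
    · apply ContinuousAt.mul (htloccont.pow _)
      exact ((continuous_apply i.castSucc).comp continuous_subtype_val).continuousAt
    · exact ((Complex.continuous_ofReal.continuousAt.comp hrfun).pow _)
    · exact pow_ne_zero _ hrne
  apply hbranch.congr
  have hO : {z : Sph (n + 1) | (z : Fin (n + 1) → ℂ) (Fin.last n) ≠ 0} ∈ nhds z0 :=
    (isOpen_sphere_part n).mem_nhds hz0
  filter_upwards [hO] with z hz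
  exact (ghat_spec n χ hχ z hz (htpow z hz)).symm

end Gdir

section Assemble
variable (n : ℕ) (χ : Fin (n + 1) → ℕ) (hχ : ∀ i, 1 ≤ χ i)
include hχ

def Gfull : WP (n + 1) χ → Quot (muRel n χ) :=
  Quot.lift (ghat n χ) (ghat_invariant n χ hχ)

def Gsub : {x : WP (n + 1) χ // x ∈ Uset n χ} → Quot (muRel n χ) := fun x =>
  Gfull n χ hχ x.1

theorem Gsub_continuous : Continuous (Gsub n χ hχ) := by
  have hq : Topology.IsQuotientMap ((Uset n χ).restrictPreimage (Quot.mk (wRel (n + 1) χ))) :=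
    isQuotientMap_quot_mk.restrictPreimage_isOpen (part2 n χ)
  rw [hq.continuous_iff]
  have heq : (Gsub n χ hχ) ∘ ((Uset n χ).restrictPreimage (Quot.mk (wRel (n + 1) χ)))
      = fun z => ghat n χ z.1 := rfl
  rw [heq]
  rw [continuous_iff_continuousAt]
  intro x
  have hx : (x.1 : Fin (n + 1) → ℂ) (Fin.last n) ≠ 0 :=
    (Set.ext_iff.mp (preimage_Uset n χ) x.1).mp x.2
  exact (ghat_continuousAt n χ hχ x.1 hx).comp continuous_subtype_val.continuousAt

theorem right_inv_GF : ∀ y : Quot (muRel n χ), Gsub n χ hχ (Fsub n χ hχ y) = y := by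
  intro y
  induction y using Quot.ind with
  | _ w =>
  show ghat n χ (Nmap n χ hχ w) = Quot.mk (muRel n χ) w
  set l := lam n χ hχ w with hldef
  have hl := lam_pos n χ hχ w
  set z := Nmap n χ hχ w with hzdef
  have hN : χ (Fin.last n) ≠ 0 := by have := hχ (Fin.last n); omega
  have hzlast : (z : Fin (n + 1) → ℂ) (Fin.last n) = ((l : ℝ) : ℂ) ^ χ (Fin.last n) := by
    show ((l : ℝ) : ℂ) ^ χ (Fin.last n) * vext n w (Fin.last n) = _
    simp [vext]
  have hzn : (z : Fin (n + 1) → ℂ) (Fin.last n) ≠ 0 := Nmap_last_ne n χ hχ w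
  have hcz : cfun n z = 1 := by
    unfold cfun
    rw [hzlast, norm_pow, Complex.norm_real, Real.norm_eq_abs, abs_of_pos hl]
    rw [show ((l ^ χ (Fin.last n) : ℝ) : ℂ) = ((l : ℝ) : ℂ) ^ χ (Fin.last n) by push_cast; ring]
    exact div_self (pow_ne_zero _ (by exact_mod_cast hl.ne'))
  have hrz : rfun n χ z = l := by
    unfold rfun
    rw [hzlast, norm_pow, Complex.norm_real, Real.norm_eq_abs, abs_of_pos hl,
      ← Real.rpow_natCast l (χ (Fin.last n)), ← Real.rpow_mul hl.le,
      mul_inv_cancel₀ (Nat.cast_ne_zero.mpr hN), Real.rpow_one]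
  rw [ghat_spec n χ hχ z hzn (t := 1) (by rw [one_pow, hcz])]
  congr 1
  funext i
  unfold gAux
  rw [hrz, one_pow, one_mul]
  show ((l : ℝ) : ℂ) ^ χ i.castSucc * vext n w i.castSucc / ((l : ℝ) : ℂ) ^ χ i.castSucc = w i
  rw [mul_comm, mul_div_assoc, div_self (pow_ne_zero _ (by exact_mod_cast hl.ne')), mul_one]
  simp [vext]

theorem left_inv_FG : ∀ x : {x : WP (n + 1) χ // x ∈ Uset n χ},
    Fsub n χ hχ (Gsub n χ hχ x) = x := by
  rintro ⟨x, z, rfl, hzn⟩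
  have hN : χ (Fin.last n) ≠ 0 := by have := hχ (Fin.last n); omega
  apply Subtype.ext
  show Quot.lift _ (fmap_sound n χ hχ) (Gfull n χ hχ (wpMk (n + 1) χ z)) = wpMk (n + 1) χ z
  have hG : Gfull n χ hχ (wpMk (n + 1) χ z) = ghat n χ z := rfl
  rw [hG]
  set t := texp n χ z with htdef
  have ht : t ^ χ (Fin.last n) = cfun n z := texp_pow n χ z hzn hN
  have habs_t : ‖t‖ = 1 := by
    apply real_eq_one_of_pow (norm_nonneg t) hN
    rw [← norm_pow, ht, abs_cfun n z hzn]
  have ht0 : t ≠ 0 := by intro h0; simp [h0] at habs_t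
  have hghat : ghat n χ z = Quot.mk (muRel n χ) (gAux n χ t z) := rfl
  rw [hghat]
  show wpMk (n + 1) χ (Nmap n χ hχ (gAux n χ t z)) = wpMk (n + 1) χ z
  set u := gAux n χ t z with hudef
  set r := rfun n χ z with hrdef
  have hr : 0 < r := rfun_pos n χ z hzn
  have hrC : ((r : ℝ) : ℂ) ≠ 0 := by exact_mod_cast hr.ne'
  have hrN : r ^ χ (Fin.last n) = ‖(z : Fin (n + 1) → ℂ) (Fin.last n)‖ :=
    rfun_pow n χ hχ z
  -- lam u = r
  have hPu : Pfun n χ u r = 1 := by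
    unfold Pfun
    rw [← z.2, Fin.sum_univ_castSucc (f := fun j =>
      r ^ (2 * χ j) * ‖vext n u j‖ ^ 2)]
    rw [Fin.sum_univ_castSucc (f := fun j => ‖(z : Fin (n + 1) → ℂ) j‖ ^ 2)]
    congr 1
    · apply Finset.sum_congr rfl
      intro i _
      have h1 : vext n u i.castSucc = u i := by simp [vext]
      rw [h1, hudef]
      show r ^ (2 * χ i.castSucc) * ‖t ^ χ i.castSucc * (z : Fin (n + 1) → ℂ) i.castSucc
          / ((r : ℝ) : ℂ) ^ χ i.castSucc‖ ^ 2 = _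
      rw [norm_div, norm_mul, norm_pow, norm_pow, habs_t, one_pow, one_mul,
        Complex.norm_real, Real.norm_eq_abs, abs_of_pos hr, div_pow, mul_div_assoc']
      rw [show r ^ (2 * χ i.castSucc) = (r ^ χ i.castSucc) ^ 2 by
        rw [← pow_mul, mul_comm]]
      rw [mul_comm ((r ^ χ i.castSucc) ^ 2) _, mul_div_assoc,
        div_self (by positivity), mul_one]
    · have h1 : vext n u (Fin.last n) = 1 := by simp [vext]
      rw [h1]
      simp only [norm_one, one_pow, mul_one]
      rw [show 2 * χ (Fin.last n) = χ (Fin.last n) * 2 by ring, pow_mul, hrN]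
  have hlamu : lam n χ hχ u = r := (lam_unique n χ hχ u r hr hPu).symm
  -- now the wRel
  rw [wpMk_eq_iff]
  apply (wRel_equiv (n + 1) χ).symm
  refine ⟨t, habs_t, fun j => ?_⟩
  show ((lam n χ hχ u : ℝ) : ℂ) ^ χ j * vext n u j = t ^ χ j * (z : Fin (n + 1) → ℂ) j
  rw [hlamu]
  induction j using Fin.lastCases with
  | last =>
    have h1 : vext n u (Fin.last n) = 1 := by simp [vext]
    rw [h1, mul_one]
    have : t ^ χ (Fin.last n) * (z : Fin (n + 1) → ℂ) (Fin.last n)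
        = (‖(z : Fin (n + 1) → ℂ) (Fin.last n)‖ : ℂ) := by
      rw [ht]
      unfold cfun
      exact div_mul_cancel₀ _ hzn
    rw [this, ← hrN]
    push_cast
    ring
  | cast i =>
    have h1 : vext n u i.castSucc = u i := by simp [vext]
    rw [h1, hudef]
    show ((r : ℝ) : ℂ) ^ χ i.castSucc *
      (t ^ χ i.castSucc * (z : Fin (n + 1) → ℂ) i.castSucc / ((r : ℝ) : ℂ) ^ χ i.castSucc) = _
    rw [mul_div_assoc', mul_comm (((r : ℝ) : ℂ) ^ χ i.castSucc) _, mul_div_assoc,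
      div_self (pow_ne_zero _ hrC), mul_one]

def theHomeo : {x : WP (n + 1) χ // x ∈ Uset n χ} ≃ₜ Quot (muRel n χ) where
  toFun := Gsub n χ hχ
  invFun := Fsub n χ hχ
  left_inv := left_inv_FG n χ hχ
  right_inv := right_inv_GF n χ hχ
  continuous_toFun := Gsub_continuous n χ hχ
  continuous_invFun := Fsub_continuous n χ hχ

end Assemble


/-- The condition `z_n ≠ 0` is independent of the representative
`z ∈ S^{2n+1}`; the subspace `U = {[z]_χ : z_n ≠ 0}` of `P(χ)` is open; and `U` is
homeomorphic to the orbit space `ℂ^n/μ_{χ_n}`, where `ζ ∈ μ_{χ_n}` acts on `ℂ^n` by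
`ζ·(w_0, …, w_{n-1}) = (ζ^{χ_0}w_0, …, ζ^{χ_{n-1}}w_{n-1})`. -/
theorem statement19 (n : ℕ) (hn : 1 ≤ n) (χ : Fin (n + 1) → ℕ) (hχ : ∀ i, 1 ≤ χ i) :
    (∀ z w : Sph (n + 1), wpMk (n + 1) χ z = wpMk (n + 1) χ w →
      ((z : Fin (n + 1) → ℂ) (Fin.last n) ≠ 0 ↔ (w : Fin (n + 1) → ℂ) (Fin.last n) ≠ 0)) ∧
    IsOpen {x : WP (n + 1) χ | ∃ z : Sph (n + 1), wpMk (n + 1) χ z = x ∧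
      (z : Fin (n + 1) → ℂ) (Fin.last n) ≠ 0} ∧
    Nonempty (
      {x : WP (n + 1) χ // ∃ z : Sph (n + 1), wpMk (n + 1) χ z = x ∧
        (z : Fin (n + 1) → ℂ) (Fin.last n) ≠ 0} ≃ₜ
      Quot (fun u v : Fin n → ℂ => ∃ ζ : ℂ, ζ ^ χ (Fin.last n) = 1 ∧
        ∀ i, v i = ζ ^ χ i.castSucc * u i)) := by
  exact ⟨part1 n χ, part2 n χ, ⟨theHomeo n χ hχ⟩⟩
end
end
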